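/- arXiv:1709.07504 — 11 statements merged into one kernel-verified Lean document; each statement's English description precedes it below -/
import Mathlib

section
/- Let I be a nonempty finite set and let z : Finset I → ℝ be a submodular function with z(∅) = 0. Then the base polytope P(z) is nonempty, and every defining inequality is optimal: for every subset A ⊆ I there exists a point x ∈ P(z) with ∑_{i ∈ A} x(i) = z(A); in particular the maximum of x ↦ ∑_{i ∈ A} x(i) over P(z) equals z(A). -/
open Finset

def Submodular {I : Type*} [DecidableEq I] (z : Finset I → ℝ) : Prop :=
  z ∅ = 0 ∧ ∀ A B : Finset I, z (A ∪ B) + z (A ∩ B) ≤ z A + z B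

def basePolytope {I : Type*} [Fintype I] [DecidableEq I] (z : Finset I → ℝ) : Set (I → ℝ) :=
  {x | (∑ i, x i) = z Finset.univ ∧ ∀ A : Finset I, (∑ i ∈ A, x i) ≤ z A}

lemma greedy_main {I : Type*} [Fintype I] [DecidableEq I]
    (z : Finset I → ℝ) (hz : Submodular z) (A : Finset I) :
    ∃ x ∈ basePolytope z, (∑ i ∈ A, x i) = z A := by
  classical
  set n := Fintype.card I with hn
  set a := A.card with ha
  have hab : a + Aᶜ.card = n := A.card_add_card_compl
  -- equiv sending A to the first a indices
  let e : I ≃ Fin n :=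
    ((Equiv.sumCompl (· ∈ A)).symm.trans
      ((A.equivFin.sumCongr
        (((Equiv.subtypeEquivRight (fun x => (Finset.mem_compl (s := A)).symm)).trans
          Aᶜ.equivFin))).trans
        (finSumFinEquiv.trans (finCongr hab))))
  have he : ∀ i : I, (e i : ℕ) < a ↔ i ∈ A := by
    intro i
    by_cases hi : i ∈ A
    · simp only [e, Equiv.trans_apply]
      rw [Equiv.sumCompl_symm_apply_of_pos hi]
      simp [hi, ha]
    · simp only [e, Equiv.trans_apply]
      rw [Equiv.sumCompl_symm_apply_of_neg hi]
      simp [hi, ha]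
  let S : ℕ → Finset I := fun k => univ.filter fun i => (e i : ℕ) < k
  have hS0 : S 0 = ∅ := by simp [S]
  have hSA : S a = A := by
    ext i; simp [S, he i]
  have hSn : ∀ k, n ≤ k → S k = univ := by
    intro k hk; ext i; simp only [S, mem_filter, mem_univ, true_and, iff_true]
    exact lt_of_lt_of_le (e i).isLt hk
  have hmemS : ∀ k (i : I), i ∈ S k ↔ (e i : ℕ) < k := by
    intro k i; simp [S]
  have hstep : ∀ k (hk : k < n), S (k + 1) = insert (e.symm ⟨k, hk⟩) (S k) ∧
      e.symm ⟨k, hk⟩ ∉ S k := by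
    intro k hk
    constructor
    · ext i
      rw [hmemS, Finset.mem_insert, hmemS]
      constructor
      · intro h
        rcases Nat.lt_succ_iff_lt_or_eq.mp h with h | h
        · exact Or.inr h
        · left
          have : e i = ⟨k, hk⟩ := Fin.ext h
          rw [← this]; simp
      · rintro (h | h)
        · rw [h]; simp
        · omega
    · rw [hmemS]; simp
  have hxval : ∀ k (hk : k < n),
      (fun i => z (S ((e i : ℕ) + 1)) - z (S (e i))) (e.symm ⟨k, hk⟩)
        = z (S (k + 1)) - z (S k) := by
    intro k hk; simp
  set x : I → ℝ := fun i => z (S ((e i : ℕ) + 1)) - z (S (e i)) with hx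
  have hSstable : ∀ k, ¬ k < n → S (k + 1) = S k := by
    intro k hk
    rw [hSn k (le_of_not_gt hk), hSn (k+1) (by omega)]
  have hsum : ∀ k, ∑ i ∈ S k, x i = z (S k) := by
    intro k
    induction k with
    | zero => rw [hS0]; simp [hz.1]
    | succ k ih =>
      by_cases hk : k < n
      · obtain ⟨hins, hnot⟩ := hstep k hk
        rw [hins, Finset.sum_insert hnot, ih, hxval k hk, ← hins]
        ring
      · rw [hSstable k hk, ih]
  have hineq : ∀ k (B : Finset I), ∑ i ∈ B ∩ S k, x i ≤ z (B ∩ S k) := by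
    intro k
    induction k with
    | zero => intro B; rw [hS0]; simp [hz.1]
    | succ k ih =>
      intro B
      by_cases hk : k < n
      · obtain ⟨hins, hnot⟩ := hstep k hk
        set j := e.symm ⟨k, hk⟩ with hj
        by_cases hjB : j ∈ B
        · have h1 : B ∩ S (k + 1) = insert j (B ∩ S k) := by
            rw [hins, Finset.inter_insert_of_mem hjB]
          have h2 : j ∉ B ∩ S k := fun h => hnot (Finset.mem_inter.mp h).2
          have hsub : S k ⊆ S (k + 1) := by
            intro i hi; rw [hmemS] at *; omega
          have hsm := hz.2 (B ∩ S (k + 1)) (S k)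
          have hjS : j ∈ S (k + 1) := by rw [hins]; exact Finset.mem_insert_self _ _
          have hu : (B ∩ S (k + 1)) ∪ S k = S (k + 1) := by
            apply Finset.Subset.antisymm
            · exact Finset.union_subset (Finset.inter_subset_right) hsub
            · intro i hi
              rw [hins, Finset.mem_insert] at hi
              rcases hi with h | h
              · subst h
                exact Finset.mem_union_left _ (Finset.mem_inter.mpr ⟨hjB, hjS⟩)
              · exact Finset.mem_union_right _ h
          have hi2 : (B ∩ S (k + 1)) ∩ S k = B ∩ S k := by
            rw [Finset.inter_assoc, Finset.inter_eq_right.mpr hsub]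
          rw [hu, hi2] at hsm
          rw [h1, Finset.sum_insert h2]
          have hxj : x j = z (S (k + 1)) - z (S k) := hxval k hk
          have := ih B
          rw [h1] at hsm
          linarith
        · have h1 : B ∩ S (k + 1) = B ∩ S k := by
            rw [hins, Finset.inter_insert_of_notMem hjB]
          rw [h1]; exact ih B
      · rw [hSstable k hk]; exact ih B
  refine ⟨x, ⟨?_, ?_⟩, ?_⟩
  · rw [← hSn n le_rfl, hsum n, hSn n le_rfl]
  · intro B
    have := hineq n B
    rwa [hSn n le_rfl, Finset.inter_univ] at this
  · rw [← hSA, hsum a]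

theorem stmt0 {I : Type*} [Fintype I] [DecidableEq I] [Nonempty I]
    (z : Finset I → ℝ) (hz : Submodular z) :
    (basePolytope z).Nonempty ∧
      ∀ A : Finset I,
        (∃ x ∈ basePolytope z, (∑ i ∈ A, x i) = z A) ∧
        IsGreatest ((fun x : I → ℝ => ∑ i ∈ A, x i) '' basePolytope z) (z A) := by
  constructor
  · obtain ⟨x, hx, -⟩ := greedy_main z hz ∅
    exact ⟨x, hx⟩
  · intro A
    obtain ⟨x, hx, hxa⟩ := greedy_main z hz A
    refine ⟨⟨x, hx, hxa⟩, ⟨⟨x, hx, hxa⟩, ?_⟩⟩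
    rintro y ⟨w, hw, rfl⟩
    exact hw.2 A
end

section
/- Let I be a finite set, z : Finset I → ℝ a submodular function with z(∅) = 0, and I = S ⊔ T a partition of I into two disjoint subsets. Define z|_S : Finset S → ℝ by z|_S(A) = z(A) for A ⊆ S, and z/_S : Finset T → ℝ by z/_S(B) = z(B ∪ S) − z(S) for B ⊆ T. Then a point x : I → ℝ lies in P(z) and satisfies ∑_{s ∈ S} x(s) = z(S) if and only if the restriction of x to S lies in the base polytope P(z|_S) and the restriction of x to T lies in the base polytope P(z/_S). -/
open Finset

lemma univ_map_subtype' {I : Type*} [Fintype I] [DecidableEq I] (W : Finset I) :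
    (Finset.univ : Finset ↥W).map (Function.Embedding.subtype fun i => i ∈ W) = W := by
  ext i; simp

lemma sum_map_subtype {I : Type*} [DecidableEq I] (W : Finset I) (A : Finset ↥W) (x : I → ℝ) :
    ∑ i ∈ A.map (Function.Embedding.subtype fun i => i ∈ W), x i = ∑ i ∈ A, x ↑i := by
  rw [Finset.sum_map]; rfl

lemma subtype_map_of_subset {I : Type*} [DecidableEq I] (W A : Finset I) (hA : A ⊆ W) :
    (A.subtype (· ∈ W)).map (Function.Embedding.subtype fun i => i ∈ W) = A := by
  rw [Finset.subtype_map, Finset.filter_true_of_mem (fun i hi => hA hi)]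

theorem stmt1 {I : Type*} [Fintype I] [DecidableEq I]
    (z : Finset I → ℝ) (hz : Submodular z)
    (S T : Finset I) (hST : Disjoint S T) (hUnion : S ∪ T = Finset.univ)
    (x : I → ℝ) :
    (x ∈ basePolytope z ∧ (∑ s ∈ S, x s) = z S) ↔
      ((fun s : ↥S => x s) ∈
          basePolytope
            (fun A : Finset ↥S => z (A.map (Function.Embedding.subtype fun i => i ∈ S))) ∧
        (fun t : ↥T => x t) ∈
          basePolytope
            (fun B : Finset ↥T =>
              z ((B.map (Function.Embedding.subtype fun i => i ∈ T)) ∪ S) - z S)) := by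
  have hsumS : (∑ i : ↥S, x ↑i) = ∑ s ∈ S, x s := by
    rw [← sum_map_subtype S Finset.univ x, univ_map_subtype']
  have hsumT : (∑ i : ↥T, x ↑i) = ∑ t ∈ T, x t := by
    rw [← sum_map_subtype T Finset.univ x, univ_map_subtype']
  have hsplit : (∑ i, x i) = (∑ s ∈ S, x s) + ∑ t ∈ T, x t := by
    rw [← Finset.sum_union hST, hUnion]
  constructor
  · rintro ⟨⟨hsum, hle⟩, hS⟩
    refine ⟨⟨?_, ?_⟩, ?_, ?_⟩
    · simp only [univ_map_subtype']
      exact hsumS.trans hS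
    · intro A
      show (∑ i ∈ A, x ↑i) ≤ z (A.map (Function.Embedding.subtype fun i => i ∈ S))
      rw [← sum_map_subtype S A x]
      exact hle _
    · simp only [univ_map_subtype']
      have hTS : T ∪ S = Finset.univ := by rw [Finset.union_comm]; exact hUnion
      rw [hTS, ← hsum]
      rw [hsplit, hS] at *
      linarith [hsumT]
    · intro B
      show (∑ i ∈ B, x ↑i) ≤
        z ((B.map (Function.Embedding.subtype fun i => i ∈ T)) ∪ S) - z S
      set B' := B.map (Function.Embedding.subtype fun i => i ∈ T) with hB'
      have hBT : B' ⊆ T := by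
        intro i hi
        simp only [hB', Finset.mem_map, Function.Embedding.coe_subtype] at hi
        obtain ⟨a, _, rfl⟩ := hi
        exact a.2
      have hdisj : Disjoint B' S := (hST.symm.mono_left hBT)
      have hsu : (∑ i ∈ B' ∪ S, x i) = (∑ i ∈ B', x i) + ∑ s ∈ S, x s :=
        Finset.sum_union hdisj
      have hle' := hle (B' ∪ S)
      rw [hsu, hS] at hle'
      have heq : (∑ i ∈ B, x ↑i) = ∑ i ∈ B', x i := (sum_map_subtype T B x).symm
      linarith
  · rintro ⟨⟨hSsum, hSle⟩, hTsum, hTle⟩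
    simp only [univ_map_subtype'] at hSsum hTsum
    rw [hsumS] at hSsum
    rw [hsumT] at hTsum
    have hTS : T ∪ S = Finset.univ := by rw [Finset.union_comm]; exact hUnion
    rw [hTS] at hTsum
    refine ⟨⟨?_, ?_⟩, hSsum⟩
    · rw [hsplit, hSsum, hTsum]; ring
    · intro A
      have hAsplit : A = (A ∩ S) ∪ (A ∩ T) := by
        rw [← Finset.inter_union_distrib_left, hUnion, Finset.inter_univ]
      have hdisj : Disjoint (A ∩ S) (A ∩ T) :=
        (hST.mono Finset.inter_subset_right Finset.inter_subset_right)
      have hsum : (∑ i ∈ A, x i) = (∑ i ∈ A ∩ S, x i) + ∑ i ∈ A ∩ T, x i := by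
        conv_lhs => rw [hAsplit]
        exact Finset.sum_union hdisj
      have e1 : (∑ i ∈ (A ∩ S).subtype (· ∈ S), x ↑i) = ∑ i ∈ A ∩ S, x i := by
        rw [← sum_map_subtype S ((A ∩ S).subtype (· ∈ S)) x,
          subtype_map_of_subset S (A ∩ S) Finset.inter_subset_right]
      have e2 : (∑ i ∈ (A ∩ T).subtype (· ∈ T), x ↑i) = ∑ i ∈ A ∩ T, x i := by
        rw [← sum_map_subtype T ((A ∩ T).subtype (· ∈ T)) x,
          subtype_map_of_subset T (A ∩ T) Finset.inter_subset_right]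
      have h1 : (∑ i ∈ A ∩ S, x i) ≤ z (A ∩ S) := by
        have h := hSle ((A ∩ S).subtype (· ∈ S))
        simp only [subtype_map_of_subset S (A ∩ S) Finset.inter_subset_right] at h
        rw [← e1]; exact h
      have h2 : (∑ i ∈ A ∩ T, x i) ≤ z ((A ∩ T) ∪ S) - z S := by
        have h := hTle ((A ∩ T).subtype (· ∈ T))
        simp only [subtype_map_of_subset T (A ∩ T) Finset.inter_subset_right] at h
        rw [← e2]; exact h
      have hATS : (A ∩ T) ∪ S = A ∪ S := by
        rw [Finset.union_comm (A ∩ T) S, Finset.union_inter_distrib_left, hUnion,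
          Finset.inter_univ, Finset.union_comm]
      have hsub := hz.2 A S
      rw [hATS] at h2
      linarith
end

section
/- Let g be a simple graph on a finite vertex set I, and let Z_g ⊆ ℝ^I be the graphic zonotope of g, i.e. the Minkowski sum over the edges {i,j} of g of the segments conv{e_i, e_j}. For any linear functional y : I → ℝ, the set of points of Z_g maximizing x ↦ ∑_{i ∈ I} y(i)·x(i) equals the Minkowski sum, over the edges {i,j} of g, of the following sets: conv{e_i, e_j} if y(i) = y(j); the single point {e_i} if y(i) > y(j); and the single point {e_j} if y(j) > y(i). -/
open Finset Pointwise

section aux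

variable {E : Type*} [AddCommGroup E] [Module ℝ E]

private lemma seg_le (f : E →ₗ[ℝ] ℝ) {a b x : E} (hx : x ∈ segment ℝ a b) :
    f x ≤ max (f a) (f b) := by
  obtain ⟨t, u, ht, hu, htu, rfl⟩ := hx
  simp only [map_add, map_smul, smul_eq_mul]
  calc t * f a + u * f b ≤ t * max (f a) (f b) + u * max (f a) (f b) := by
        gcongr
        · exact le_max_left _ _
        · exact le_max_right _ _
    _ = max (f a) (f b) := by rw [← add_mul, htu, one_mul]

private lemma seg_eq (f : E →ₗ[ℝ] ℝ) {a b x : E} (hx : x ∈ segment ℝ a b) :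
    f x = max (f a) (f b) ↔
      x ∈ (if f a = f b then segment ℝ a b else if f b < f a then {a} else ({b} : Set E)) := by
  obtain ⟨t, u, ht, hu, htu, rfl⟩ := hx
  by_cases hab : f a = f b
  · simp only [hab, if_pos rfl, max_self]
    constructor
    · intro _; exact ⟨t, u, ht, hu, htu, rfl⟩
    · intro _
      simp only [map_add, map_smul, smul_eq_mul, hab]
      rw [← add_mul, htu, one_mul]
  · rw [if_neg hab]
    rcases lt_or_gt_of_ne hab with h | h
    · -- f a < f b, so max = f b
      rw [if_neg (not_lt_of_gt h), max_eq_right h.le]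
      simp only [map_add, map_smul, smul_eq_mul, Set.mem_singleton_iff]
      constructor
      · intro hfx
        have hu1 : t * (f b - f a) = 0 := by linear_combination (f b) * htu - hfx
        have ht0 : t = 0 := by
          rcases mul_eq_zero.1 hu1 with h' | h'
          · exact h'
          · exfalso; linarith
        have hu1' : u = 1 := by linarith
        rw [ht0, hu1', zero_smul, one_smul, zero_add]
      · intro hx
        have h' := congrArg f hx
        simp only [map_add, map_smul, smul_eq_mul] at h'
        exact h'
    · rw [if_pos h, max_eq_left h.le]
      simp only [map_add, map_smul, smul_eq_mul, Set.mem_singleton_iff]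
      constructor
      · intro hfx
        have hu1 : u * (f a - f b) = 0 := by linear_combination (f a) * htu - hfx
        have hu0 : u = 0 := by
          rcases mul_eq_zero.1 hu1 with h' | h'
          · exact h'
          · exfalso; linarith
        have ht1 : t = 1 := by linarith
        rw [hu0, ht1, zero_smul, one_smul, add_zero]
      · intro hx
        have h' := congrArg f hx
        simp only [map_add, map_smul, smul_eq_mul] at h'
        exact h'

private lemma msum_nonempty {α : Type*} (s : Finset α) (F : α → Set E)
    (h : ∀ e ∈ s, (F e).Nonempty) : (∑ e ∈ s, F e).Nonempty := by
  induction s using Finset.cons_induction with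
  | empty => exact ⟨0, by simp⟩
  | cons a s ha ih =>
      rw [Finset.sum_cons]
      obtain ⟨u, hu⟩ := h a (Finset.mem_cons_self a s)
      obtain ⟨v, hv⟩ := ih fun e he => h e (Finset.mem_cons_of_mem he)
      exact ⟨u + v, Set.add_mem_add hu hv⟩

private lemma msum_le {α : Type*} (f : E →ₗ[ℝ] ℝ) (s : Finset α) (A : α → Set E) (m : α → ℝ)
    (hb : ∀ e ∈ s, ∀ x ∈ A e, f x ≤ m e) :
    ∀ x ∈ ∑ e ∈ s, A e, f x ≤ ∑ e ∈ s, m e := by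
  induction s using Finset.cons_induction with
  | empty => intro x hx; simp only [Finset.sum_empty] at hx ⊢
             rw [Set.mem_zero] at hx; simp [hx]
  | cons a s ha ih =>
      intro x hx
      rw [Finset.sum_cons] at hx
      obtain ⟨u, hu, v, hv, rfl⟩ := hx
      rw [Finset.sum_cons, map_add]
      have h1 := hb a (Finset.mem_cons_self a s) u hu
      have h2 := ih (fun e he => hb e (Finset.mem_cons_of_mem he)) v hv
      linarith

private lemma msum_level {α : Type*} (f : E →ₗ[ℝ] ℝ) (s : Finset α) (A F : α → Set E)
    (m : α → ℝ)
    (hFA : ∀ e ∈ s, F e ⊆ A e)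
    (hb : ∀ e ∈ s, ∀ x ∈ A e, f x ≤ m e)
    (heq : ∀ e ∈ s, ∀ x ∈ A e, (f x = m e ↔ x ∈ F e)) :
    {x ∈ ∑ e ∈ s, A e | f x = ∑ e ∈ s, m e} = ∑ e ∈ s, F e := by
  induction s using Finset.cons_induction with
  | empty =>
      ext x
      simp only [Finset.sum_empty, Set.mem_setOf_eq, Set.mem_zero]
      constructor
      · rintro ⟨h, -⟩; exact h
      · rintro rfl; simp
  | cons a s ha ih =>
      have hb' : ∀ e ∈ s, ∀ x ∈ A e, f x ≤ m e := fun e he => hb e (Finset.mem_cons_of_mem he)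
      have ihs := ih (fun e he => hFA e (Finset.mem_cons_of_mem he)) hb'
        (fun e he => heq e (Finset.mem_cons_of_mem he))
      ext x
      rw [Finset.sum_cons, Finset.sum_cons, Finset.sum_cons]
      constructor
      · rintro ⟨hx, hfx⟩
        obtain ⟨u, hu, v, hv, rfl⟩ := hx
        rw [map_add] at hfx
        have h1 := hb a (Finset.mem_cons_self a s) u hu
        have h2 := msum_le f s A m hb' v hv
        have hfu : f u = m a := by linarith
        have hfv : f v = ∑ e ∈ s, m e := by linarith
        refine Set.add_mem_add ?_ ?_
        · exact (heq a (Finset.mem_cons_self a s) u hu).1 hfu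
        · rw [← ihs]; exact ⟨hv, hfv⟩
      · rintro ⟨u, hu, v, hv, rfl⟩
        rw [← ihs] at hv
        obtain ⟨hvA, hfv⟩ := hv
        have huA : u ∈ A a := hFA a (Finset.mem_cons_self a s) hu
        have hfu : f u = m a := (heq a (Finset.mem_cons_self a s) u huA).2 hu
        refine ⟨Set.add_mem_add huA hvA, ?_⟩
        rw [map_add, hfu, hfv]

end aux

/-- The set of points of `Z_g` (the graphic zonotope, i.e. the Minkowski sum of the segments
`conv {e_i, e_j}` over the edges `{i,j}` of `g`) maximizing `x ↦ ∑ i, y i * x i` equals the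
Minkowski sum over the edges of: the segment if `y i = y j`; the point `e_i` if `y i > y j`;
and the point `e_j` if `y j > y i`. -/
theorem stmt4 {I : Type*} [Fintype I] [DecidableEq I]
    (g : SimpleGraph I) [DecidableRel g.Adj] (y : I → ℝ)
    (Seg F : Sym2 I → Set (I → ℝ))
    (hSeg : ∀ i j : I, Seg s(i, j) = convexHull ℝ {Pi.single i (1 : ℝ), Pi.single j 1})
    (hF : ∀ i j : I,
      F s(i, j) =
        if y i = y j then convexHull ℝ {Pi.single i (1 : ℝ), Pi.single j 1}
        else if y j < y i then {Pi.single i 1} else {Pi.single j 1}) :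
    {x ∈ (∑ e ∈ g.edgeFinset, Seg e) |
        ∀ w ∈ (∑ e ∈ g.edgeFinset, Seg e), (∑ i, y i * w i) ≤ ∑ i, y i * x i} =
      ∑ e ∈ g.edgeFinset, F e := by
  classical
  -- the linear functional
  set f : (I → ℝ) →ₗ[ℝ] ℝ :=
    { toFun := fun x => ∑ i, y i * x i
      map_add' := fun a b => by simp [mul_add, Finset.sum_add_distrib]
      map_smul' := fun c a => by simp [Finset.mul_sum, mul_left_comm] } with hf
  have hfval : ∀ x, f x = ∑ i, y i * x i := fun x => rfl
  have hfs : ∀ i : I, f (Pi.single i 1) = y i := by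
    intro i
    rw [hfval]
    simp [Pi.single_apply, mul_ite]
  set m : Sym2 I → ℝ := fun e =>
    Sym2.lift ⟨fun i j => max (y i) (y j), fun i j => max_comm _ _⟩ e with hm
  -- per-edge properties
  have key : ∀ i j : I,
      (F s(i,j) ⊆ Seg s(i,j)) ∧ (∀ x ∈ Seg s(i,j), f x ≤ m s(i,j)) ∧
      (∀ x ∈ Seg s(i,j), (f x = m s(i,j) ↔ x ∈ F s(i,j))) := by
    intro i j
    have hmij : m s(i,j) = max (y i) (y j) := rfl
    have hsegij : Seg s(i,j) = segment ℝ (Pi.single i (1:ℝ) : I → ℝ) (Pi.single j (1:ℝ)) := by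
      rw [hSeg, convexHull_pair (Pi.single i (1:ℝ) : I → ℝ) (Pi.single j (1:ℝ))]
    have hFij : F s(i,j) =
        if f (Pi.single i 1) = f (Pi.single j 1) then
          segment ℝ (Pi.single i (1:ℝ) : I → ℝ) (Pi.single j (1:ℝ))
        else if f (Pi.single j 1) < f (Pi.single i 1) then {(Pi.single i (1:ℝ) : I → ℝ)}
        else {(Pi.single j (1:ℝ) : I → ℝ)} := by
      rw [hF, hfs, hfs, convexHull_pair (Pi.single i (1:ℝ) : I → ℝ) (Pi.single j (1:ℝ))]
    refine ⟨?_, ?_, ?_⟩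
    · rw [hFij, hsegij]
      split_ifs with h1 h2
      · exact subset_rfl
      · intro x hx; rw [Set.mem_singleton_iff] at hx; rw [hx]
        exact left_mem_segment ℝ _ _
      · intro x hx; rw [Set.mem_singleton_iff] at hx; rw [hx]
        exact right_mem_segment ℝ _ _
    · intro x hx
      rw [hsegij] at hx
      rw [hmij, ← hfs i, ← hfs j]
      exact seg_le f hx
    · intro x hx
      rw [hsegij] at hx
      rw [hmij, ← hfs i, ← hfs j, hFij]
      exact seg_eq f hx
  have hFA : ∀ e ∈ g.edgeFinset, F e ⊆ Seg e := by
    intro e _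
    induction e using Sym2.ind with
    | _ i j => exact (key i j).1
  have hb : ∀ e ∈ g.edgeFinset, ∀ x ∈ Seg e, f x ≤ m e := by
    intro e _
    induction e using Sym2.ind with
    | _ i j => exact (key i j).2.1
  have heq : ∀ e ∈ g.edgeFinset, ∀ x ∈ Seg e, (f x = m e ↔ x ∈ F e) := by
    intro e _
    induction e using Sym2.ind with
    | _ i j => exact (key i j).2.2
  have hne : ∀ e ∈ g.edgeFinset, (F e).Nonempty := by
    intro e _
    induction e using Sym2.ind with
    | _ i j =>
        rw [hF]
        split_ifs
        · exact ⟨Pi.single i 1, subset_convexHull ℝ _ (by simp)⟩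
        · exact ⟨_, rfl⟩
        · exact ⟨_, rfl⟩
  have hlevel := msum_level f g.edgeFinset Seg F m hFA hb heq
  have hbound := msum_le f g.edgeFinset Seg m hb
  obtain ⟨x0, hx0⟩ := msum_nonempty g.edgeFinset F hne
  have hx0A : x0 ∈ ∑ e ∈ g.edgeFinset, Seg e := by
    have : x0 ∈ {x ∈ ∑ e ∈ g.edgeFinset, Seg e | f x = ∑ e ∈ g.edgeFinset, m e} := by
      rw [hlevel]; exact hx0
    exact this.1
  have hx0f : f x0 = ∑ e ∈ g.edgeFinset, m e := by
    have : x0 ∈ {x ∈ ∑ e ∈ g.edgeFinset, Seg e | f x = ∑ e ∈ g.edgeFinset, m e} := by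
      rw [hlevel]; exact hx0
    exact this.2
  rw [← hlevel]
  ext x
  simp only [Set.mem_setOf_eq]
  constructor
  · rintro ⟨hxA, hmax⟩
    refine ⟨hxA, le_antisymm (hbound x hxA) ?_⟩
    rw [← hx0f]
    have := hmax x0 hx0A
    rw [← hfval, ← hfval] at this
    exact this
  · rintro ⟨hxA, hfx⟩
    refine ⟨hxA, fun w hw => ?_⟩
    rw [← hfval, ← hfval, hfx]
    exact hbound w hw
end

section
/- Let I be a finite set and let y assign a nonnegative real number y(J) to each nonempty subset J ⊆ I. Define z : Finset I → ℝ by z(A) = ∑_{K : K ∩ A ≠ ∅} y(K). Then z is submodular with z(∅) = 0, and the Minkowski sum ∑_{∅ ≠ J ⊆ I} y(J)•Δ_J equals the base polytope P(z) = {x : I → ℝ | ∑_{i ∈ I} x(i) = z(I) and ∑_{i ∈ A} x(i) ≤ z(A) for all A ⊆ I}. -/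
open Finset Pointwise

/-- The simplex `Δ_J = conv { e_j : j ∈ J }` in `ℝ^I`. -/
def simplexOf {I : Type*} [DecidableEq I] (J : Finset I) : Set (I → ℝ) :=
  convexHull ℝ ((fun j => Pi.single j (1 : ℝ)) '' (J : Set I))

section Aux


variable {α : Type*} {E : Type*} [AddCommGroup E]

lemma mem_finsetSum_iff [DecidableEq α] {s : Finset α} {T : α → Set E} {x : E} :
    x ∈ ∑ a ∈ s, T a ↔ ∃ p : α → E, (∀ a ∈ s, p a ∈ T a) ∧ ∑ a ∈ s, p a = x := by
  classical
  induction s using Finset.cons_induction generalizing x with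
  | empty =>
    simp only [Finset.sum_empty, Set.mem_zero]
    constructor
    · rintro rfl; exact ⟨fun _ => 0, by simp, by simp⟩
    · rintro ⟨p, _, h⟩; simpa using h.symm
  | cons a s ha ih =>
    rw [Finset.sum_cons, Set.mem_add]
    constructor
    · rintro ⟨u, hu, v, hv, rfl⟩
      obtain ⟨p, hp, hps⟩ := ih.1 hv
      refine ⟨Function.update p a u, ?_, ?_⟩
      · intro b hb
        rcases Finset.mem_cons.1 hb with rfl | hb'
        · simp [hu]
        · rw [Function.update_of_ne (by rintro rfl; exact ha hb')]
          exact hp b hb'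
      · rw [Finset.sum_cons, Function.update_self]
        congr 1
        rw [← hps]
        exact Finset.sum_congr rfl fun b hb =>
          Function.update_of_ne (by rintro rfl; exact ha hb) _ _
    · rintro ⟨p, hp, rfl⟩
      rw [Finset.sum_cons]
      exact ⟨p a, hp a (Finset.mem_cons_self a s), ∑ b ∈ s, p b,
        ih.2 ⟨p, fun b hb => hp b (Finset.mem_cons.2 (Or.inr hb)), rfl⟩, rfl⟩

lemma convex_finsetSum [Module ℝ E] {s : Finset α} {T : α → Set E}
    (h : ∀ a ∈ s, Convex ℝ (T a)) : Convex ℝ (∑ a ∈ s, T a) := by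
  classical
  induction s using Finset.cons_induction with
  | empty => rw [Finset.sum_empty]; exact convex_singleton 0
  | cons a s ha ih =>
    rw [Finset.sum_cons]
    exact (h a (Finset.mem_cons_self a s)).add
      (ih fun b hb => h b (Finset.mem_cons.2 (Or.inr hb)))

lemma isCompact_finsetSum [Module ℝ E] [TopologicalSpace E] [IsTopologicalAddGroup E]
    {s : Finset α} {T : α → Set E}
    (h : ∀ a ∈ s, IsCompact (T a)) : IsCompact (∑ a ∈ s, T a) := by
  classical
  induction s using Finset.cons_induction with
  | empty => rw [Finset.sum_empty]; exact isCompact_singleton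
  | cons a s ha ih =>
    rw [Finset.sum_cons]
    exact (h a (Finset.mem_cons_self a s)).add
      (ih fun b hb => h b (Finset.mem_cons.2 (Or.inr hb)))

lemma simplex_sub {I : Type*} [Fintype I] [DecidableEq I] {J : Finset I} {v : I → ℝ}
    (hv : v ∈ simplexOf J) :
    (∀ i, 0 ≤ v i) ∧ (∀ i ∉ J, v i = 0) ∧ (∑ i, v i) = 1 := by
  have hconv : Convex ℝ {w : I → ℝ |
      (∀ i, 0 ≤ w i) ∧ (∀ i ∉ J, w i = 0) ∧ (∑ i, w i) = 1} := by
    rintro u ⟨hu1, hu2, hu3⟩ w ⟨hw1, hw2, hw3⟩ a b ha hb hab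
    refine ⟨fun i => add_nonneg (mul_nonneg ha (hu1 i)) (mul_nonneg hb (hw1 i)),
      fun i hi => by simp [hu2 i hi, hw2 i hi], ?_⟩
    simp only [Pi.add_apply, Pi.smul_apply, smul_eq_mul]
    rw [Finset.sum_add_distrib, ← Finset.mul_sum, ← Finset.mul_sum, hu3, hw3]
    simpa using hab
  have hgen : (fun j => Pi.single j (1 : ℝ)) '' (J : Set I) ⊆ {w : I → ℝ |
      (∀ i, 0 ≤ w i) ∧ (∀ i ∉ J, w i = 0) ∧ (∑ i, w i) = 1} := by
    rintro - ⟨j, hj, rfl⟩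
    refine ⟨fun i => ?_, fun i hi => ?_, ?_⟩
    · rcases eq_or_ne i j with rfl | h
      · simp
      · simp [Pi.single_apply, h]
    · have : i ≠ j := by rintro rfl; exact hi hj
      simp [Pi.single_apply, this]
    · simp [Pi.single_apply]
  exact convexHull_min hgen hconv hv


lemma abel_nonpos (n : ℕ) (f D : ℕ → ℝ) (hD0 : D 0 = 0) (hDn : D n = 0)
    (hneg : ∀ k, k ≤ n → D k ≤ 0) (hf : ∀ k, k + 1 < n → f (k + 1) ≤ f k) :
    ∑ k ∈ Finset.range n, f k * (D (k + 1) - D k) ≤ 0 := by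
  have key : ∀ k, f k * (D (k + 1) - D k) =
      (f k - f (k + 1)) * D (k + 1) + (f (k + 1) * D (k + 1) - f k * D k) := by
    intro k; ring
  calc ∑ k ∈ Finset.range n, f k * (D (k + 1) - D k)
      = ∑ k ∈ Finset.range n, (f k - f (k + 1)) * D (k + 1)
        + ∑ k ∈ Finset.range n, (f (k + 1) * D (k + 1) - f k * D k) := by
        rw [← Finset.sum_add_distrib]; exact Finset.sum_congr rfl fun k _ => key k
    _ = ∑ k ∈ Finset.range n, (f k - f (k + 1)) * D (k + 1) := by
        rw [Finset.sum_range_sub (fun k => f k * D k) n, hD0, hDn]; ring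
    _ ≤ 0 := by
        apply Finset.sum_nonpos
        intro k hk
        have hk' := Finset.mem_range.1 hk
        rcases eq_or_lt_of_le (Nat.succ_le_of_lt hk') with h | h
        · have : D (k+1) = 0 := by rw [show k+1 = n from h]; exact hDn
          rw [this, mul_zero]
        · exact mul_nonpos_of_nonneg_of_nonpos (sub_nonneg.2 (hf k h))
            (hneg (k + 1) (le_of_lt h))

lemma key_ineq {I : Type*} [Fintype I] [DecidableEq I]
    (y : Finset I → ℝ) (hy : ∀ J : Finset I, J.Nonempty → 0 ≤ y J)
    (c x : I → ℝ) (maxc : Finset I → ℝ)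
    (hmax : ∀ J : Finset I, ∀ j ∈ J, c j ≤ maxc J)
    (hx1 : (∑ i, x i) = ∑ K ∈ Finset.univ.filter fun K : Finset I => (K ∩ Finset.univ).Nonempty, y K)
    (hx2 : ∀ A : Finset I, (∑ i ∈ A, x i) ≤ ∑ K ∈ Finset.univ.filter fun K : Finset I => (K ∩ A).Nonempty, y K) :
    (∑ i, c i * x i) ≤ ∑ J ∈ Finset.univ.filter (fun J : Finset I => J.Nonempty), y J * maxc J := by
  classical
  set n := Fintype.card I with hn
  set e : Fin n ≃ I := (Fintype.equivFin I).symm with he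
  set σ : Equiv.Perm (Fin n) := Tuple.sort (c ∘ e) with hσ
  set π : Fin n ≃ I := ((Fin.revPerm.trans σ).trans e) with hπ
  have hanti : ∀ k l : Fin n, k ≤ l → c (π l) ≤ c (π k) := by
    intro k l hkl
    have := Tuple.monotone_sort (c ∘ e) (a := l.rev) (b := k.rev) (by
      simpa [Fin.rev_le_rev] using hkl)
    simpa [hπ, Function.comp] using this
  set A : ℕ → Finset I := fun k => Finset.univ.filter (fun i => ((π.symm i : Fin n) : ℕ) < k) with hA
  have memA : ∀ (k : ℕ) (i : I), i ∈ A k ↔ ((π.symm i : Fin n) : ℕ) < k := by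
    intro k i; simp [hA]
  have hA0 : A 0 = ∅ := by ext i; simp [memA]
  have hAn : A n = Finset.univ := by
    ext i; simpa [memA] using (π.symm i).isLt
  have hAins : ∀ (k : ℕ) (hk : k < n),
      A (k + 1) = insert (π ⟨k, hk⟩) (A k) ∧ π ⟨k, hk⟩ ∉ A k := by
    intro k hk
    constructor
    · ext i
      simp only [memA, Finset.mem_insert]
      have hiff : i = π ⟨k, hk⟩ ↔ ((π.symm i : Fin n) : ℕ) = k := by
        constructor
        · rintro rfl; simp
        · intro h
          have : π.symm i = ⟨k, hk⟩ := Fin.ext h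
          rw [← this, Equiv.apply_symm_apply]
      rw [hiff]
      omega
    · simp [memA]
  set m : Finset I → ℕ := fun K =>
    if h : K.Nonempty then K.inf' h (fun j => ((π.symm j : Fin n) : ℕ)) else n with hm
  have fact1 : ∀ (k : ℕ), k ≤ n → ∀ K : Finset I, ((K ∩ A k).Nonempty ↔ m K < k) := by
    intro k hk K
    by_cases h : K.Nonempty
    · simp only [hm]
      rw [dif_pos h, Finset.inf'_lt_iff]
      constructor
      · rintro ⟨j, hj⟩
        rw [Finset.mem_inter] at hj
        exact ⟨j, hj.1, (memA k j).1 hj.2⟩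
      · rintro ⟨j, hjK, hjA⟩
        exact ⟨j, Finset.mem_inter.2 ⟨hjK, (memA k j).2 hjA⟩⟩
    · rw [Finset.not_nonempty_iff_eq_empty] at h
      subst h
      simp only [Finset.empty_inter, hm]
      rw [dif_neg Finset.not_nonempty_empty]
      constructor
      · intro hcon; exact absurd hcon Finset.not_nonempty_empty
      · intro hcon; omega
  have hmJ_lt : ∀ J : Finset I, J.Nonempty → m J < n := by
    intro J hJ
    simp only [hm]
    rw [dif_pos hJ]
    obtain ⟨j, hj, hjeq⟩ := Finset.exists_mem_eq_inf' hJ (fun j => ((π.symm j : Fin n) : ℕ))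
    rw [hjeq]; exact (π.symm j).isLt
  have hπmJ : ∀ (J : Finset I) (hJ : J.Nonempty), π ⟨m J, hmJ_lt J hJ⟩ ∈ J := by
    intro J hJ
    obtain ⟨j, hj, hjeq⟩ := Finset.exists_mem_eq_inf' hJ (fun j => ((π.symm j : Fin n) : ℕ))
    have : (⟨m J, hmJ_lt J hJ⟩ : Fin n) = π.symm j := by
      apply Fin.ext
      simp only [hm]
      rw [dif_pos hJ]
      exact hjeq
    rw [this, Equiv.apply_symm_apply]
    exact hj
  set z : Finset I → ℝ := fun B => ∑ K ∈ Finset.univ.filter (fun K : Finset I => (K ∩ B).Nonempty), y K with hz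
  set X : Finset I → ℝ := fun B => ∑ i ∈ B, x i with hX
  have hzA : ∀ k : ℕ, k ≤ n → z (A k) = ∑ K ∈ Finset.univ.filter (fun K => m K < k), y K := by
    intro k hk
    simp only [hz]
    apply Finset.sum_congr _ (fun _ _ => rfl)
    apply Finset.filter_congr
    intro K _
    simpa using fact1 k hk K
  set cc : ℕ → ℝ := fun k => if hk : k < n then c (π ⟨k, hk⟩) else 0 with hcc
  set D : ℕ → ℝ := fun k => X (A k) - z (A k) with hD
  have stepA : (∑ i, c i * x i) = ∑ k ∈ Finset.range n, cc k * (X (A (k + 1)) - X (A k)) := by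
    have h1 : (∑ i, c i * x i) = ∑ k : Fin n, c (π k) * x (π k) :=
      (Equiv.sum_comp π (fun i => c i * x i)).symm
    have h2 : (∑ k : Fin n, c (π k) * x (π k)) = ∑ k ∈ Finset.range n,
        (fun k : ℕ => if hk : k < n then c (π ⟨k, hk⟩) * x (π ⟨k, hk⟩) else 0) k := by
      rw [← Fin.sum_univ_eq_sum_range]
      apply Finset.sum_congr rfl
      intro k _
      simp [k.isLt]
    rw [h1, h2]
    apply Finset.sum_congr rfl
    intro k hk
    have hk' := Finset.mem_range.1 hk
    obtain ⟨hins, hnotin⟩ := hAins k hk'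
    simp only [hX, hins, Finset.sum_insert hnotin, hcc]
    rw [dif_pos hk', dif_pos hk']
    ring
  have hdiff : ∀ k : ℕ, k < n →
      z (A (k + 1)) - z (A k) = ∑ K ∈ Finset.univ.filter (fun K => m K = k), y K := by
    intro k hk
    rw [hzA (k + 1) hk, hzA k (le_of_lt hk)]
    have hsplit : Finset.univ.filter (fun K : Finset I => m K < k + 1)
        = Finset.univ.filter (fun K : Finset I => m K < k)
          ∪ Finset.univ.filter (fun K : Finset I => m K = k) := by
      ext K; simp only [Finset.mem_filter, Finset.mem_union, Finset.mem_univ, true_and]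
      omega
    rw [hsplit, Finset.sum_union (by
      rw [Finset.disjoint_left]
      intro K h1 h2
      simp only [Finset.mem_filter] at h1 h2
      omega)]
    ring
  have stepB : ∑ k ∈ Finset.range n, cc k * (z (A (k + 1)) - z (A k))
      = ∑ J ∈ Finset.univ.filter (fun J : Finset I => J.Nonempty), cc (m J) * y J := by
    rw [← Finset.sum_fiberwise_of_maps_to (g := m) (t := Finset.range n)
      (fun J hJ => Finset.mem_range.2 (hmJ_lt J (Finset.mem_filter.1 hJ).2))
      (fun J => cc (m J) * y J)]
    apply Finset.sum_congr rfl
    intro k hk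
    have hk' := Finset.mem_range.1 hk
    rw [hdiff k hk', Finset.mul_sum]
    rw [Finset.filter_filter]
    apply Finset.sum_congr
    · apply Finset.filter_congr
      intro K _
      constructor
      · intro h
        refine ⟨?_, h⟩
        by_contra hne
        simp only [hm] at h
        rw [dif_neg hne] at h
        omega
      · exact fun h => h.2
    · intro K hK
      have hKk := (Finset.mem_filter.1 hK).2.2
      rw [hKk]
  have stepB2 : ∑ J ∈ Finset.univ.filter (fun J : Finset I => J.Nonempty), cc (m J) * y J
      ≤ ∑ J ∈ Finset.univ.filter (fun J : Finset I => J.Nonempty), y J * maxc J := by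
    apply Finset.sum_le_sum
    intro J hJ
    have hJne : J.Nonempty := (Finset.mem_filter.1 hJ).2
    have h1 : cc (m J) = c (π ⟨m J, hmJ_lt J hJne⟩) := by
      simp only [hcc]
      rw [dif_pos (hmJ_lt J hJne)]
    rw [h1, mul_comm]
    exact mul_le_mul_of_nonneg_left (hmax J _ (hπmJ J hJne)) (hy J hJne)
  have habel : ∑ k ∈ Finset.range n, cc k * (D (k + 1) - D k) ≤ 0 := by
    apply abel_nonpos n cc D
    · show X (A 0) - z (A 0) = 0
      rw [hA0]
      simp [hX, hz]
    · show X (A n) - z (A n) = 0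
      rw [hAn]
      simp only [hX, hz]
      exact sub_eq_zero_of_eq hx1
    · intro k hk
      show X (A k) - z (A k) ≤ 0
      simp only [hX, hz]
      have h2 := hx2 (A k)
      linarith
    · intro k hk
      show cc (k + 1) ≤ cc k
      simp only [hcc]
      rw [dif_pos hk, dif_pos (Nat.lt_of_succ_lt hk)]
      exact hanti ⟨k, Nat.lt_of_succ_lt hk⟩ ⟨k + 1, hk⟩ (by simp [Fin.mk_le_mk])
  calc (∑ i, c i * x i)
      = ∑ k ∈ Finset.range n, cc k * (D (k + 1) - D k)
        + ∑ k ∈ Finset.range n, cc k * (z (A (k + 1)) - z (A k)) := by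
        rw [stepA, ← Finset.sum_add_distrib]
        apply Finset.sum_congr rfl
        intro k _
        simp only [hD]
        ring
    _ ≤ ∑ k ∈ Finset.range n, cc k * (z (A (k + 1)) - z (A k)) := by linarith
    _ = _ := stepB
    _ ≤ _ := stepB2

end Aux

theorem stmt5 {I : Type*} [Fintype I] [DecidableEq I]
    (y : Finset I → ℝ) (hy : ∀ J : Finset I, J.Nonempty → 0 ≤ y J) :
    Submodular
      (fun A : Finset I =>
        ∑ K ∈ Finset.univ.filter fun K : Finset I => (K ∩ A).Nonempty, y K) ∧
    (∑ J ∈ Finset.univ.filter fun J : Finset I => J.Nonempty, y J • simplexOf J) =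
      basePolytope
        (fun A : Finset I =>
          ∑ K ∈ Finset.univ.filter fun K : Finset I => (K ∩ A).Nonempty, y K) := by
  classical
  set F : Finset (Finset I) := Finset.univ.filter (fun J : Finset I => J.Nonempty) with hF
  set z : Finset I → ℝ := fun A =>
    ∑ K ∈ Finset.univ.filter (fun K : Finset I => (K ∩ A).Nonempty), y K with hzdef
  -- rewrite z A as a sum over F with indicators
  have hzF : ∀ A : Finset I, z A = ∑ J ∈ F, (if (J ∩ A).Nonempty then y J else 0) := by
    intro A
    simp only [hzdef]
    rw [← Finset.sum_filter]
    apply Finset.sum_congr _ (fun _ _ => rfl)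
    rw [hF, Finset.filter_filter]
    apply Finset.filter_congr
    intro K _
    constructor
    · intro h; exact ⟨⟨h.choose, (Finset.mem_inter.1 h.choose_spec).1⟩, h⟩
    · exact fun h => h.2
  have hzuniv : z Finset.univ = ∑ J ∈ F, y J := by
    rw [hzF]
    apply Finset.sum_congr rfl
    intro J hJ
    rw [Finset.inter_univ, if_pos (Finset.mem_filter.1 hJ).2]
  constructor
  · -- Submodularity
    constructor
    · simp [hzdef]
    · intro A B
      show z (A ∪ B) + z (A ∩ B) ≤ z A + z B
      simp only [hzF]
      rw [← Finset.sum_add_distrib, ← Finset.sum_add_distrib]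
      apply Finset.sum_le_sum
      intro K hK
      have hyK : 0 ≤ y K := hy K (Finset.mem_filter.1 hK).2
      have hint : (K ∩ (A ∩ B)).Nonempty → (K ∩ A).Nonempty ∧ (K ∩ B).Nonempty := by
        rintro ⟨j, hj⟩
        simp only [Finset.mem_inter] at hj
        exact ⟨⟨j, Finset.mem_inter.2 ⟨hj.1, hj.2.1⟩⟩, ⟨j, Finset.mem_inter.2 ⟨hj.1, hj.2.2⟩⟩⟩
      have huni : (K ∩ (A ∪ B)).Nonempty → (K ∩ A).Nonempty ∨ (K ∩ B).Nonempty := by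
        rintro ⟨j, hj⟩
        simp only [Finset.mem_inter, Finset.mem_union] at hj
        rcases hj.2 with h | h
        · exact Or.inl ⟨j, Finset.mem_inter.2 ⟨hj.1, h⟩⟩
        · exact Or.inr ⟨j, Finset.mem_inter.2 ⟨hj.1, h⟩⟩
      by_cases h2 : (K ∩ (A ∩ B)).Nonempty
      · obtain ⟨h3, h4⟩ := hint h2
        have h1 : (K ∩ (A ∪ B)).Nonempty := by
          obtain ⟨j, hj⟩ := h2
          simp only [Finset.mem_inter] at hj
          exact ⟨j, Finset.mem_inter.2 ⟨hj.1, Finset.mem_union.2 (Or.inl hj.2.1)⟩⟩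
        rw [if_pos h1, if_pos h2, if_pos h3, if_pos h4]
      · rw [if_neg h2, add_zero]
        by_cases h1 : (K ∩ (A ∪ B)).Nonempty
        · rw [if_pos h1]
          rcases huni h1 with h | h
          · rw [if_pos h]
            have : (0:ℝ) ≤ if (K ∩ B).Nonempty then y K else 0 := by positivity
            linarith
          · rw [if_pos h]
            have : (0:ℝ) ≤ if (K ∩ A).Nonempty then y K else 0 := by positivity
            linarith
        · rw [if_neg h1]
          positivity
  · -- The polytope equality
    set S : Set (I → ℝ) := ∑ J ∈ F, y J • simplexOf J with hS
    have hSconv : Convex ℝ S :=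
      convex_finsetSum fun J _ => (convex_convexHull ℝ _).smul (y J)
    have hScompact : IsCompact S := by
      apply isCompact_finsetSum
      intro J _
      rw [← Set.image_smul]
      exact (Set.Finite.isCompact_convexHull (𝕜 := ℝ)
        ((J.finite_toSet.image _))).image (continuous_const_smul _)
    have hSclosed : IsClosed S := hScompact.isClosed
    apply Set.Subset.antisymm
    · -- S ⊆ basePolytope z
      intro w hw
      obtain ⟨p, hp, hps⟩ := mem_finsetSum_iff.1 hw
      -- extract normalized points
      have hq : ∀ J : Finset I, ∃ q : I → ℝ,
          J ∈ F → (q ∈ simplexOf J ∧ p J = y J • q) := by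
        intro J
        by_cases hJ : J ∈ F
        · obtain ⟨q, hq1, hq2⟩ := Set.mem_smul_set.1 (hp J hJ)
          exact ⟨q, fun _ => ⟨hq1, hq2.symm⟩⟩
        · exact ⟨0, fun h => absurd h hJ⟩
      choose q hq using hq
      have hqprop : ∀ J ∈ F, (∀ i, 0 ≤ q J i) ∧ (∀ i ∉ J, q J i = 0) ∧ (∑ i, q J i) = 1 :=
        fun J hJ => simplex_sub ((hq J hJ).1)
      have hsum_eval : ∀ A : Finset I, (∑ i ∈ A, w i) = ∑ J ∈ F, y J * ∑ i ∈ A, q J i := by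
        intro A
        rw [← hps]
        rw [show (∑ i ∈ A, (∑ J ∈ F, p J) i) = ∑ i ∈ A, ∑ J ∈ F, p J i from
          Finset.sum_congr rfl fun i _ => Finset.sum_apply i F p]
        rw [Finset.sum_comm]
        apply Finset.sum_congr rfl
        intro J hJ
        rw [(hq J hJ).2, Finset.mul_sum]
        apply Finset.sum_congr rfl
        intro i _
        simp
      have hterm_le : ∀ J ∈ F, ∀ A : Finset I,
          y J * (∑ i ∈ A, q J i) ≤ (if (J ∩ A).Nonempty then y J else 0) := by
        intro J hJ A
        obtain ⟨hq1, hq2, hq3⟩ := hqprop J hJ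
        have hyJ : 0 ≤ y J := hy J (Finset.mem_filter.1 hJ).2
        by_cases h : (J ∩ A).Nonempty
        · rw [if_pos h]
          have : (∑ i ∈ A, q J i) ≤ 1 := by
            rw [← hq3]
            exact Finset.sum_le_sum_of_subset_of_nonneg (Finset.subset_univ A)
              (fun i _ _ => hq1 i)
          nlinarith
        · rw [if_neg h]
          have : (∑ i ∈ A, q J i) = 0 := by
            apply Finset.sum_eq_zero
            intro i hi
            apply hq2
            intro hiJ
            exact h ⟨i, Finset.mem_inter.2 ⟨hiJ, hi⟩⟩
          rw [this, mul_zero]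
      constructor
      · -- total sum equality
        rw [hsum_eval Finset.univ, hzuniv]
        apply Finset.sum_congr rfl
        intro J hJ
        rw [(hqprop J hJ).2.2, mul_one]
      · intro A
        rw [hsum_eval A]
        calc ∑ J ∈ F, y J * ∑ i ∈ A, q J i
            ≤ ∑ J ∈ F, (if (J ∩ A).Nonempty then y J else 0) :=
              Finset.sum_le_sum fun J hJ => hterm_le J hJ A
          _ = z A := (hzF A).symm
    · -- basePolytope z ⊆ S
      intro w hw
      obtain ⟨hw1, hw2⟩ := hw
      by_contra hnot
      obtain ⟨f, u, hfu, hux⟩ := geometric_hahn_banach_closed_point hSconv hSclosed hnot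
      set c : I → ℝ := fun i => f (Pi.single i 1) with hc
      have hfeval : ∀ v : I → ℝ, f v = ∑ i, c i * v i := by
        intro v
        have hbasis : v = ∑ i, v i • (Pi.single i (1 : ℝ) : I → ℝ) := by
          ext j
          rw [Finset.sum_apply]
          simp [Pi.single_apply]
        conv_lhs => rw [hbasis]
        rw [map_sum]
        apply Finset.sum_congr rfl
        intro i _
        rw [map_smul]
        simp [hc, mul_comm]
      set maxc : Finset I → ℝ := fun J => if h : J.Nonempty then J.sup' h c else 0 with hmaxc
      have hmax : ∀ J : Finset I, ∀ j ∈ J, c j ≤ maxc J := by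
        intro J j hj
        have hJ : J.Nonempty := ⟨j, hj⟩
        simp only [hmaxc]
        rw [dif_pos hJ]
        exact Finset.le_sup' c hj
      -- a point of S achieving the support value
      have hpt : ∀ J : Finset I, ∃ v : I → ℝ,
          J ∈ F → (v ∈ y J • simplexOf J ∧ f v = y J * maxc J) := by
        intro J
        by_cases hJF : J ∈ F
        · have hJ : J.Nonempty := (Finset.mem_filter.1 hJF).2
          obtain ⟨j, hjJ, hjeq⟩ := Finset.exists_mem_eq_sup' hJ c
          refine ⟨y J • (Pi.single j (1:ℝ) : I → ℝ), fun _ => ⟨?_, ?_⟩⟩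
          · exact Set.smul_mem_smul_set
              (subset_convexHull ℝ _ ⟨j, hjJ, rfl⟩)
          · rw [map_smul, smul_eq_mul]
            congr 1
            simp only [hmaxc]
            rw [dif_pos hJ, hjeq]
        · exact ⟨0, fun h => absurd h hJF⟩
      choose v hv using hpt
      have hsstar : (∑ J ∈ F, v J) ∈ S :=
        mem_finsetSum_iff.2 ⟨v, fun J hJ => (hv J hJ).1, rfl⟩
      have hfsstar : f (∑ J ∈ F, v J) = ∑ J ∈ F, y J * maxc J := by
        rw [map_sum]
        exact Finset.sum_congr rfl fun J hJ => (hv J hJ).2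
      have hkey : f w ≤ ∑ J ∈ F, y J * maxc J := by
        rw [hfeval w]
        exact key_ineq y hy c w maxc hmax hw1 hw2
      have h1 := hfu _ hsstar
      rw [hfsstar] at h1
      linarith
end

section
/- Let I be a finite set and let y and y' each assign a nonnegative real number to every nonempty subset of I. If the Minkowski sums ∑_{∅ ≠ J ⊆ I} y(J)•Δ_J and ∑_{∅ ≠ J ⊆ I} y'(J)•Δ_J are equal as subsets of ℝ^I, then y(J) = y'(J) for every nonempty J ⊆ I. -/
open Finset Pointwise

lemma sum_T_le_of_mem_simplex {I : Type*} [DecidableEq I] {J T : Finset I}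
    {a : I → ℝ} (ha : a ∈ simplexOf J) :
    ∑ i ∈ T, a i ≤ if (J ∩ T).Nonempty then (1:ℝ) else 0 := by
  classical
  have hconv : Convex ℝ {z : I → ℝ | ∑ i ∈ T, z i ≤ if (J ∩ T).Nonempty then (1:ℝ) else 0} := by
    refine convex_halfSpace_le ⟨fun u v => ?_, fun c u => ?_⟩ _
    · simp [Finset.sum_add_distrib]
    · simp [Finset.mul_sum]
  have hsub : simplexOf J ⊆ {z : I → ℝ | ∑ i ∈ T, z i ≤ if (J ∩ T).Nonempty then (1:ℝ) else 0} := by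
    refine convexHull_min ?_ hconv
    rintro z ⟨j, hj, rfl⟩
    simp only [Set.mem_setOf_eq]
    have : ∑ i ∈ T, Pi.single j (1:ℝ) i = if j ∈ T then (1:ℝ) else 0 := by
      simp [Pi.single_apply, Finset.sum_ite_eq' T j (fun _ => (1:ℝ))]
    rw [this]
    by_cases hjT : j ∈ T
    · have : (J ∩ T).Nonempty := ⟨j, Finset.mem_inter.2 ⟨hj, hjT⟩⟩
      simp [hjT, this]
    · simp only [hjT, if_false]
      split <;> norm_num
  exact hsub ha

lemma z_le {I : Type*} [Fintype I] [DecidableEq I] [Nonempty I]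
    (y y' : Finset I → ℝ)
    (hy' : ∀ J : Finset I, J.Nonempty → 0 ≤ y' J)
    (hsub : (∑ J ∈ Finset.univ.filter fun J : Finset I => J.Nonempty, y J • simplexOf J) ⊆
      ∑ J ∈ Finset.univ.filter fun J : Finset I => J.Nonempty, y' J • simplexOf J)
    (T : Finset I) :
    ∑ J ∈ Finset.univ.filter (fun J : Finset I => J.Nonempty),
        y J * (if (J ∩ T).Nonempty then (1:ℝ) else 0) ≤
    ∑ J ∈ Finset.univ.filter (fun J : Finset I => J.Nonempty),
        y' J * (if (J ∩ T).Nonempty then (1:ℝ) else 0) := by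
  classical
  set S := Finset.univ.filter (fun J : Finset I => J.Nonempty) with hS
  have hmemS : ∀ J, J ∈ S → J.Nonempty := fun J hJ => (Finset.mem_filter.1 hJ).2
  set pick : Finset I → I := fun J =>
    if h : (J ∩ T).Nonempty then h.choose
    else if h2 : J.Nonempty then h2.choose else Classical.arbitrary I with hpick
  have hpickJ : ∀ J, J.Nonempty → pick J ∈ J := by
    intro J hJ
    by_cases h : (J ∩ T).Nonempty
    · simp only [hpick, h, dif_pos]
      exact (Finset.mem_inter.1 h.choose_spec).1
    · simp only [hpick, h, dif_neg, not_false_iff, hJ, dif_pos]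
      exact hJ.choose_spec
  have hpickT : ∀ J, J.Nonempty → ((pick J ∈ T) ↔ (J ∩ T).Nonempty) := by
    intro J hJ
    constructor
    · intro hT
      exact ⟨pick J, Finset.mem_inter.2 ⟨hpickJ J hJ, hT⟩⟩
    · intro h
      simp only [hpick, h, dif_pos]
      exact (Finset.mem_inter.1 h.choose_spec).2
  set g : Finset I → (I → ℝ) := fun J => y J • (Pi.single (pick J) (1:ℝ) : I → ℝ) with hg
  have hp : (∑ J ∈ S, g J) ∈ ∑ J ∈ S, y J • simplexOf J := by
    refine Set.finset_sum_mem_finset_sum _ _ _ (fun J hJ => Set.smul_mem_smul_set ?_)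
    exact subset_convexHull ℝ _ ⟨pick J, hpickJ J (hmemS J hJ), rfl⟩
  have hp' := hsub hp
  rw [Set.mem_finset_sum] at hp'
  obtain ⟨g', hg', hsum⟩ := hp'
  have hval : ∑ i ∈ T, (∑ J ∈ S, g J) i
      = ∑ J ∈ S, y J * (if (J ∩ T).Nonempty then (1:ℝ) else 0) := by
    have : ∀ i, (∑ J ∈ S, g J) i = ∑ J ∈ S, g J i := fun i => Finset.sum_apply i S g
    simp_rw [this]
    rw [Finset.sum_comm]
    refine Finset.sum_congr rfl (fun J hJ => ?_)
    have : ∀ i ∈ T, g J i = y J * (if i = pick J then (1:ℝ) else 0) := by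
      intro i _
      simp [hg, Pi.single_apply]
    rw [Finset.sum_congr rfl this, ← Finset.mul_sum]
    congr 1
    rw [Finset.sum_ite_eq' T (pick J) (fun _ => (1:ℝ))]
    by_cases hT : pick J ∈ T
    · simp [hT, (hpickT J (hmemS J hJ)).1 hT]
    · have : ¬ (J ∩ T).Nonempty := fun h => hT ((hpickT J (hmemS J hJ)).2 h)
      simp [hT, this]
  have hub : ∑ i ∈ T, (∑ J ∈ S, g J) i
      ≤ ∑ J ∈ S, y' J * (if (J ∩ T).Nonempty then (1:ℝ) else 0) := by
    rw [← hsum]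
    have : ∀ i, (∑ J ∈ S, g' J) i = ∑ J ∈ S, g' J i := fun i => Finset.sum_apply i S g'
    simp_rw [this]
    rw [Finset.sum_comm]
    refine Finset.sum_le_sum (fun J hJ => ?_)
    obtain ⟨a, ha, hae⟩ := Set.mem_smul_set.1 (hg' hJ)
    have h1 : ∑ i ∈ T, g' J i = y' J * ∑ i ∈ T, a i := by
      rw [← hae]; simp [Finset.mul_sum]
    rw [h1]
    exact mul_le_mul_of_nonneg_left (sum_T_le_of_mem_simplex ha) (hy' J (hmemS J hJ))
  rw [hval] at hub
  exact hub

/-- If two nonnegative Minkowski sums of dilated faces of the standard simplex coincide,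
then the dilation coefficients agree on all nonempty subsets. -/
theorem stmt6 {I : Type*} [Fintype I] [DecidableEq I]
    (y y' : Finset I → ℝ)
    (hy : ∀ J : Finset I, J.Nonempty → 0 ≤ y J)
    (hy' : ∀ J : Finset I, J.Nonempty → 0 ≤ y' J)
    (h : (∑ J ∈ Finset.univ.filter fun J : Finset I => J.Nonempty, y J • simplexOf J) =
      ∑ J ∈ Finset.univ.filter fun J : Finset I => J.Nonempty, y' J • simplexOf J) :
    ∀ J : Finset I, J.Nonempty → y J = y' J := by
  classical
  intro J₀ hJ₀
  haveI : Nonempty I := ⟨hJ₀.choose⟩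
  set S := Finset.univ.filter (fun J : Finset I => J.Nonempty) with hS
  have hz : ∀ T : Finset I,
      ∑ J ∈ S, y J * (if (J ∩ T).Nonempty then (1:ℝ) else 0)
      = ∑ J ∈ S, y' J * (if (J ∩ T).Nonempty then (1:ℝ) else 0) := by
    intro T
    exact le_antisymm (z_le y y' hy' (le_of_eq h) T) (z_le y' y hy (le_of_eq h.symm) T)
  -- from z to w : sums over subsets of T
  have hw : ∀ T : Finset I,
      ∑ J ∈ S.filter (· ⊆ T), y J = ∑ J ∈ S.filter (· ⊆ T), y' J := by
    intro T
    have key : ∀ (u : Finset I → ℝ),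
        ∑ J ∈ S.filter (· ⊆ T), u J
        = ∑ J ∈ S, u J * (if (J ∩ (univ : Finset I)).Nonempty then (1:ℝ) else 0)
          - ∑ J ∈ S, u J * (if (J ∩ Tᶜ).Nonempty then (1:ℝ) else 0) := by
      intro u
      have h1 : ∑ J ∈ S, u J * (if (J ∩ (univ : Finset I)).Nonempty then (1:ℝ) else 0)
          = ∑ J ∈ S, u J := by
        refine Finset.sum_congr rfl (fun J hJ => ?_)
        have : (J ∩ (univ : Finset I)).Nonempty := by
          simpa using (Finset.mem_filter.1 hJ).2
        rw [if_pos this, mul_one]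
      have h2 : ∑ J ∈ S, u J * (if (J ∩ Tᶜ).Nonempty then (1:ℝ) else 0)
          = ∑ J ∈ S.filter (fun J => ¬ J ⊆ T), u J := by
        conv_rhs => rw [Finset.sum_filter]
        refine Finset.sum_congr rfl (fun J _ => ?_)
        have : (J ∩ Tᶜ).Nonempty ↔ ¬ J ⊆ T := by
          constructor
          · rintro ⟨x, hx⟩ hsub
            have := Finset.mem_inter.1 hx
            exact (Finset.mem_compl.1 this.2) (hsub this.1)
          · intro hsub
            obtain ⟨x, hxJ, hxT⟩ := Finset.not_subset.1 hsub
            exact ⟨x, Finset.mem_inter.2 ⟨hxJ, Finset.mem_compl.2 hxT⟩⟩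
        by_cases hc : J ⊆ T
        · rw [if_neg (fun hn => (this.1 hn) hc), if_neg (by simpa using hc), mul_zero]
        · rw [if_pos (this.2 hc), if_pos (by simpa using hc), mul_one]
      rw [h1, h2]
      have := Finset.sum_filter_add_sum_filter_not S (· ⊆ T) u
      linarith
    rw [key y, key y']
    rw [hz (univ : Finset I), hz Tᶜ]
  -- strong induction on J
  have main : ∀ J : Finset I, J.Nonempty → y J = y' J := by
    intro J
    induction J using Finset.strongInduction with
    | _ J ih =>
      intro hJ
      have hJS : J ∈ S.filter (· ⊆ J) :=
        Finset.mem_filter.2 ⟨Finset.mem_filter.2 ⟨Finset.mem_univ _, hJ⟩, Finset.Subset.refl J⟩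
      have e1 := Finset.add_sum_erase (S.filter (· ⊆ J)) y hJS
      have e2 := Finset.add_sum_erase (S.filter (· ⊆ J)) y' hJS
      have erase_eq : ∑ K ∈ (S.filter (· ⊆ J)).erase J, y K
          = ∑ K ∈ (S.filter (· ⊆ J)).erase J, y' K := by
        refine Finset.sum_congr rfl (fun K hK => ?_)
        have hKne := Finset.mem_erase.1 hK
        have hKf := Finset.mem_filter.1 hKne.2
        have hKssub : K ⊂ J := Finset.ssubset_iff_subset_ne.2 ⟨hKf.2, hKne.1⟩
        exact ih K hKssub (Finset.mem_filter.1 hKf.1).2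
      have := hw J
      rw [← e1, ← e2, erase_eq] at this
      linarith
  exact main J₀ hJ₀
end

section
/- Let M be a matroid on a finite ground set E with rank function r, where r(A) is the size of a largest independent subset of A. Then the convex hull in ℝ^E of the indicator vectors ∑_{b ∈ B} e_b of the bases B of M equals the set {x : E → ℝ | ∑_{i ∈ E} x(i) = r(E) and ∑_{i ∈ A} x(i) ≤ r(A) for all A ⊆ E}. Moreover, for every basis B of M, the indicator vector ∑_{b ∈ B} e_b is an extreme point of this polytope. -/
set_option linter.unusedSectionVars false

open Finset

/-- The rank of a subset `A`: the size of a largest subset of `A` contained in some basis. -/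
def matRank {E : Type*} [DecidableEq E] (Bs : Finset (Finset E)) (A : Finset E) : ℕ :=
  (A.powerset.filter fun X => ∃ B ∈ Bs, X ⊆ B).sup Finset.card

namespace MatPoly

variable {E : Type*} [Fintype E] [DecidableEq E] {Bs : Finset (Finset E)}

def Ind (Bs : Finset (Finset E)) (I : Finset E) : Prop := ∃ B ∈ Bs, I ⊆ B

abbrev Hexch (Bs : Finset (Finset E)) : Prop :=
  ∀ B₁ ∈ Bs, ∀ B₂ ∈ Bs, ∀ a ∈ B₁ \ B₂, ∃ b ∈ B₂ \ B₁, insert b (B₁.erase a) ∈ Bs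

lemma exchSet (hexch : Hexch Bs) :
    Matroid.ExchangeProperty (fun S : Set E => ∃ B ∈ Bs, S = ↑B) := by
  rintro X Y ⟨B₁, hB₁, rfl⟩ ⟨B₂, hB₂, rfl⟩ a ha
  have ha' : a ∈ B₁ \ B₂ := by
    simp only [Set.mem_diff, Finset.mem_coe] at ha
    simp [Finset.mem_sdiff, ha.1, ha.2]
  obtain ⟨b, hb, hins⟩ := hexch B₁ hB₁ B₂ hB₂ a ha'
  refine ⟨b, ?_, insert b (B₁.erase a), hins, ?_⟩
  · simp only [Finset.mem_sdiff] at hb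
    simp [Set.mem_diff, hb.1, hb.2]
  · simp [Finset.coe_insert, Finset.coe_erase]

lemma card_eq_card (hexch : Hexch Bs) {B₁ B₂ : Finset E} (h₁ : B₁ ∈ Bs) (h₂ : B₂ ∈ Bs) :
    B₁.card = B₂.card := by
  have := Matroid.ExchangeProperty.encard_isBase_eq (exchSet hexch) (B₁ := (B₁ : Set E)) (B₂ := (B₂ : Set E))
    ⟨B₁, h₁, rfl⟩ ⟨B₂, h₂, rfl⟩
  rw [Set.encard_coe_eq_coe_finsetCard, Set.encard_coe_eq_coe_finsetCard] at this
  exact_mod_cast this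

lemma aug (hne : Bs.Nonempty) (hexch : Hexch Bs) {I J : Finset E}
    (hI : Ind Bs I) (hJ : Ind Bs J) (hc : I.card < J.card) :
    ∃ e ∈ J, e ∉ I ∧ Ind Bs (insert e I) := by
  classical
  set M : Matroid E := Matroid.ofIsBaseOfFinite (Set.finite_univ)
    (fun S : Set E => ∃ B ∈ Bs, S = ↑B)
    (let ⟨B,hB⟩ := hne; ⟨↑B, B, hB, rfl⟩) (exchSet hexch) (fun B _ => Set.subset_univ _) with hM
  have hindep : ∀ K : Finset E, M.Indep ↑K ↔ Ind Bs K := by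
    intro K
    rw [hM, Matroid.ofIsBaseOfFinite, Matroid.ofExistsFiniteIsBase, Matroid.ofBase]
    constructor
    · rintro ⟨S, ⟨B, hB, rfl⟩, hKS⟩
      exact ⟨B, hB, Finset.coe_subset.mp hKS⟩
    · rintro ⟨B, hB, hKB⟩
      exact ⟨↑B, ⟨B, hB, rfl⟩, Finset.coe_subset.mpr hKB⟩
  have := ((hindep I).mpr hI).augment ((hindep J).mpr hJ) ?_
  · obtain ⟨e, he, hind⟩ := this
    rw [← Finset.coe_insert, hindep] at hind
    exact ⟨e, by exact_mod_cast he.1, by exact_mod_cast he.2, hind⟩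
  · rw [Set.encard_coe_eq_coe_finsetCard, Set.encard_coe_eq_coe_finsetCard]
    exact_mod_cast hc

lemma ind_empty (hne : Bs.Nonempty) : Ind Bs (∅ : Finset E) :=
  hne.imp fun B hB => ⟨hB, Finset.empty_subset _⟩

lemma card_le_matRank {I A : Finset E} (hI : Ind Bs I) (hIA : I ⊆ A) :
    I.card ≤ matRank Bs A :=
  Finset.le_sup (by simp only [Finset.mem_filter, Finset.mem_powerset]; exact ⟨hIA, hI⟩)

lemma matRank_attained (hne : Bs.Nonempty) (A : Finset E) :
    ∃ X, X ⊆ A ∧ Ind Bs X ∧ X.card = matRank Bs A := by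
  obtain ⟨X, hX, hXc⟩ := Finset.exists_mem_eq_sup
    (A.powerset.filter fun X => ∃ B ∈ Bs, X ⊆ B)
    ⟨∅, by simpa using (show ∃ B, B ∈ Bs from hne)⟩ Finset.card
  simp only [Finset.mem_filter, Finset.mem_powerset] at hX
  exact ⟨X, hX.1, hX.2, hXc.symm⟩

lemma extend (hne : Bs.Nonempty) (hexch : Hexch Bs) {I A : Finset E}
    (hI : Ind Bs I) (hIA : I ⊆ A) :
    ∃ I', I ⊆ I' ∧ I' ⊆ A ∧ Ind Bs I' ∧ I'.card = matRank Bs A := by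
  by_cases h : matRank Bs A ≤ I.card
  · exact ⟨I, le_refl _, hIA, hI, le_antisymm (card_le_matRank hI hIA) h⟩
  · push_neg at h
    obtain ⟨X, hXA, hXind, hXc⟩ := matRank_attained hne A
    obtain ⟨e, heX, heI, hins⟩ := aug hne hexch hI hXind (hXc ▸ h)
    have hinsA : insert e I ⊆ A := Finset.insert_subset (hXA heX) hIA
    have : matRank Bs A - (insert e I).card < matRank Bs A - I.card := by
      rw [Finset.card_insert_of_notMem heI]; omega
    obtain ⟨I', h1, h2, h3, h4⟩ := extend hne hexch hins hinsA
    exact ⟨I', (Finset.subset_insert e I).trans h1, h2, h3, h4⟩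
termination_by matRank Bs A - I.card

lemma matRank_empty : matRank Bs (∅ : Finset E) = 0 := by
  simp only [matRank]
  apply Nat.le_antisymm _ (Nat.zero_le _)
  apply Finset.sup_le
  intro X hX
  simp only [Finset.mem_filter, Finset.mem_powerset, Finset.subset_empty] at hX
  simp [hX.1]

lemma matRank_univ (hexch : Hexch Bs) {B : Finset E} (hB : B ∈ Bs) :
    matRank Bs Finset.univ = B.card := by
  apply le_antisymm
  · apply Finset.sup_le
    intro X hX
    simp only [Finset.mem_filter, Finset.mem_powerset] at hX
    obtain ⟨B', hB', hXB'⟩ := hX.2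
    exact (Finset.card_le_card hXB').trans (card_eq_card hexch hB' hB).le
  · exact card_le_matRank ⟨B, hB, le_refl _⟩ (Finset.subset_univ _)

/-- greedy chain lemma -/
lemma chain (hne : Bs.Nonempty) (hexch : Hexch Bs)
    (A : ℕ → Finset E) (hmono : ∀ k, A k ⊆ A (k+1)) (h0 : A 0 = ∅) (m : ℕ) :
    ∃ I, I ⊆ A m ∧ Ind Bs I ∧ ∀ k ≤ m, ((I ∩ A k).card = matRank Bs (A k)) := by
  induction m with
  | zero =>
    refine ⟨∅, by simp [h0], ind_empty hne, ?_⟩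
    intro k hk
    interval_cases k
    simp [h0, matRank_empty]
  | succ m ih =>
    obtain ⟨I, hIA, hIind, hIr⟩ := ih
    obtain ⟨I', hII', hI'A, hI'ind, hI'c⟩ := extend hne hexch hIind (hIA.trans (hmono m))
    refine ⟨I', hI'A, hI'ind, ?_⟩
    intro k hk
    rcases Nat.lt_or_ge k (m+1) with h | h
    · apply le_antisymm
      · exact card_le_matRank ⟨_, hI'ind.choose_spec.1, (Finset.inter_subset_left).trans
          hI'ind.choose_spec.2⟩ Finset.inter_subset_right
      · calc matRank Bs (A k) = (I ∩ A k).card := (hIr k (by omega)).symm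
          _ ≤ (I' ∩ A k).card := Finset.card_le_card
              (Finset.inter_subset_inter hII' (le_refl _))
    · have : k = m + 1 := by omega
      subst this
      rw [Finset.inter_eq_left.mpr hI'A, hI'c]


lemma abel_sum (W Y : ℕ → ℝ) (n : ℕ) :
    ∑ k ∈ Finset.range n, W k * Y k
      = ∑ k ∈ Finset.range n, (W k - W (k+1)) * (∑ j ∈ Finset.range (k+1), Y j)
        + W n * ∑ j ∈ Finset.range n, Y j := by
  induction n with
  | zero => simp
  | succ n ih =>
    rw [Finset.sum_range_succ, ih, Finset.sum_range_succ (f := fun k =>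
      (W k - W (k+1)) * (∑ j ∈ Finset.range (k+1), Y j)),
      Finset.sum_range_succ (f := Y)]
    ring

noncomputable def chi (B : Finset E) : E → ℝ := fun i => if i ∈ B then 1 else 0

lemma sum_chi (B A : Finset E) : ∑ i ∈ A, chi B i = ((A ∩ B).card : ℝ) := by
  simp only [chi]
  rw [Finset.sum_ite_mem]
  simp

lemma greedyNN (hne : Bs.Nonempty) (hexch : Hexch Bs) (w x : E → ℝ) (hw : ∀ i, 0 ≤ w i)
    (hx2 : ∀ A : Finset E, ∑ i ∈ A, x i ≤ (matRank Bs A : ℝ)) :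
    ∃ B ∈ Bs, ∑ i, w i * x i ≤ ∑ i, w i * chi B i := by
  classical
  rcases isEmpty_or_nonempty E with hE | hE
  · obtain ⟨B, hB⟩ := hne
    exact ⟨B, hB, by simp⟩
  set n := Fintype.card E with hn
  have npos : 0 < n := Fintype.card_pos
  set eqv := Fintype.equivFin E with heqv
  set σ := Tuple.sort (fun i : Fin n => -w (eqv.symm i)) with hσ
  set e : ℕ → E := fun k => if h : k < n then eqv.symm (σ ⟨k, h⟩) else eqv.symm (σ ⟨0, npos⟩)
    with he
  have hsorted : ∀ j k : ℕ, j ≤ k → k < n → w (e k) ≤ w (e j) := by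
    intro j k hjk hk
    have hj : j < n := lt_of_le_of_lt hjk hk
    have := Tuple.monotone_sort (fun i : Fin n => -w (eqv.symm i))
      (a := ⟨j, hj⟩) (b := ⟨k, hk⟩) (by exact hjk)
    simp only [Function.comp_apply] at this
    rw [he]
    simp only [hj, hk, dif_pos]
    linarith
  have hinj : ∀ j k : ℕ, j < n → k < n → e j = e k → j = k := by
    intro j k hj hk hjk
    rw [he] at hjk
    simp only [hj, hk, dif_pos] at hjk
    have := σ.injective (eqv.symm.injective hjk)
    exact congrArg Fin.val this
  set A : ℕ → Finset E := fun k => (Finset.range (min k n)).image e with hA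
  have h0 : A 0 = ∅ := by simp [hA]
  have hmono : ∀ k, A k ⊆ A (k+1) := by
    intro k
    apply Finset.image_subset_image
    apply Finset.range_subset_range.mpr
    omega
  have hAn : A n = Finset.univ := by
    apply Finset.eq_univ_of_forall
    intro y
    rw [hA]
    simp only [min_self, Finset.mem_image, Finset.mem_range]
    refine ⟨(σ.symm (eqv y)).val, (σ.symm (eqv y)).isLt, ?_⟩
    rw [he]
    simp only [(σ.symm (eqv y)).isLt, dif_pos]
    simp
  have sumA : ∀ (y : E → ℝ) (k : ℕ), k ≤ n →
      ∑ i ∈ A k, y i = ∑ j ∈ Finset.range k, y (e j) := by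
    intro y k hk
    have hAk : A k = (Finset.range k).image e := by
      simp only [hA]; rw [min_eq_left hk]
    rw [hAk, Finset.sum_image]
    intro a ha b hb hab
    exact hinj a b (by have := Finset.mem_range.mp ha; omega)
      (by have := Finset.mem_range.mp hb; omega) hab
  set W : ℕ → ℝ := fun k => if k < n then w (e k) else 0 with hW
  have key : ∀ y : E → ℝ, ∑ i, w i * y i
      = ∑ k ∈ Finset.range n, (W k - W (k+1)) * (∑ i ∈ A (k+1), y i) := by
    intro y
    have h1 : ∑ i, w i * y i = ∑ j ∈ Finset.range n, W j * y (e j) := by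
      rw [← hAn, sumA (fun i => w i * y i) n le_rfl]
      apply Finset.sum_congr rfl
      intro j hj
      rw [hW]
      simp [Finset.mem_range.mp hj]
    rw [h1, abel_sum W (fun j => y (e j)) n]
    have hWn : W n = 0 := by simp [hW]
    rw [hWn, zero_mul, add_zero]
    apply Finset.sum_congr rfl
    intro k hk
    rw [sumA y (k+1) (Finset.mem_range.mp hk)]
  have hcoef : ∀ k ∈ Finset.range n, 0 ≤ W k - W (k+1) := by
    intro k hk
    have hk' := Finset.mem_range.mp hk
    rw [hW]
    by_cases h : k + 1 < n
    · simp only [hk', h, if_pos]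
      have := hsorted k (k+1) (by omega) h
      linarith
    · simp only [hk', if_pos, if_neg h]
      have := hw (e k)
      linarith
  obtain ⟨I, hIA, hIind, hIr⟩ := chain hne hexch A hmono h0 n
  obtain ⟨B, hB, hIB⟩ := hIind
  have hIcard : I.card = matRank Bs Finset.univ := by
    have := hIr n le_rfl
    rwa [hAn, Finset.inter_univ] at this
  have hIeqB : I = B := by
    apply Finset.eq_of_subset_of_card_le hIB
    rw [hIcard, matRank_univ hexch hB]
  subst hIeqB
  refine ⟨I, hB, ?_⟩
  rw [key x, key (chi I)]
  apply Finset.sum_le_sum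
  intro k hk
  have hk1 : k + 1 ≤ n := Finset.mem_range.mp hk
  apply mul_le_mul_of_nonneg_left _ (hcoef k hk)
  calc ∑ i ∈ A (k+1), x i ≤ (matRank Bs (A (k+1)) : ℝ) := hx2 _
    _ = ((I ∩ A (k+1)).card : ℝ) := by rw [hIr (k+1) hk1]
    _ = ((A (k+1) ∩ I).card : ℝ) := by rw [Finset.inter_comm]
    _ = ∑ i ∈ A (k+1), chi I i := (sum_chi I (A (k+1))).symm

lemma greedy (hne : Bs.Nonempty) (hexch : Hexch Bs) (w x : E → ℝ)
    (hx1 : ∑ i, x i = (matRank Bs Finset.univ : ℝ))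
    (hx2 : ∀ A : Finset E, ∑ i ∈ A, x i ≤ (matRank Bs A : ℝ)) :
    ∃ B ∈ Bs, ∑ i, w i * x i ≤ ∑ i, w i * chi B i := by
  classical
  rcases isEmpty_or_nonempty E with hE | hE
  · obtain ⟨B, hB⟩ := hne
    exact ⟨B, hB, by simp⟩
  set m : ℝ := (Finset.univ.image w).min' (by simp [Finset.univ_nonempty]) with hm
  have hmle : ∀ i, m ≤ w i := fun i =>
    Finset.min'_le _ _ (Finset.mem_image_of_mem w (Finset.mem_univ i))
  obtain ⟨B, hB, hle⟩ := greedyNN hne hexch (fun i => w i - m) x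
    (fun i => by have := hmle i; simp; linarith) hx2
  refine ⟨B, hB, ?_⟩
  have hchiB : ∑ i, chi B i = ((B.card : ℕ) : ℝ) := by
    rw [show ∑ i, chi B i = ∑ i ∈ Finset.univ, chi B i from rfl, sum_chi]
    simp [Finset.univ_inter]
  have hsum : ∑ i, x i = ((B.card : ℕ) : ℝ) := by
    rw [hx1, matRank_univ hexch hB]
  have e1 : ∑ i, w i * x i = ∑ i, (w i - m) * x i + m * ∑ i, x i := by
    rw [Finset.mul_sum, ← Finset.sum_add_distrib]
    apply Finset.sum_congr rfl
    intro i _; ring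
  have e2 : ∑ i, w i * chi B i = ∑ i, (w i - m) * chi B i + m * ∑ i, chi B i := by
    rw [Finset.mul_sum, ← Finset.sum_add_distrib]
    apply Finset.sum_congr rfl
    intro i _; ring
  rw [e1, e2, hsum, hchiB]
  linarith


lemma chi_eq (B : Finset E) : (∑ b ∈ B, Pi.single b (1:ℝ)) = chi B := by
  funext i
  simp [Finset.sum_apply, Finset.sum_pi_single, chi]

lemma chi_mem_P (hexch : Hexch Bs) {B : Finset E} (hB : B ∈ Bs) :
    (∑ i, chi B i) = (matRank Bs Finset.univ : ℝ) ∧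
      ∀ A : Finset E, (∑ i ∈ A, chi B i) ≤ (matRank Bs A : ℝ) := by
  constructor
  · rw [show (∑ i, chi B i) = ∑ i ∈ Finset.univ, chi B i from rfl, sum_chi,
      Finset.univ_inter, matRank_univ hexch hB]
  · intro A
    rw [sum_chi]
    have : (A ∩ B).card ≤ matRank Bs A :=
      card_le_matRank ⟨B, hB, Finset.inter_subset_right⟩ Finset.inter_subset_left
    exact_mod_cast this

lemma P_convex : Convex ℝ {x : E → ℝ | (∑ i, x i) = (matRank Bs Finset.univ : ℝ) ∧
    ∀ A : Finset E, (∑ i ∈ A, x i) ≤ (matRank Bs A : ℝ)} := by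
  rintro x ⟨hx1, hx2⟩ y ⟨hy1, hy2⟩ a b ha hb hab
  have hsum : ∀ A : Finset E, ∑ i ∈ A, (a • x + b • y) i = a * ∑ i ∈ A, x i + b * ∑ i ∈ A, y i := by
    intro A
    simp only [Pi.add_apply, Pi.smul_apply, smul_eq_mul]
    rw [Finset.sum_add_distrib, Finset.mul_sum, Finset.mul_sum]
  constructor
  · rw [show (∑ i, (a • x + b • y) i) = ∑ i ∈ Finset.univ, (a • x + b • y) i from rfl,
      hsum, hx1, hy1]
    nlinarith
  · intro A
    rw [hsum]
    have h1 := hx2 A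
    have h2 := hy2 A
    nlinarith

lemma box_mem (hexch : Hexch Bs) {x : E → ℝ}
    (hx : x ∈ convexHull ℝ {x : E → ℝ | ∃ B ∈ Bs, x = ∑ b ∈ B, Pi.single b 1}) :
    ∀ i, 0 ≤ x i ∧ x i ≤ 1 := by
  have : convexHull ℝ {x : E → ℝ | ∃ B ∈ Bs, x = ∑ b ∈ B, Pi.single b 1} ⊆
      {u : E → ℝ | ∀ i, 0 ≤ u i ∧ u i ≤ 1} := by
    apply convexHull_min
    · rintro u ⟨B, hB, rfl⟩ i
      rw [chi_eq]
      simp only [chi]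
      split <;> norm_num
    · rintro u hu v hv a b ha hb hab i
      obtain ⟨hu1, hu2⟩ := hu i
      obtain ⟨hv1, hv2⟩ := hv i
      simp only [Pi.add_apply, Pi.smul_apply, smul_eq_mul]
      constructor
      · nlinarith
      · nlinarith
  exact this hx

end MatPoly

open MatPoly

/-- The matroid polytope: the convex hull of the indicator vectors of the bases of a matroid
`M` equals `{x | ∑ x = r(E) and ∑_{i ∈ A} x i ≤ r(A) for all A}`, and every basis indicator
vector is an extreme point of this polytope. -/
theorem stmt7 {E : Type*} [Fintype E] [DecidableEq E]
    (Bs : Finset (Finset E)) (hne : Bs.Nonempty)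
    (hexch : ∀ B₁ ∈ Bs, ∀ B₂ ∈ Bs, ∀ a ∈ B₁ \ B₂, ∃ b ∈ B₂ \ B₁,
      insert b (B₁.erase a) ∈ Bs) :
    (convexHull ℝ {x : E → ℝ | ∃ B ∈ Bs, x = ∑ b ∈ B, Pi.single b 1} =
        {x : E → ℝ | (∑ i, x i) = (matRank Bs Finset.univ : ℝ) ∧
          ∀ A : Finset E, (∑ i ∈ A, x i) ≤ (matRank Bs A : ℝ)}) ∧
      ∀ B ∈ Bs,
        (∑ b ∈ B, Pi.single b (1 : ℝ)) ∈
          Set.extremePoints ℝ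
            (convexHull ℝ {x : E → ℝ | ∃ B ∈ Bs, x = ∑ b ∈ B, Pi.single b 1}) := by
  classical
  set S : Set (E → ℝ) := {x : E → ℝ | ∃ B ∈ Bs, x = ∑ b ∈ B, Pi.single b 1} with hS
  have hSfin : S.Finite := by
    have : S = ↑(Bs.image (fun B => ∑ b ∈ B, Pi.single b (1:ℝ))) := by
      ext x
      simp only [hS, Set.mem_setOf_eq, Finset.coe_image, Set.mem_image, Finset.mem_coe]
      constructor
      · rintro ⟨B, hB, rfl⟩; exact ⟨B, hB, rfl⟩
      · rintro ⟨B, hB, rfl⟩; exact ⟨B, hB, rfl⟩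
    rw [this]
    exact (Bs.image _).finite_toSet
  constructor
  · apply Set.Subset.antisymm
    · apply convexHull_min
      · rintro x ⟨B, hB, rfl⟩
        rw [chi_eq]
        exact chi_mem_P hexch hB
      · exact P_convex
    · intro x hx
      by_contra hxc
      obtain ⟨f, u, hfu, hfb⟩ := geometric_hahn_banach_point_closed
        (convex_convexHull ℝ S) (hSfin.isClosed_convexHull (𝕜 := ℝ)) hxc
      have hf : ∀ y : E → ℝ, f y = ∑ i, y i * f (Pi.single i 1) := by
        intro y
        have hy : y = ∑ i, Pi.single i (y i) := by
          funext j
          simp [Finset.sum_apply, Finset.sum_pi_single]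
        conv_lhs => rw [hy]
        rw [map_sum]
        apply Finset.sum_congr rfl
        intro i _
        have : Pi.single i (y i) = y i • (Pi.single i 1 : E → ℝ) := by
          funext j
          by_cases h : j = i <;> simp [Pi.single_apply, h]
        rw [this, map_smul, smul_eq_mul]
      obtain ⟨B, hB, hle⟩ := greedy hne hexch (fun i => -f (Pi.single i 1)) x hx.1 hx.2
      have e1 : ∑ i, (fun i => -f (Pi.single i 1)) i * x i = -f x := by
        rw [hf x, ← Finset.sum_neg_distrib]
        apply Finset.sum_congr rfl
        intro i _; ring
      have e2 : ∑ i, (fun i => -f (Pi.single i 1)) i * chi B i = -f (chi B) := by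
        rw [hf (chi B), ← Finset.sum_neg_distrib]
        apply Finset.sum_congr rfl
        intro i _; ring
      rw [e1, e2] at hle
      have hmem : chi B ∈ convexHull ℝ S := by
        apply subset_convexHull
        exact ⟨B, hB, (chi_eq B).symm⟩
      have := hfb _ hmem
      linarith
  · intro B hB
    constructor
    · apply subset_convexHull
      exact ⟨B, hB, rfl⟩
    · intro y hy z hz hseg
      obtain ⟨a, b, ha, hb, hab, habx⟩ := hseg
      have hbox_y := box_mem hexch hy
      have hbox_z := box_mem hexch hz
      have hcoord : ∀ i, y i = (∑ b ∈ B, Pi.single b (1:ℝ)) i ∧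
          z i = (∑ b ∈ B, Pi.single b (1:ℝ)) i := by
        intro i
        have hxi : a * y i + b * z i = (∑ b ∈ B, Pi.single b (1:ℝ)) i := by
          rw [← habx]; simp
        rw [chi_eq] at hxi ⊢
        obtain ⟨hy1, hy2⟩ := hbox_y i
        obtain ⟨hz1, hz2⟩ := hbox_z i
        simp only [chi] at hxi ⊢
        by_cases h : i ∈ B
        · rw [if_pos h] at hxi ⊢
          constructor
          · by_contra hne'
            have hlt : y i < 1 := lt_of_le_of_ne hy2 hne'
            nlinarith
          · by_contra hne'
            have hlt : z i < 1 := lt_of_le_of_ne hz2 hne'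
            nlinarith
        · rw [if_neg h] at hxi ⊢
          constructor <;> nlinarith
      funext i; exact (hcoord i).1
end

section
/- Let P be a finite partially ordered set. Then the set {x : P → ℝ | ∑_{i ∈ P} x(i) = 0 and ∑_{i ∈ A} x(i) ≤ 0 for every lower set A of P} equals the set of all finite nonnegative real linear combinations of the vectors e_i − e_j with j < i in P; moreover it also equals the set of nonnegative linear combinations of the vectors e_i − e_j where i covers j in P. -/
open Finset

universe u


lemma decomp_apply {P : Type*} [Fintype P] [DecidableEq P] (c : P × P → ℝ) (i : P) :
    (∑ p : P × P, c p • (Pi.single p.1 (1 : ℝ) - Pi.single p.2 1) : P → ℝ) i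
      = (∑ j, c (i, j)) - ∑ j, c (j, i) := by
  rw [Finset.sum_apply]
  have h : ∀ p : P × P, (c p • (Pi.single p.1 (1 : ℝ) - Pi.single p.2 1) : P → ℝ) i
      = (if i = p.1 then c p else 0) - (if i = p.2 then c p else 0) := by
    intro p
    simp [Pi.single_apply, mul_sub, mul_ite]
  simp only [h]
  rw [Finset.sum_sub_distrib]
  congr 1
  · rw [Fintype.sum_prod_type]
    calc ∑ a, ∑ b, (if i = a then c (a, b) else 0)
        = ∑ a, (if i = a then ∑ b, c (a, b) else 0) := by
          refine Finset.sum_congr rfl fun a _ => ?_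
          split <;> simp
      _ = ∑ b, c (i, b) := by rw [Finset.sum_ite_eq]; simp
  · rw [Fintype.sum_prod_type_right]
    calc ∑ b, ∑ a, (if i = b then c (a, b) else 0)
        = ∑ b, (if i = b then ∑ a, c (a, b) else 0) := by
          refine Finset.sum_congr rfl fun b _ => ?_
          split <;> simp
      _ = ∑ a, c (a, i) := by rw [Finset.sum_ite_eq]; simp


lemma decomp_mem_S {P : Type*} [Fintype P] [PartialOrder P] [DecidableEq P]
    (c : P × P → ℝ) (h0 : ∀ p, 0 ≤ c p) (hlt : ∀ p : P × P, ¬ p.2 < p.1 → c p = 0) :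
    (∑ i, (∑ p : P × P, c p • (Pi.single p.1 (1 : ℝ) - Pi.single p.2 1) : P → ℝ) i) = 0 ∧
    ∀ A : Finset P, IsLowerSet (A : Set P) →
      (∑ i ∈ A, (∑ p : P × P, c p • (Pi.single p.1 (1 : ℝ) - Pi.single p.2 1) : P → ℝ) i) ≤ 0 := by
  have key : ∀ A : Finset P,
      (∑ i ∈ A, (∑ p : P × P, c p • (Pi.single p.1 (1 : ℝ) - Pi.single p.2 1) : P → ℝ) i)
        = ∑ p : P × P, c p * ((if p.1 ∈ A then 1 else 0) - (if p.2 ∈ A then 1 else 0)) := by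
    intro A
    simp only [Finset.sum_apply]
    rw [Finset.sum_comm]
    refine Finset.sum_congr rfl fun p _ => ?_
    simp only [Pi.smul_apply, Pi.sub_apply, Pi.single_apply, smul_eq_mul]
    rw [← Finset.mul_sum, Finset.sum_sub_distrib]
    congr 2
    · rw [Finset.sum_ite_eq' A p.1 (fun _ => (1:ℝ))]
    · rw [Finset.sum_ite_eq' A p.2 (fun _ => (1:ℝ))]
  constructor
  · rw [show (Finset.univ : Finset P) = Finset.univ from rfl, key Finset.univ]
    simp
  · intro A hA
    rw [key A]
    refine Finset.sum_nonpos fun p _ => ?_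
    by_cases hc : c p = 0
    · simp [hc]
    · have hp : p.2 < p.1 := by by_contra h; exact hc (hlt p h)
      by_cases h1 : p.1 ∈ A
      · have h2 : p.2 ∈ A := hA hp.le h1
        simp [h1, h2]
      · by_cases h2 : p.2 ∈ A <;> simp [h1, h2] <;> exact h0 p


lemma lift_aux {P : Type*} [Fintype P] [PartialOrder P] [DecidableEq P] (s : Finset P)
    (hcov : ∀ a b : {i // i ∈ s}, a ⋖ b → (a : P) ⋖ (b : P))
    (c₀ : {i // i ∈ s} × {i // i ∈ s} → ℝ)
    (h0 : ∀ p, 0 ≤ c₀ p) (hc : ∀ p, ¬ p.2 ⋖ p.1 → c₀ p = 0) :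
    ∃ c : P × P → ℝ, (∀ p, 0 ≤ c p) ∧ (∀ p : P × P, ¬ p.2 ⋖ p.1 → c p = 0) ∧
      ∀ i : P,
        ((∑ j, c (i, j)) - ∑ j, c (j, i)) =
          (if hi : i ∈ s then (∑ q, c₀ (⟨i, hi⟩, q)) - ∑ q, c₀ (q, ⟨i, hi⟩) else 0) := by
  refine ⟨fun p => if h : p.1 ∈ s ∧ p.2 ∈ s then c₀ (⟨p.1, h.1⟩, ⟨p.2, h.2⟩) else 0, ?_, ?_, ?_⟩
  · intro p; dsimp only; split
    · exact h0 _
    · exact le_rfl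
  · intro p hp; dsimp only; split
    · refine hc _ fun hcv => hp (hcov _ _ hcv)
    · rfl
  · intro i
    by_cases hi : i ∈ s
    · rw [dif_pos hi]
      have h1 : (∑ j : P, (if h : i ∈ s ∧ j ∈ s then c₀ (⟨i, h.1⟩, ⟨j, h.2⟩) else 0))
          = ∑ q : {j // j ∈ s}, c₀ (⟨i, hi⟩, q) := by
        calc ∑ j : P, (if h : i ∈ s ∧ j ∈ s then c₀ (⟨i, h.1⟩, ⟨j, h.2⟩) else 0)
            = ∑ j ∈ s, (if h : i ∈ s ∧ j ∈ s then c₀ (⟨i, h.1⟩, ⟨j, h.2⟩) else 0) :=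
              (Finset.sum_subset (Finset.subset_univ s)
                (fun j _ hj => dif_neg (fun hh => hj hh.2))).symm
          _ = ∑ q : {j // j ∈ s}, (if h : i ∈ s ∧ (q : P) ∈ s then c₀ (⟨i, h.1⟩, ⟨q, h.2⟩) else 0) :=
              (Finset.sum_coe_sort s _).symm
          _ = ∑ q : {j // j ∈ s}, c₀ (⟨i, hi⟩, q) := by
              refine Finset.sum_congr rfl fun q _ => ?_
              rcases q with ⟨j, hj⟩
              rw [dif_pos ⟨hi, hj⟩]
      have h2 : (∑ j : P, (if h : j ∈ s ∧ i ∈ s then c₀ (⟨j, h.1⟩, ⟨i, h.2⟩) else 0))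
          = ∑ q : {j // j ∈ s}, c₀ (q, ⟨i, hi⟩) := by
        calc ∑ j : P, (if h : j ∈ s ∧ i ∈ s then c₀ (⟨j, h.1⟩, ⟨i, h.2⟩) else 0)
            = ∑ j ∈ s, (if h : j ∈ s ∧ i ∈ s then c₀ (⟨j, h.1⟩, ⟨i, h.2⟩) else 0) :=
              (Finset.sum_subset (Finset.subset_univ s)
                (fun j _ hj => dif_neg (fun hh => hj hh.1))).symm
          _ = ∑ q : {j // j ∈ s}, (if h : (q : P) ∈ s ∧ i ∈ s then c₀ (⟨q, h.1⟩, ⟨i, h.2⟩) else 0) :=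
              (Finset.sum_coe_sort s _).symm
          _ = ∑ q : {j // j ∈ s}, c₀ (q, ⟨i, hi⟩) := by
              refine Finset.sum_congr rfl fun q _ => ?_
              rcases q with ⟨j, hj⟩
              rw [dif_pos ⟨hj, hi⟩]
      rw [h1, h2]
    · rw [dif_neg hi]
      have h1 : ∀ j : P, (if h : i ∈ s ∧ j ∈ s then c₀ (⟨i, h.1⟩, ⟨j, h.2⟩) else 0) = 0 :=
        fun j => dif_neg (fun hh => hi hh.1)
      have h2 : ∀ j : P, (if h : j ∈ s ∧ i ∈ s then c₀ (⟨j, h.1⟩, ⟨i, h.2⟩) else 0) = 0 :=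
        fun j => dif_neg (fun hh => hi hh.2)
      simp only [h1, h2, Finset.sum_const_zero, sub_zero]

lemma split_lemma (n : ℕ)
    (IH : ∀ (Q : Type u) [Fintype Q] [PartialOrder Q] [DecidableEq Q] (y : Q → ℝ),
        Fintype.card Q ≤ n → (∑ i, y i) = 0 →
        (∀ B : Finset Q, IsLowerSet (B : Set Q) → (∑ i ∈ B, y i) ≤ 0) →
        ∃ c : Q × Q → ℝ, (∀ p, 0 ≤ c p) ∧ (∀ p : Q × Q, ¬ p.2 ⋖ p.1 → c p = 0) ∧
          y = ∑ p : Q × Q, c p • (Pi.single p.1 (1 : ℝ) - Pi.single p.2 1))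
    (P : Type u) [Fintype P] [PartialOrder P] [DecidableEq P]
    (hcard : Fintype.card P ≤ n + 1) (x : P → ℝ)
    (hsum : (∑ i, x i) = 0)
    (hlow : ∀ A : Finset P, IsLowerSet (A : Set P) → (∑ i ∈ A, x i) ≤ 0)
    (A : Finset P) (hA : IsLowerSet (A : Set P)) (hAne : A.Nonempty) (hAuniv : A ≠ univ)
    (hAt : (∑ i ∈ A, x i) = 0) :
    ∃ c : P × P → ℝ, (∀ p, 0 ≤ c p) ∧ (∀ p : P × P, ¬ p.2 ⋖ p.1 → c p = 0) ∧
      x = ∑ p : P × P, c p • (Pi.single p.1 (1 : ℝ) - Pi.single p.2 1) := by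
  -- cardinalities
  have hQcard : Fintype.card {i // i ∈ A} ≤ n := by
    have h1 : A.card < Fintype.card P := by
      rw [← Finset.card_univ]
      exact Finset.card_lt_card (Finset.ssubset_univ_iff.mpr hAuniv)
    rw [Fintype.card_coe]; omega
  have hRcard : Fintype.card {i // i ∈ Aᶜ} ≤ n := by
    have h1 : (Aᶜ).card < Fintype.card P := by
      rw [← Finset.card_univ]
      refine Finset.card_lt_card (Finset.ssubset_univ_iff.mpr ?_)
      obtain ⟨a, ha⟩ := hAne
      intro h
      have : a ∈ Aᶜ := h ▸ Finset.mem_univ a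
      exact (Finset.mem_compl.mp this) ha
    rw [Fintype.card_coe]; omega
  -- the Q side
  have hQsum : (∑ q : {i // i ∈ A}, x q) = 0 := by
    rw [Finset.sum_coe_sort A x]; exact hAt
  have hQlow : ∀ B : Finset {i // i ∈ A}, IsLowerSet (B : Set {i // i ∈ A}) →
      (∑ q ∈ B, x q) ≤ 0 := by
    intro B hB
    set B' : Finset P := B.map (Function.Embedding.subtype _) with hB'def
    have hB'low : IsLowerSet (B' : Set P) := by
      intro a b hba ha
      rw [Finset.mem_coe, Finset.mem_map] at ha
      obtain ⟨q, hqB, rfl⟩ := ha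
      have hba' : b ≤ (q : P) := hba
      have hbA : b ∈ A := hA hba' q.2
      have : (⟨b, hbA⟩ : {i // i ∈ A}) ∈ B := hB (Subtype.mk_le_mk.mpr hba') hqB
      rw [Finset.mem_coe, Finset.mem_map]
      exact ⟨⟨b, hbA⟩, this, rfl⟩
    have := hlow B' hB'low
    rwa [hB'def, Finset.sum_map] at this
  obtain ⟨cQ, hcQ0, hcQc, hcQd⟩ := IH {i // i ∈ A} (fun q => x q) hQcard hQsum hQlow
  -- the R side
  have hRsum : (∑ q : {i // i ∈ Aᶜ}, x q) = 0 := by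
    rw [Finset.sum_coe_sort (Aᶜ) x]
    have := Finset.sum_add_sum_compl A x
    rw [hAt, hsum] at this
    linarith
  have hRlow : ∀ B : Finset {i // i ∈ Aᶜ}, IsLowerSet (B : Set {i // i ∈ Aᶜ}) →
      (∑ q ∈ B, x q) ≤ 0 := by
    intro B hB
    set Bm : Finset P := B.map (Function.Embedding.subtype _) with hBmdef
    have hdisj : Disjoint A Bm := by
      rw [Finset.disjoint_left]
      intro a haA haB
      rw [hBmdef, Finset.mem_map] at haB
      obtain ⟨q, _, hqa⟩ := haB
      exact (Finset.mem_compl.mp (hqa ▸ q.2)) haA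
    have hB'low : IsLowerSet ((A ∪ Bm : Finset P) : Set P) := by
      intro a b hba ha
      rw [Finset.coe_union, Set.mem_union] at ha ⊢
      rcases ha with ha | ha
      · exact Or.inl (hA hba ha)
      · rw [Finset.mem_coe, hBmdef, Finset.mem_map] at ha
        obtain ⟨q, hqB, rfl⟩ := ha
        have hba' : b ≤ (q : P) := hba
        by_cases hbA : b ∈ A
        · exact Or.inl hbA
        · refine Or.inr ?_
          have : (⟨b, Finset.mem_compl.mpr hbA⟩ : {i // i ∈ Aᶜ}) ∈ B :=
            hB (Subtype.mk_le_mk.mpr hba') hqB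
          rw [Finset.mem_coe, hBmdef, Finset.mem_map]
          exact ⟨_, this, rfl⟩
    have := hlow (A ∪ Bm) hB'low
    rw [Finset.sum_union hdisj, hAt, zero_add, hBmdef, Finset.sum_map] at this
    exact this
  obtain ⟨cR, hcR0, hcRc, hcRd⟩ := IH {i // i ∈ Aᶜ} (fun q => x q) hRcard hRsum hRlow
  -- cover transfer
  have hcovQ : ∀ a b : {i // i ∈ A}, a ⋖ b → (a : P) ⋖ (b : P) := by
    intro a b h
    refine ⟨Subtype.coe_lt_coe.mpr h.1, ?_⟩
    intro k hak hkb
    have hkA : k ∈ A := hA hkb.le b.2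
    exact h.2 (show a < ⟨k, hkA⟩ from Subtype.mk_lt_mk.mpr hak)
      (show (⟨k, hkA⟩ : {i // i ∈ A}) < b from Subtype.mk_lt_mk.mpr hkb)
  have hcovR : ∀ a b : {i // i ∈ Aᶜ}, a ⋖ b → (a : P) ⋖ (b : P) := by
    intro a b h
    refine ⟨Subtype.coe_lt_coe.mpr h.1, ?_⟩
    intro k hak hkb
    have hkA : k ∈ Aᶜ := by
      rw [Finset.mem_compl]
      intro hk
      exact (Finset.mem_compl.mp a.2) (hA hak.le hk)
    exact h.2 (show a < ⟨k, hkA⟩ from Subtype.mk_lt_mk.mpr hak)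
      (show (⟨k, hkA⟩ : {i // i ∈ Aᶜ}) < b from Subtype.mk_lt_mk.mpr hkb)
  obtain ⟨c1, hc10, hc1c, hc1d⟩ := lift_aux A hcovQ cQ hcQ0 hcQc
  obtain ⟨c2, hc20, hc2c, hc2d⟩ := lift_aux (Aᶜ) hcovR cR hcR0 hcRc
  refine ⟨fun p => c1 p + c2 p, fun p => add_nonneg (hc10 p) (hc20 p),
    fun p hp => by dsimp only; rw [hc1c p hp, hc2c p hp, add_zero], ?_⟩
  funext i
  rw [decomp_apply]
  have hsplit : (∑ j, (c1 (i, j) + c2 (i, j))) - ∑ j, (c1 (j, i) + c2 (j, i))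
      = ((∑ j, c1 (i, j)) - ∑ j, c1 (j, i)) + ((∑ j, c2 (i, j)) - ∑ j, c2 (j, i)) := by
    rw [Finset.sum_add_distrib, Finset.sum_add_distrib]; ring
  rw [hsplit, hc1d i, hc2d i]
  by_cases hi : i ∈ A
  · rw [dif_pos hi, dif_neg (by simpa using hi)]
    have := congrFun hcQd ⟨i, hi⟩
    rw [decomp_apply] at this
    rw [← this, add_zero]
  · rw [dif_neg hi, dif_pos (Finset.mem_compl.mpr hi)]
    have := congrFun hcRd ⟨i, Finset.mem_compl.mpr hi⟩
    rw [decomp_apply] at this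
    rw [← this, zero_add]

lemma key_lemma : ∀ (n : ℕ) (P : Type u) [Fintype P] [PartialOrder P] [DecidableEq P]
    (x : P → ℝ), Fintype.card P ≤ n → (∑ i, x i) = 0 →
    (∀ A : Finset P, IsLowerSet (A : Set P) → (∑ i ∈ A, x i) ≤ 0) →
    ∃ c : P × P → ℝ, (∀ p, 0 ≤ c p) ∧ (∀ p : P × P, ¬ p.2 ⋖ p.1 → c p = 0) ∧
      x = ∑ p : P × P, c p • (Pi.single p.1 (1 : ℝ) - Pi.single p.2 1) := by
  intro n
  induction n with
  | zero =>
    intro P _ _ _ x hcard _ _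
    have hE : IsEmpty P := Fintype.card_eq_zero_iff.mp (Nat.le_zero.mp hcard)
    exact ⟨0, fun p => le_rfl, fun p _ => rfl, funext fun i => hE.elim i⟩
  | succ n IH =>
    intro P _ _ _ x hcard hsum hlow
    classical
    by_cases hx0 : x = 0
    · refine ⟨0, fun p => le_rfl, fun p _ => rfl, ?_⟩
      subst hx0
      funext i
      rw [decomp_apply]
      simp
    by_cases htight : ∃ A : Finset P, IsLowerSet (A : Set P) ∧ A.Nonempty ∧ A ≠ univ ∧
        (∑ i ∈ A, x i) = 0
    · obtain ⟨A, h1, h2, h3, h4⟩ := htight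
      exact split_lemma n IH P hcard x hsum hlow A h1 h2 h3 h4
    · push_neg at htight
      -- every proper nonempty lower set has strictly negative sum
      have hstrict : ∀ A : Finset P, IsLowerSet (A : Set P) → A.Nonempty → A ≠ univ →
          (∑ i ∈ A, x i) < 0 :=
        fun A ha hn hu => lt_of_le_of_ne (hlow A ha) (htight A ha hn hu)
      have hPne : Nonempty P := by
        by_contra h
        exact hx0 (funext fun i => absurd (Nonempty.intro i) h)
      obtain ⟨m, -, hm⟩ : ∃ m ∈ (univ : Finset P), ∀ y ∈ (univ : Finset P), ¬ m < y := by
        obtain ⟨m, hm⟩ := Finset.exists_maximal (s := (univ : Finset P)) univ_nonempty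
        exact ⟨m, hm.1, fun y hy hlt => absurd (hm.2 hy hlt.le) (not_le_of_gt hlt)⟩
      -- erase m is a lower set
      have hErlow : IsLowerSet ((univ.erase m : Finset P) : Set P) := by
        intro a b hba ha
        rw [Finset.coe_erase, Set.mem_diff] at ha ⊢
        refine ⟨Finset.mem_coe.mpr (mem_univ _), ?_⟩
        intro hb
        simp only [Set.mem_singleton_iff] at hb
        subst hb
        rcases eq_or_lt_of_le hba with h | h
        · exact ha.2 (by simp [h])
        · exact hm a (mem_univ a) h
      have hErne : (univ.erase m).Nonempty := by
        by_contra h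
        rw [Finset.not_nonempty_iff_eq_empty] at h
        have hall : ∀ k : P, k = m := by
          intro k
          by_contra hk
          have : k ∈ univ.erase m := Finset.mem_erase.mpr ⟨hk, mem_univ k⟩
          simp [h] at this
        have huniv : (univ : Finset P) = {m} := by
          ext k
          simp [hall k]
        have : x m = 0 := by
          rw [← hsum, huniv, Finset.sum_singleton]
        exact hx0 (funext fun k => by rw [hall k]; exact this)
      have hErprop : univ.erase m ≠ univ := by
        intro h
        have := Finset.notMem_erase m (univ : Finset P)
        rw [h] at this
        exact this (mem_univ m)
      have hxm : 0 < x m := by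
        have h := hstrict _ hErlow hErne hErprop
        have h2 : (∑ i ∈ univ.erase m, x i) = (∑ i, x i) - x m := by
          rw [Finset.sum_erase_eq_sub (mem_univ m)]
        rw [h2, hsum] at h
        linarith
      -- m is not minimal; find a cover j ⋖ m
      have hjex : ∃ k, k < m := by
        by_contra h
        push_neg at h
        have hmlow : IsLowerSet (({m} : Finset P) : Set P) := by
          intro a b hba ha
          simp only [Finset.coe_singleton, Set.mem_singleton_iff] at ha ⊢
          subst ha
          rcases eq_or_lt_of_le hba with h' | h'
          · exact h'
          · exact absurd h' (by exact fun hh => (h b hh).elim)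
        have := hlow {m} hmlow
        rw [Finset.sum_singleton] at this
        linarith
      obtain ⟨k0, hk0⟩ := hjex
      obtain ⟨j, hjmem, hjmax⟩ : ∃ j ∈ univ.filter (· < m), ∀ y ∈ univ.filter (· < m), ¬ j < y := by
        obtain ⟨j, hj⟩ := Finset.exists_maximal (s := univ.filter (· < m))
          ⟨k0, Finset.mem_filter.mpr ⟨mem_univ _, hk0⟩⟩
        exact ⟨j, hj.1, fun y hy hlt => absurd (hj.2 hy hlt.le) (not_le_of_gt hlt)⟩
      have hjm : j < m := (Finset.mem_filter.mp hjmem).2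
      have hcov : j ⋖ m :=
        ⟨hjm, fun k hjk hkm => hjmax k (Finset.mem_filter.mpr ⟨mem_univ _, hkm⟩) hjk⟩
      -- the minimum t
      set 𝒜 : Finset (Finset P) :=
        univ.filter (fun A => IsLowerSet (A : Set P) ∧ j ∈ A ∧ m ∉ A) with h𝒜
      set T : Finset ℝ := insert (x m) (𝒜.image (fun A => -∑ i ∈ A, x i)) with hT
      have hTne : T.Nonempty := ⟨_, Finset.mem_insert_self _ _⟩
      set t : ℝ := T.min' hTne with htdef
      have hbad : ∀ A ∈ 𝒜, IsLowerSet (A : Set P) ∧ A.Nonempty ∧ A ≠ univ := by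
        intro A hA'
        rw [h𝒜, Finset.mem_filter] at hA'
        obtain ⟨-, hl, hj', hm'⟩ := hA'
        exact ⟨hl, ⟨j, hj'⟩, fun h => hm' (h ▸ mem_univ m)⟩
      have htpos : 0 < t := by
        rw [htdef]
        rw [Finset.lt_min'_iff]
        intro y hy
        rw [hT, Finset.mem_insert] at hy
        rcases hy with rfl | hy
        · exact hxm
        · rw [Finset.mem_image] at hy
          obtain ⟨A, hA', rfl⟩ := hy
          obtain ⟨hl, hn, hu⟩ := hbad A hA'
          have := hstrict A hl hn hu
          linarith
      have htxm : t ≤ x m := Finset.min'_le _ _ (Finset.mem_insert_self _ _)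
      have htA : ∀ A : Finset P, IsLowerSet (A : Set P) → j ∈ A → m ∉ A →
          t ≤ -∑ i ∈ A, x i := by
        intro A h1 h2 h3
        refine Finset.min'_le _ _ ?_
        rw [hT]
        refine Finset.mem_insert_of_mem (Finset.mem_image_of_mem _ ?_)
        rw [h𝒜, Finset.mem_filter]
        exact ⟨mem_univ _, h1, h2, h3⟩
      -- x' and its properties
      set x' : P → ℝ := x - t • (Pi.single m 1 - Pi.single j 1) with hx'def
      have hsub : ∀ A : Finset P, (∑ i ∈ A, x' i)
          = (∑ i ∈ A, x i) - t * ((if m ∈ A then 1 else 0) - (if j ∈ A then 1 else 0)) := by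
        intro A
        rw [hx'def]
        simp only [Pi.sub_apply, Pi.smul_apply, Pi.single_apply, smul_eq_mul]
        rw [Finset.sum_sub_distrib, ← Finset.mul_sum, Finset.sum_sub_distrib,
          Finset.sum_ite_eq' A m (fun _ => (1:ℝ)), Finset.sum_ite_eq' A j (fun _ => (1:ℝ))]
      have hx'sum : (∑ i, x' i) = 0 := by
        rw [hsub univ, hsum]
        simp
      have hx'low : ∀ A : Finset P, IsLowerSet (A : Set P) → (∑ i ∈ A, x' i) ≤ 0 := by
        intro A hl
        rw [hsub A]
        by_cases hmA : m ∈ A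
        · have hjA : j ∈ A := hl hjm.le hmA
          simp only [hmA, hjA, if_true]
          have := hlow A hl
          linarith
        · by_cases hjA : j ∈ A
          · simp only [hmA, hjA, if_true, if_false]
            have := htA A hl hjA hmA
            linarith
          · simp only [hmA, hjA, if_false]
            have := hlow A hl
            linarith
      -- there is a tight proper nonempty lower set for x'
      have hmin : t ∈ T := Finset.min'_mem _ _
      have hx'tight : ∃ A : Finset P, IsLowerSet (A : Set P) ∧ A.Nonempty ∧ A ≠ univ ∧
          (∑ i ∈ A, x' i) = 0 := by
        rw [hT, Finset.mem_insert] at hmin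
        rcases hmin with hmin | hmin
        · refine ⟨univ.erase m, hErlow, hErne, hErprop, ?_⟩
          rw [hsub]
          have h2 : (∑ i ∈ univ.erase m, x i) = (∑ i, x i) - x m := by
            rw [Finset.sum_erase_eq_sub (mem_univ m)]
          rw [h2, hsum]
          have hmE : m ∉ univ.erase m := Finset.notMem_erase m univ
          have hjE : j ∈ univ.erase m := Finset.mem_erase.mpr ⟨hjm.ne, mem_univ j⟩
          simp only [hmE, hjE, if_true, if_false]
          rw [← hmin]
          ring
        · rw [Finset.mem_image] at hmin
          obtain ⟨A, hA', hAval⟩ := hmin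
          obtain ⟨hl, hn, hu⟩ := hbad A hA'
          rw [h𝒜, Finset.mem_filter] at hA'
          obtain ⟨-, -, hjA, hmA⟩ := hA'
          refine ⟨A, hl, hn, hu, ?_⟩
          rw [hsub]
          simp only [hmA, hjA, if_true, if_false]
          rw [← hAval]
          ring
      obtain ⟨A, hAl, hAn, hAu, hAt⟩ := hx'tight
      obtain ⟨c', hc'0, hc'c, hc'd⟩ :=
        split_lemma n IH P hcard x' hx'sum hx'low A hAl hAn hAu hAt
      refine ⟨fun p => c' p + (if p = (m, j) then t else 0), ?_, ?_, ?_⟩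
      · intro p
        dsimp only
        refine add_nonneg (hc'0 p) ?_
        split
        · exact htpos.le
        · exact le_rfl
      · intro p hp
        dsimp only
        rcases eq_or_ne p (m, j) with rfl | hne
        · exact absurd hcov hp
        · rw [hc'c p hp, if_neg hne, add_zero]
      · have hxeq : x = x' + t • (Pi.single m (1:ℝ) - Pi.single j 1) := by
          rw [hx'def, sub_add_cancel]
        rw [hxeq, hc'd]
        simp only [add_smul, ite_smul, zero_smul]
        rw [Finset.sum_add_distrib]
        congr 1
        rw [Finset.sum_ite_eq']
        simp

/-- The poset cone: for a finite poset `P`, the set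
`{x | ∑ x = 0 and ∑_{i ∈ A} x i ≤ 0 for every lower set A}` equals the set of nonnegative
linear combinations of the vectors `e_i − e_j` with `j < i`, and also equals the set of
nonnegative linear combinations of the vectors `e_i − e_j` where `i` covers `j`. -/
theorem stmt8 {P : Type*} [Fintype P] [PartialOrder P] [DecidableEq P] :
    ({x : P → ℝ | (∑ i, x i) = 0 ∧
        ∀ A : Finset P, IsLowerSet (A : Set P) → (∑ i ∈ A, x i) ≤ 0} =
      {x : P → ℝ | ∃ c : P × P → ℝ, (∀ p, 0 ≤ c p) ∧
        (∀ p : P × P, ¬ p.2 < p.1 → c p = 0) ∧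
        x = ∑ p : P × P, c p • (Pi.single p.1 (1 : ℝ) - Pi.single p.2 1)}) ∧
    ({x : P → ℝ | (∑ i, x i) = 0 ∧
        ∀ A : Finset P, IsLowerSet (A : Set P) → (∑ i ∈ A, x i) ≤ 0} =
      {x : P → ℝ | ∃ c : P × P → ℝ, (∀ p, 0 ≤ c p) ∧
        (∀ p : P × P, ¬ p.2 ⋖ p.1 → c p = 0) ∧
        x = ∑ p : P × P, c p • (Pi.single p.1 (1 : ℝ) - Pi.single p.2 1)}) := by
  constructor
  · ext x
    simp only [Set.mem_setOf_eq]
    constructor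
    · rintro ⟨h1, h2⟩
      obtain ⟨c, hc1, hc2, hc3⟩ := key_lemma (Fintype.card P) P x le_rfl h1 h2
      exact ⟨c, hc1, fun p hp => hc2 p (fun h => hp h.lt), hc3⟩
    · rintro ⟨c, hc1, hc2, rfl⟩
      exact decomp_mem_S c hc1 hc2
  · ext x
    simp only [Set.mem_setOf_eq]
    constructor
    · rintro ⟨h1, h2⟩
      exact key_lemma (Fintype.card P) P x le_rfl h1 h2
    · rintro ⟨c, hc1, hc2, rfl⟩
      exact decomp_mem_S c hc1 (fun p hp => hc2 p (fun h => hp h.lt))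
end

section
/- Let I be a finite set. A function f : Finset I → ℤ is relational (i.e. there exist a finite set J and a relation R ⊆ I × J with f(A) = |{j ∈ J : (a, j) ∈ R for some a ∈ A}| for all A ⊆ I) if and only if there exists a function y assigning a natural number to each nonempty subset of I such that f(A) = ∑_{K : K ∩ A ≠ ∅} y(K) for every A ⊆ I. -/
open Finset

/-- A function `f : Finset I → ℤ` is relational if and only if there is a function `y`
assigning a natural number to each (nonempty) subset of `I` such that
`f A = ∑_{K : K ∩ A ≠ ∅} y K` for every `A ⊆ I`. -/
theorem stmt11 {I : Type*} [Fintype I] [DecidableEq I] (f : Finset I → ℤ) :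
    (∃ (m : ℕ) (R : Finset (I × Fin m)), ∀ A : Finset I,
        f A = ((Finset.univ.filter fun j : Fin m => ∃ a ∈ A, (a, j) ∈ R).card : ℤ)) ↔
      (∃ y : Finset I → ℕ, ∀ A : Finset I,
        f A = ∑ K ∈ Finset.univ.filter fun K : Finset I => (K ∩ A).Nonempty, (y K : ℤ)) := by
  constructor
  · rintro ⟨m, R, hR⟩
    set fib : Fin m → Finset I := fun j => univ.filter (fun a => (a, j) ∈ R) with hfib
    refine ⟨fun K => (univ.filter fun j => fib j = K).card, fun A => ?_⟩
    rw [hR A]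
    have key : (univ.filter fun j : Fin m => ∃ a ∈ A, (a, j) ∈ R)
        = univ.filter (fun j => (fib j ∩ A).Nonempty) := by
      ext j
      simp only [mem_filter, mem_univ, true_and, hfib, Finset.Nonempty, mem_inter]
      tauto
    have hnat : (univ.filter fun j : Fin m => ∃ a ∈ A, (a, j) ∈ R).card
        = ∑ K ∈ univ.filter fun K : Finset I => (K ∩ A).Nonempty,
            (univ.filter fun j => fib j = K).card := by
      rw [key]
      rw [Finset.card_eq_sum_card_fiberwise
        (f := fib) (t := univ.filter fun K : Finset I => (K ∩ A).Nonempty)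
        (fun j hj => by simp at hj ⊢; exact hj)]
      refine Finset.sum_congr rfl (fun K hK => ?_)
      simp only [mem_filter, mem_univ, true_and] at hK
      congr 1
      ext j
      simp only [mem_filter, mem_univ, true_and, and_iff_right_iff_imp]
      intro h; rw [h]; exact hK
    rw [hnat]
    push_cast
    rfl
  · rintro ⟨y, hy⟩
    set m := ∑ K : Finset I, y K with hm
    have e : (Σ K : Finset I, Fin (y K)) ≃ Fin m :=
      (Fintype.equivFin _).trans (finCongr (by simp [hm]))
    refine ⟨m, univ.filter (fun p : I × Fin m => p.1 ∈ (e.symm p.2).1), fun A => ?_⟩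
    rw [hy A]
    have key : (univ.filter fun j : Fin m =>
        ∃ a ∈ A, (a, j) ∈ univ.filter (fun p : I × Fin m => p.1 ∈ (e.symm p.2).1))
        = univ.filter (fun j => ((e.symm j).1 ∩ A).Nonempty) := by
      ext j
      simp only [mem_filter, mem_univ, true_and, Finset.Nonempty, mem_inter]
      tauto
    have hcard : (univ.filter (fun j : Fin m => ((e.symm j).1 ∩ A).Nonempty)).card
        = (univ.filter (fun σ : Σ K : Finset I, Fin (y K) => (σ.1 ∩ A).Nonempty)).card := by
      apply Finset.card_bij (fun j _ => e.symm j)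
      · intro j hj; simp only [mem_filter, mem_univ, true_and] at hj ⊢; exact hj
      · intro a _ b _ h; exact e.symm.injective h
      · intro σ hσ
        refine ⟨e σ, ?_, by simp⟩
        simp only [mem_filter, mem_univ, true_and, Equiv.symm_apply_apply] at hσ ⊢
        exact hσ
    have hsig : (univ.filter (fun σ : Σ K : Finset I, Fin (y K) => (σ.1 ∩ A).Nonempty))
        = (univ.filter fun K : Finset I => (K ∩ A).Nonempty).sigma (fun K => univ) := by
      ext σ
      simp [Finset.mem_sigma]
    have hnat : (univ.filter fun j : Fin m =>
        ∃ a ∈ A, (a, j) ∈ univ.filter (fun p : I × Fin m => p.1 ∈ (e.symm p.2).1)).card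
        = ∑ K ∈ univ.filter fun K : Finset I => (K ∩ A).Nonempty, y K := by
      rw [key, hcard, hsig, Finset.card_sigma]
      simp
    rw [hnat]
    push_cast
    rfl
end

section
/- Let 𝕂 be a field of characteristic zero and a : ℕ → 𝕂 with a(0) = 1. Let A = ∑_{n ≥ 0} a(n) x^n/n! be the corresponding exponential formal power series and let B be a formal power series with A·B = 1; write b(n) = n!·(coefficient of x^n in B). Then for every n ≥ 1, b(n) = ∑_{λ ⊢ n} (−1)^{k(λ)} · (n!/∏_i λ_i!) · (k(λ)!/∏_{j ≥ 1} m_j(λ)!) · ∏_i a(λ_i), where the sum is over all integer partitions λ = (λ_1, …, λ_{k(λ)}) of n, k(λ) is the number of parts of λ, and m_j(λ) is the number of parts of λ equal to j. -/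
open Finset

section Aux

variable {K : Type*} [Field K] [CharZero K]

/-- The finset of multisets of positive integers summing to `m`
(i.e. the parts of partitions of `m`). -/
private def PF (m : ℕ) : Finset (Multiset ℕ) :=
  Finset.image Nat.Partition.parts (Finset.univ : Finset (Nat.Partition m))

private lemma mem_PF {m : ℕ} {M : Multiset ℕ} :
    M ∈ PF m ↔ (∀ i ∈ M, 0 < i) ∧ M.sum = m := by
  constructor
  · intro h
    rw [PF, Finset.mem_image] at h
    obtain ⟨p, -, rfl⟩ := h
    exact ⟨fun i hi => p.parts_pos hi, p.parts_sum⟩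
  · rintro ⟨h1, h2⟩
    exact Finset.mem_image.2 ⟨⟨M, fun {i} hi => h1 i hi, h2⟩, Finset.mem_univ _, rfl⟩

private lemma sum_partition (f : Multiset ℕ → K) (m : ℕ) :
    ∑ p : Nat.Partition m, f p.parts = ∑ M ∈ PF m, f M :=
  (Finset.sum_image (fun p _ q _ h => Nat.Partition.ext h)).symm

private lemma D_eq {M : Multiset ℕ} {m N : ℕ} (hpos : ∀ i ∈ M, 0 < i) (hsum : M.sum = m)
    (h : m ≤ N) :
    ∏ j ∈ Finset.range (N + 1), (M.count j).factorial
      = ∏ j ∈ Finset.range (m + 1), (M.count j).factorial := by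
  symm
  apply Finset.prod_subset
  · exact Finset.range_subset_range.2 (by omega)
  · intro j hj hj2
    have hjm : ¬ j ≤ m := fun hle => hj2 (Finset.mem_range.2 (by omega))
    have : j ∉ M := fun hm => hjm (by
      have := Multiset.single_le_sum (fun x _ => Nat.zero_le x) j hm
      omega)
    simp [Multiset.count_eq_zero.2 this]

/-- The normalized partition sum `g a m = ∑_{λ ⊢ m} (-1)^{k} k!/∏ mⱼ! ∏ a_{λᵢ}/λᵢ!`. -/
private noncomputable def gg (a : ℕ → K) (m : ℕ) : K :=
  ∑ M ∈ PF m, (-1 : K) ^ (Multiset.card M) *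
    (((Multiset.card M).factorial : K) /
      ((∏ j ∈ Finset.range (m + 1), (M.count j).factorial : ℕ) : K)) *
    (M.map fun i => a i / (i.factorial : K)).prod

private lemma gg_zero (a : ℕ → K) : gg a 0 = 1 := by
  have : PF 0 = {0} := by
    ext M
    rw [mem_PF, Finset.mem_singleton]
    constructor
    · rintro ⟨h1, h2⟩
      exact Multiset.eq_zero_of_forall_notMem fun x hx =>
        (h1 x hx).ne' (Multiset.sum_eq_zero_iff.1 h2 x hx)
    · rintro rfl; exact ⟨fun i hi => absurd hi (Multiset.notMem_zero i), rfl⟩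
  rw [gg, this]
  simp

private lemma gg_rec (a : ℕ → K) {n : ℕ} (hn : 1 ≤ n) :
    ∑ i ∈ Finset.Icc 1 n, (a i / (i.factorial : K)) * gg a (n - i) = - gg a n := by
  -- Normalize all the denominators to products over `range (n+1)`.
  have hL : ∀ i ∈ Finset.Icc 1 n,
      (a i / (i.factorial : K)) * gg a (n - i)
        = ∑ M ∈ PF (n - i), (a i / (i.factorial : K)) *
            ((-1 : K) ^ (Multiset.card M) *
              (((Multiset.card M).factorial : K) /
                ((∏ j ∈ Finset.range (n + 1), (M.count j).factorial : ℕ) : K)) *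
              (M.map fun k => a k / (k.factorial : K)).prod) := by
    intro i hi
    rw [gg, Finset.mul_sum]
    refine Finset.sum_congr rfl fun M hM => ?_
    rw [mem_PF] at hM
    rw [show (∏ j ∈ Finset.range (n - i + 1), (M.count j).factorial)
        = ∏ j ∈ Finset.range (n + 1), (M.count j).factorial from
      (D_eq hM.1 hM.2 (by omega)).symm]
  rw [Finset.sum_congr rfl hL]
  rw [Finset.sum_sigma']
  have hR : - gg a n = ∑ y ∈ (PF n).sigma (fun M => M.toFinset),
      ((y.1.count y.2 : K)) *
        (-((-1 : K) ^ (Multiset.card y.1) *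
          (((Multiset.card y.1 - 1).factorial : K) /
            ((∏ j ∈ Finset.range (n + 1), (y.1.count j).factorial : ℕ) : K)) *
          (y.1.map fun k => a k / (k.factorial : K)).prod)) := by
    rw [Finset.sum_sigma]
    dsimp only
    rw [gg, ← Finset.sum_neg_distrib]
    refine Finset.sum_congr rfl fun M hM => ?_
    rw [mem_PF] at hM
    have hM0 : M ≠ 0 := by rintro rfl; simp at hM; omega
    have hcard : 1 ≤ Multiset.card M := Multiset.card_pos.2 hM0
    simp only [mul_neg]
    rw [Finset.sum_neg_distrib]
    refine neg_inj.2 ?_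
    rw [← Finset.sum_mul]
    have hsum : (∑ i ∈ M.toFinset, (M.count i : K)) = (Multiset.card M : K) := by
      rw [← Nat.cast_sum]
      norm_cast
      exact Multiset.toFinset_sum_count_eq M
    rw [hsum]
    have hfac : (Multiset.card M : K) * ((Multiset.card M - 1).factorial : K)
        = ((Multiset.card M).factorial : K) := by
      rw [← Nat.cast_mul]
      congr 1
      exact Nat.mul_factorial_pred (by omega)
    rw [← hfac]
    ring
  rw [hR]
  refine Finset.sum_nbij' (fun x => ⟨x.1 ::ₘ x.2, x.1⟩)
    (fun y => ⟨y.2, y.1.erase y.2⟩) ?_ ?_ ?_ ?_ ?_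
  · rintro ⟨i, M⟩ hx
    rw [Finset.mem_sigma, Finset.mem_Icc, mem_PF] at hx
    dsimp only at hx ⊢
    obtain ⟨⟨hi1, hi2⟩, hM1, hM2⟩ := hx
    rw [Finset.mem_sigma, mem_PF]
    dsimp only
    refine ⟨⟨?_, ?_⟩, ?_⟩
    · intro j hj
      rcases Multiset.mem_cons.1 hj with rfl | hj
      · omega
      · exact hM1 j hj
    · rw [Multiset.sum_cons, hM2]; omega
    · simp
  · rintro ⟨M, i⟩ hy
    rw [Finset.mem_sigma, mem_PF] at hy
    dsimp only at hy ⊢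
    obtain ⟨⟨hM1, hM2⟩, hi⟩ := hy
    rw [Multiset.mem_toFinset] at hi
    have hile : i ≤ n := by
      have := Multiset.single_le_sum (fun x _ => Nat.zero_le x) i hi
      omega
    rw [Finset.mem_sigma, Finset.mem_Icc, mem_PF]
    dsimp only
    refine ⟨⟨hM1 i hi, hile⟩, fun j hj => hM1 j (Multiset.mem_of_mem_erase hj), ?_⟩
    have hce : (i ::ₘ M.erase i).sum = M.sum := congrArg Multiset.sum (Multiset.cons_erase hi)
    rw [Multiset.sum_cons] at hce
    omega
  · rintro ⟨i, M⟩ hx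
    simp [Multiset.erase_cons_head]
  · rintro ⟨M, i⟩ hy
    rw [Finset.mem_sigma] at hy
    have hi : i ∈ M := Multiset.mem_toFinset.1 hy.2
    have hce : i ::ₘ M.erase i = M := Multiset.cons_erase hi
    exact Sigma.ext (by simp [hce]) (by simp)
  · rintro ⟨i, M⟩ hx
    rw [Finset.mem_sigma, Finset.mem_Icc, mem_PF] at hx
    dsimp only at hx ⊢
    obtain ⟨⟨hi1, hi2⟩, hM1, hM2⟩ := hx
    -- identify the pieces
    have hcount : (i ::ₘ M).count i = M.count i + 1 := by
      rw [Multiset.count_cons_self]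
    have hcard : Multiset.card (i ::ₘ M) = Multiset.card M + 1 := by simp
    have hprod : (∏ j ∈ Finset.range (n + 1), ((i ::ₘ M).count j).factorial)
        = (M.count i + 1) * ∏ j ∈ Finset.range (n + 1), (M.count j).factorial := by
      have hmem : i ∈ Finset.range (n + 1) := Finset.mem_range.2 (by omega)
      rw [← Finset.mul_prod_erase _ _ hmem, ← Finset.mul_prod_erase _
        (fun j => (M.count j).factorial) hmem, hcount, Nat.factorial_succ, mul_assoc]
      congr 1
      · congr 1
        refine Finset.prod_congr rfl fun j hj => ?_
        rw [Multiset.count_cons_of_ne (Finset.ne_of_mem_erase hj)]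
    have hmap : ((i ::ₘ M).map fun k => a k / (k.factorial : K)).prod
        = (a i / (i.factorial : K)) * (M.map fun k => a k / (k.factorial : K)).prod := by
      rw [Multiset.map_cons, Multiset.prod_cons]
    rw [hcount, hcard, hmap, hprod]
    have hDne : ((∏ j ∈ Finset.range (n + 1), (M.count j).factorial : ℕ) : K) ≠ 0 := by
      have : (0:ℕ) < ∏ j ∈ Finset.range (n + 1), (M.count j).factorial :=
        Finset.prod_pos fun j _ => Nat.factorial_pos _
      exact Nat.cast_ne_zero.2 this.ne'
    have hqne : ((M.count i : K) + 1) ≠ 0 := by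
      have : ((M.count i + 1 : ℕ) : K) ≠ 0 := Nat.cast_ne_zero.2 (by omega)
      push_cast at this
      exact this
    simp only [Nat.add_sub_cancel, Nat.cast_mul, Nat.cast_add, Nat.cast_one]
    rw [pow_succ]
    have hkey : ((M.count i : K) + 1) *
        (((Multiset.card M).factorial : K) /
          (((M.count i : K) + 1) *
            ((∏ j ∈ Finset.range (n + 1), (M.count j).factorial : ℕ) : K)))
        = ((Multiset.card M).factorial : K) /
          ((∏ j ∈ Finset.range (n + 1), (M.count j).factorial : ℕ) : K) := by
      rw [← mul_div_assoc, mul_div_mul_left _ _ hqne]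
    linear_combination (-((-1 : K) ^ (Multiset.card M) * (a i / (i.factorial : K)) *
      (M.map fun k => a k / (k.factorial : K)).prod)) * hkey

private lemma gg_rec2 (a : ℕ → K) (ha : a 0 = 1) {m : ℕ} (hm : 1 ≤ m) :
    ∑ i ∈ Finset.range (m + 1), (a i / (i.factorial : K)) * gg a (m - i) = 0 := by
  have h := gg_rec a hm
  rw [show Finset.Icc 1 m = Finset.Ico 1 (m + 1) from by rw [Finset.Ico_add_one_right_eq_Icc],
    Finset.sum_Ico_eq_sum_range] at h
  simp only [Nat.add_sub_cancel] at h
  rw [Finset.sum_range_succ']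
  have he : ∑ i ∈ Finset.range m, (a (i + 1) / ((i + 1).factorial : K)) * gg a (m - (i + 1))
      = ∑ i ∈ Finset.range m, (a (1 + i) / ((1 + i).factorial : K)) * gg a (m - (1 + i)) :=
    Finset.sum_congr rfl fun i _ => by rw [Nat.add_comm]
  rw [he, h]
  simp [ha]

end Aux

/-- Multiplicative inversion of exponential power series: if `A(x) = ∑ a_n x^n/n!` with
`a_0 = 1` and `A·B = 1`, then the coefficients `b_n = n!·[x^n]B` are given by the sum over
integer partitions `λ ⊢ n` of `(−1)^{k(λ)} · n!/∏ λᵢ! · k(λ)!/∏ mⱼ(λ)! · ∏ a_{λᵢ}`. -/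
theorem stmt12 {K : Type*} [Field K] [CharZero K]
    (a : ℕ → K) (ha : a 0 = 1)
    (B : PowerSeries K)
    (hAB : (PowerSeries.mk fun n => a n / (n.factorial : K)) * B = 1)
    (n : ℕ) (hn : 1 ≤ n) :
    (n.factorial : K) * PowerSeries.coeff n B =
      ∑ p : Nat.Partition n,
        (-1 : K) ^ p.parts.card *
          ((n.factorial : K) / (((p.parts.map Nat.factorial).prod : ℕ) : K)) *
          (((p.parts.card.factorial : ℕ) : K) /
            (((∏ j ∈ Finset.range (n + 1), (p.parts.count j).factorial : ℕ) : K))) *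
          (p.parts.map a).prod := by
  have h0 : PowerSeries.coeff 0 B = 1 := by
    have h := congrArg (PowerSeries.constantCoeff) hAB
    rw [map_mul, map_one] at h
    simp only [PowerSeries.constantCoeff_mk, ha, Nat.factorial_zero, Nat.cast_one, div_one,
      one_mul] at h
    rw [PowerSeries.coeff_zero_eq_constantCoeff]
    exact h
  have hrec : ∀ m : ℕ, 1 ≤ m → ∑ i ∈ Finset.range (m + 1),
      (a i / (i.factorial : K)) * PowerSeries.coeff (m - i) B = 0 := by
    intro m hm
    have h := congrArg (PowerSeries.coeff m) hAB
    rw [PowerSeries.coeff_mul, Finset.Nat.sum_antidiagonal_eq_sum_range_succ_mk] at h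
    simp only [PowerSeries.coeff_mk] at h
    rw [h]
    rw [PowerSeries.coeff_one, if_neg (by omega)]
  have key : ∀ m : ℕ, PowerSeries.coeff m B = gg a m := by
    intro m
    induction m using Nat.strong_induction_on with
    | _ m ih =>
      match m with
      | 0 => rw [h0, gg_zero a]
      | (m + 1) =>
        have h1 := hrec (m + 1) (by omega)
        have h2 := gg_rec2 a ha (show 1 ≤ m + 1 by omega)
        rw [Finset.sum_range_succ'] at h1 h2
        simp only [ha, Nat.sub_zero, Nat.factorial_zero, Nat.cast_one, div_one, one_mul,
          Nat.succ_sub_succ] at h1 h2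
        have hs : ∑ i ∈ Finset.range (m + 1),
              (a (i + 1) / ((i + 1).factorial : K)) * PowerSeries.coeff (m - i) B
            = ∑ i ∈ Finset.range (m + 1),
              (a (i + 1) / ((i + 1).factorial : K)) * gg a (m - i) :=
          Finset.sum_congr rfl fun i _ => by rw [ih (m - i) (by omega)]
        linear_combination h1 - h2 - hs
  rw [key n]
  rw [show (∑ p : Nat.Partition n,
        (-1 : K) ^ p.parts.card *
          ((n.factorial : K) / (((p.parts.map Nat.factorial).prod : ℕ) : K)) *
          (((p.parts.card.factorial : ℕ) : K) /
            (((∏ j ∈ Finset.range (n + 1), (p.parts.count j).factorial : ℕ) : K))) *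
          (p.parts.map a).prod)
      = ∑ M ∈ PF n,
        (-1 : K) ^ (Multiset.card M) *
          ((n.factorial : K) / (((M.map Nat.factorial).prod : ℕ) : K)) *
          (((Multiset.card M).factorial : K) /
            (((∏ j ∈ Finset.range (n + 1), (M.count j).factorial : ℕ) : K))) *
          (M.map a).prod from sum_partition (fun M =>
        (-1 : K) ^ (Multiset.card M) *
          ((n.factorial : K) / (((M.map Nat.factorial).prod : ℕ) : K)) *
          (((Multiset.card M).factorial : K) /
            (((∏ j ∈ Finset.range (n + 1), (M.count j).factorial : ℕ) : K))) *
          (M.map a).prod) n]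
  rw [gg, Finset.mul_sum]
  refine Finset.sum_congr rfl fun M hM => ?_
  have hmap : (M.map fun i => a i / (i.factorial : K)).prod
      = (M.map a).prod / (((M.map Nat.factorial).prod : ℕ) : K) := by
    rw [Multiset.prod_map_div]
    congr 1
    rw [Nat.cast_multiset_prod, Multiset.map_map]
    rfl
  rw [hmap]
  ring
end

section
/- Let 𝕂 be a field of characteristic zero and c : ℕ → 𝕂 with c(0) = 1. Let C = ∑_{n ≥ 1} c(n−1) x^n and let D = ∑_{n ≥ 1} d(n−1) x^n be a formal power series with zero constant term such that the substitution of D into C equals x (i.e. C(D(x)) = x). Then for every n ≥ 1, d(n) = ∑_{λ ⊢ n} (−1)^{k(λ)} · (n + k(λ))! / ((n+1)! · ∏_{j ≥ 1} m_j(λ)!) · ∏_i c(λ_i), where the sum is over all integer partitions λ of n, k(λ) is the number of parts of λ, λ_i are its parts, and m_j(λ) is the number of parts equal to j. -/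
open Finset

namespace Stmt13Aux

open PowerSeries

set_option linter.unusedSectionVars false

variable {K : Type*} [Field K] [CharZero K]

lemma coeff_eq_of_dvd {f g : K⟦X⟧} {N j : ℕ} (h : (X : K⟦X⟧) ^ N ∣ f - g) (hj : j < N) :
    PowerSeries.coeff j f = PowerSeries.coeff j g := by
  have := (X_pow_dvd_iff.mp h) j hj
  rw [map_sub, sub_eq_zero] at this
  exact this

lemma coeff_pow_eq_zero {f : K⟦X⟧} (hf : constantCoeff f = 0) {j k : ℕ} (hjk : j < k) :
    PowerSeries.coeff j (f ^ k) = 0 := by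
  have h1 : (X : K⟦X⟧) ^ k ∣ f ^ k := pow_dvd_pow_of_dvd (X_dvd_iff.mpr hf) k
  exact X_pow_dvd_iff.mp h1 j hjk

lemma dvd_pow_sub_pow' {f g : K⟦X⟧} {N : ℕ} (h : (X : K⟦X⟧) ^ N ∣ f - g) (k : ℕ) :
    (X : K⟦X⟧) ^ N ∣ f ^ k - g ^ k :=
  h.trans (sub_dvd_pow_sub_pow f g k)

lemma dvd_pow_sub_pow_sharp {f g : K⟦X⟧} (hf : constantCoeff f = 0)
    (hg : constantCoeff g = 0) {N k : ℕ} (h : (X : K⟦X⟧) ^ N ∣ f - g) (hk : 2 ≤ k) :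
    (X : K⟦X⟧) ^ (N + 1) ∣ f ^ k - g ^ k := by
  rw [← geom_sum₂_mul]
  rw [pow_succ, mul_comm ((X : K⟦X⟧) ^ N) X]
  refine mul_dvd_mul ?_ h
  refine Finset.dvd_sum ?_
  intro i hi
  rcases Nat.eq_zero_or_pos i with hi0 | hi1
  · subst hi0
    simp only [pow_zero, one_mul]
    exact dvd_pow (X_dvd_iff.mpr hg) (by omega)
  · exact dvd_mul_of_dvd_left (dvd_pow (X_dvd_iff.mpr hf) (by omega)) _

/-- Injectivity of composition with `C` on the left. -/
lemma comp_inj {C g h : K⟦X⟧} (hC1 : PowerSeries.coeff 1 C = 1)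
    (hg : constantCoeff g = 0) (hh : constantCoeff h = 0)
    (H : ∀ m : ℕ, ∑ k ∈ range (m + 1), PowerSeries.coeff k C * PowerSeries.coeff m (g ^ k)
      = ∑ k ∈ range (m + 1), PowerSeries.coeff k C * PowerSeries.coeff m (h ^ k)) :
    g = h := by
  ext m
  induction m using Nat.strong_induction_on with
  | _ m IH =>
  rcases Nat.eq_zero_or_pos m with rfl | hm
  · simp only [coeff_zero_eq_constantCoeff_apply, hg, hh]
  · have hdvd : (X : K⟦X⟧) ^ m ∣ g - h := by
      rw [X_pow_dvd_iff]
      intro i hi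
      rw [map_sub, sub_eq_zero]
      exact IH i hi
    have hterm : ∀ k ∈ range (m + 1), k ≠ 1 →
        PowerSeries.coeff k C * PowerSeries.coeff m (g ^ k)
        = PowerSeries.coeff k C * PowerSeries.coeff m (h ^ k) := by
      intro k _ hk1
      rcases Nat.eq_zero_or_pos k with rfl | hk0
      · simp
      · have hk2 : 2 ≤ k := by omega
        have := dvd_pow_sub_pow_sharp hg hh hdvd hk2
        rw [coeff_eq_of_dvd this (by omega)]
    have h1mem : 1 ∈ range (m + 1) := by
      simp [Finset.mem_range]; omega
    have H1 := H m
    rw [← Finset.add_sum_erase _ _ h1mem, ← Finset.add_sum_erase _ _ h1mem] at H1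
    have hsum : ∑ k ∈ (range (m + 1)).erase 1,
        PowerSeries.coeff k C * PowerSeries.coeff m (g ^ k)
        = ∑ k ∈ (range (m + 1)).erase 1,
        PowerSeries.coeff k C * PowerSeries.coeff m (h ^ k) := by
      refine Finset.sum_congr rfl ?_
      intro k hk
      exact hterm k (Finset.mem_of_mem_erase hk) (Finset.ne_of_mem_erase hk)
    rw [hsum] at H1
    have H2 := add_right_cancel H1
    rw [hC1, one_mul, one_mul, pow_one, pow_one] at H2
    exact H2


theorem lagrange {A D : K⟦X⟧} (hA : constantCoeff A = 1) (hD : constantCoeff D = 0)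
    (h : ∀ m : ℕ, ∑ k ∈ range (m + 1),
        PowerSeries.coeff k (X * A) * PowerSeries.coeff m (D ^ k)
        = PowerSeries.coeff m X)
    {n : ℕ} (hn : 1 ≤ n) :
    ((n : K) + 1) * PowerSeries.coeff (n + 1) D
      = PowerSeries.coeff n (A⁻¹ ^ (n + 1)) := by
  have hAne : constantCoeff A ≠ 0 := by rw [hA]; exact one_ne_zero
  have hABone : A * A⁻¹ = 1 := PowerSeries.mul_inv_cancel A hAne
  set C : K⟦X⟧ := X * A with hCdef
  have hCc : constantCoeff C = 0 := by
    rw [hCdef, ← coeff_zero_eq_constantCoeff_apply]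
    simp
  have hC1 : PowerSeries.coeff 1 C = 1 := by
    rw [hCdef, show (1:ℕ) = 0 + 1 from rfl, coeff_succ_X_mul,
      coeff_zero_eq_constantCoeff_apply, hA]
  set E : K⟦X⟧ := PowerSeries.mk
      (fun i => ∑ m ∈ range (i + 1), PowerSeries.coeff m D * PowerSeries.coeff i (C ^ m))
    with hEdef
  set P : ℕ → K⟦X⟧ := fun N => ∑ m ∈ range (N + 1), PowerSeries.coeff m D • C ^ m with hPdef
  clear_value C E P
  have hE0 : constantCoeff E = 0 := by
    rw [← coeff_zero_eq_constantCoeff_apply, hEdef, coeff_mk]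
    simp [hD]
  have hEP : ∀ N : ℕ, (X : K⟦X⟧) ^ (N + 1) ∣ E - P N := by
    intro N
    rw [X_pow_dvd_iff]
    intro i hi
    rw [map_sub, sub_eq_zero, hEdef, coeff_mk, hPdef]
    rw [map_sum]
    simp only [coeff_smul, smul_eq_mul]
    refine Finset.sum_subset (Finset.range_subset_range.mpr (by omega)) ?_
    intro m hm hm2
    rw [coeff_pow_eq_zero hCc (by simp only [Finset.mem_range] at hm2 ⊢; omega), mul_zero]
  have hEpow : ∀ N k : ℕ, PowerSeries.coeff N (E ^ k) = PowerSeries.coeff N (P N ^ k) :=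
    fun N k => coeff_eq_of_dvd (dvd_pow_sub_pow' (hEP N) k) (Nat.lt_succ_self N)
  have L1 : ∀ (G : K⟦X⟧) (N : ℕ), PowerSeries.coeff N (E * G)
      = ∑ m ∈ range (N + 1), PowerSeries.coeff m D * PowerSeries.coeff N (C ^ m * G) := by
    intro G N
    have h1 : PowerSeries.coeff N (E * G) = PowerSeries.coeff N (P N * G) := by
      refine coeff_eq_of_dvd ?_ (Nat.lt_succ_self N)
      have h2 : E * G - P N * G = (E - P N) * G := by ring
      rw [h2]
      exact Dvd.dvd.mul_right (hEP N) G
    rw [h1, hPdef, Finset.sum_mul, map_sum]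
    refine Finset.sum_congr rfl ?_
    intro m _
    rw [smul_mul_assoc, coeff_smul, smul_eq_mul]
  have KEY1 : ∀ j : ℕ, ∑ k ∈ range (j + 1),
      PowerSeries.coeff k C * PowerSeries.coeff j (E ^ k) = PowerSeries.coeff j C := by
    intro j
    set Qp : Polynomial K := ∑ m ∈ range (j + 1),
        Polynomial.C (PowerSeries.coeff m D) * Polynomial.X ^ m with hQp
    set Cp : Polynomial K := ∑ k ∈ range (j + 1),
        Polynomial.C (PowerSeries.coeff k C) * Polynomial.X ^ k with hCp
    set W : Polynomial K := Cp.comp Qp with hWdef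
    have hQae : Polynomial.aeval C Qp = P j := by
      rw [hQp, map_sum, hPdef]
      refine Finset.sum_congr rfl ?_
      intro m _
      rw [map_mul, Polynomial.aeval_C, map_pow, Polynomial.aeval_X, Algebra.smul_def]
    have hWsum : W = ∑ k ∈ range (j + 1), Polynomial.C (PowerSeries.coeff k C) * Qp ^ k := by
      rw [hWdef, hCp, Polynomial.comp, Polynomial.eval₂_finset_sum]
      refine Finset.sum_congr rfl ?_
      intro k _
      rw [Polynomial.eval₂_mul, Polynomial.eval₂_C, Polynomial.eval₂_X_pow]
    have hQcoeff : ∀ i' : ℕ, i' ≤ j → Qp.coeff i' = PowerSeries.coeff i' D := by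
      intro i' hi'
      rw [hQp, Polynomial.finset_sum_coeff]
      simp only [Polynomial.coeff_C_mul, Polynomial.coeff_X_pow]
      rw [Finset.sum_eq_single_of_mem i' (Finset.mem_range.mpr (by omega))]
      · rw [if_pos rfl, mul_one]
      · intro b _ hb
        rw [if_neg (Ne.symm hb), mul_zero]
    have hdvdQ : (X : K⟦X⟧) ^ (j + 1) ∣ D - (Qp : K⟦X⟧) := by
      rw [X_pow_dvd_iff]
      intro i hi
      rw [map_sub, sub_eq_zero, Polynomial.coeff_coe, hQcoeff i (by omega)]
    have hQD : ∀ i k : ℕ, i ≤ j → (Qp ^ k).coeff i = PowerSeries.coeff i (D ^ k) := by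
      intro i k hij
      rw [← Polynomial.coeff_coe, Polynomial.coe_pow]
      exact (coeff_eq_of_dvd (dvd_pow_sub_pow' hdvdQ k) (by omega)).symm
    have hW : ∀ i : ℕ, i ≤ j → W.coeff i = if i = 1 then 1 else 0 := by
      intro i hij
      rw [hWsum, Polynomial.finset_sum_coeff]
      simp only [Polynomial.coeff_C_mul]
      rw [Finset.sum_congr rfl (fun k _ => by rw [hQD i k hij])]
      have hsub : ∑ k ∈ range (j + 1),
          PowerSeries.coeff k C * PowerSeries.coeff i (D ^ k)
          = ∑ k ∈ range (i + 1), PowerSeries.coeff k C * PowerSeries.coeff i (D ^ k) := by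
        symm
        refine Finset.sum_subset (Finset.range_subset_range.mpr (by omega)) ?_
        intro k hk hk2
        rw [coeff_pow_eq_zero hD (by simp only [Finset.mem_range] at hk2 ⊢; omega), mul_zero]
      rw [hsub, h i, PowerSeries.coeff_X]
    have key2 : ∑ k ∈ range (j + 1),
        PowerSeries.coeff k C * PowerSeries.coeff j (E ^ k)
        = PowerSeries.coeff j (Polynomial.aeval C W) := by
      rw [hWdef, Polynomial.aeval_comp, hQae, hCp, map_sum, map_sum]
      refine Finset.sum_congr rfl ?_
      intro k _
      rw [hEpow j k]
      simp only [map_mul, map_pow, Polynomial.aeval_C, Polynomial.aeval_X]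
      rw [show (algebraMap K K⟦X⟧) (PowerSeries.coeff k C)
          = PowerSeries.C (PowerSeries.coeff k C) from rfl, PowerSeries.coeff_C_mul]
    rw [key2, Polynomial.aeval_eq_sum_range, map_sum]
    have hterm0 : ∀ i ∈ range (W.natDegree + 1), i ≠ 1 →
        PowerSeries.coeff j (W.coeff i • C ^ i) = 0 := by
      intro i _ hi1
      rw [coeff_smul, smul_eq_mul]
      rcases le_or_gt i j with hle | hlt
      · rw [hW i hle, if_neg hi1, zero_mul]
      · rw [coeff_pow_eq_zero hCc hlt, mul_zero]
    have hC0co : PowerSeries.coeff 0 C = 0 := by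
      rw [coeff_zero_eq_constantCoeff_apply, hCc]
    rcases Nat.eq_zero_or_pos j with rfl | hj1
    · refine (Finset.sum_eq_zero ?_).trans (by rw [hC0co])
      intro i hi
      rcases eq_or_ne i 1 with rfl | hne
      · rw [coeff_smul, smul_eq_mul, pow_one, hC0co, mul_zero]
      · exact hterm0 i hi hne
    · rw [Finset.sum_eq_single 1 hterm0 ?_]
      · rw [coeff_smul, smul_eq_mul, pow_one, hW 1 (by omega), if_pos rfl, one_mul]
      · intro hnot
        exfalso
        have hz : W.coeff 1 = 0 :=
          Polynomial.coeff_eq_zero_of_natDegree_lt (by simp only [Finset.mem_range] at hnot; omega)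
        rw [hW 1 (by omega), if_pos rfl] at hz
        exact one_ne_zero hz
  have hEX : E = X := by
    refine comp_inj hC1 hE0 constantCoeff_X ?_
    intro m
    rw [KEY1 m]
    symm
    rw [Finset.sum_eq_single_of_mem m (Finset.mem_range.mpr (by omega)) ?_]
    · rw [PowerSeries.coeff_X_pow, if_pos rfl, mul_one]
    · intro b _ hbm
      rw [PowerSeries.coeff_X_pow, if_neg (Ne.symm hbm), mul_zero]
  -- derivative facts
  set A' : K⟦X⟧ := PowerSeries.derivative K A with hA'def
  have hdC : PowerSeries.derivative K C = A + X * A' := by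
    rw [hCdef, Derivation.leibniz, smul_eq_mul, smul_eq_mul, PowerSeries.derivative_X, mul_one]
    ring
  have hBpow : ∀ a b : ℕ, A ^ a * A⁻¹ ^ (a + b) = A⁻¹ ^ b := by
    intro a b
    rw [pow_add, ← mul_assoc, ← mul_pow, hABone, one_pow, one_mul]
  have hdec : ∀ q : ℕ, PowerSeries.derivative K C * A⁻¹ ^ (q + 1)
      = A⁻¹ ^ q + X * (A' * A⁻¹ ^ (q + 1)) := by
    intro q
    have h1 := hBpow 1 (q)
    rw [pow_one, show 1 + q = q + 1 from by omega] at h1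
    rw [hdC, add_mul, h1]
    ring
  have hcoe : ∀ q r : ℕ, 1 ≤ q →
      (q : K) * PowerSeries.coeff r (A' * A⁻¹ ^ (q + 1))
      = -(((r : K) + 1) * PowerSeries.coeff (r + 1) (A⁻¹ ^ q)) := by
    intro q r hq
    have hder : PowerSeries.derivative K (A⁻¹ ^ q) = (q : K) • -(A' * A⁻¹ ^ (q + 1)) := by
      rw [Derivation.leibniz_pow, derivative_inv', ← Nat.cast_smul_eq_nsmul K]
      congr 1
      rw [smul_eq_mul, ← hA'def]
      have h2 : A⁻¹ ^ (q - 1) * A⁻¹ ^ 2 = A⁻¹ ^ (q + 1) := by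
        rw [← pow_add]
        congr 1
        omega
      calc A⁻¹ ^ (q - 1) * (-A⁻¹ ^ 2 * A') = -(A' * (A⁻¹ ^ (q - 1) * A⁻¹ ^ 2)) := by ring
        _ = -(A' * A⁻¹ ^ (q + 1)) := by rw [h2]
    have h1 := PowerSeries.coeff_derivative (A⁻¹ ^ q) r
    rw [hder] at h1
    simp only [coeff_smul, map_neg, smul_eq_mul] at h1
    linear_combination -h1
  have CL : ∀ q : ℕ, PowerSeries.coeff q (PowerSeries.derivative K C * A⁻¹ ^ (q + 1))
      = if q = 0 then 1 else 0 := by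
    intro q
    rw [hdec q, map_add]
    rcases Nat.eq_zero_or_pos q with rfl | hq
    · rw [if_pos rfl, pow_zero]
      rw [coeff_zero_eq_constantCoeff_apply, coeff_zero_eq_constantCoeff_apply, map_one,
        map_mul, constantCoeff_X, zero_mul, add_zero]
    · rw [if_neg (by omega)]
      have h2 := coeff_succ_X_mul (R := K) (q - 1) (A' * A⁻¹ ^ (q + 1))
      rw [show q - 1 + 1 = q from by omega] at h2
      rw [h2]
      have h3 := hcoe q (q - 1) hq
      rw [show q - 1 + 1 = q from by omega] at h3
      have hqK : (q : K) ≠ 0 := Nat.cast_ne_zero.mpr (by omega)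
      have h5 : ((q - 1 : ℕ) : K) + 1 = (q : K) := by
        rw [Nat.cast_sub (by omega : 1 ≤ q), Nat.cast_one]; ring
      rw [h5] at h3
      have h6 : (q : K) * (PowerSeries.coeff q (A⁻¹ ^ q)
          + PowerSeries.coeff (q - 1) (A' * A⁻¹ ^ (q + 1))) = 0 := by
        rw [mul_add, h3]; ring
      rcases mul_eq_zero.mp h6 with h7 | h7
      · exact absurd h7 hqK
      · exact h7
  have main1 : PowerSeries.coeff (n + 1)
      (E * (PowerSeries.derivative K C * A⁻¹ ^ (n + 2)))
      = PowerSeries.coeff (n + 1) D := by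
    rw [L1]
    rw [Finset.sum_eq_single_of_mem (n + 1) (Finset.mem_range.mpr (by omega)) ?_]
    · have h8 := hBpow (n + 1) 1
      rw [show n + 1 + 1 = n + 2 from rfl, pow_one] at h8
      have CL0 := CL 0
      rw [if_pos rfl, zero_add, pow_one] at CL0
      have hre : C ^ (n + 1) * (PowerSeries.derivative K C * A⁻¹ ^ (n + 2))
          = X ^ (n + 1) * (PowerSeries.derivative K C * A⁻¹) := by
        calc C ^ (n + 1) * (PowerSeries.derivative K C * A⁻¹ ^ (n + 2))
            = X ^ (n + 1) * (A ^ (n + 1) * A⁻¹ ^ (n + 2)) * PowerSeries.derivative K C := by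
              rw [hCdef, mul_pow]; ring
          _ = X ^ (n + 1) * (PowerSeries.derivative K C * A⁻¹) := by rw [h8]; ring
      rw [hre]
      have h9 := PowerSeries.coeff_X_pow_mul
        (PowerSeries.derivative K C * A⁻¹) (n + 1) 0
      rw [zero_add] at h9
      rw [h9, CL0, mul_one]
    · intro m hm hmne
      rcases Nat.eq_zero_or_pos m with rfl | hm1
      · rw [coeff_zero_eq_constantCoeff_apply, hD, zero_mul]
      · have hmn : m ≤ n := by simp only [Finset.mem_range] at hm; omega
        have h8 := hBpow m (n + 2 - m)
        rw [show m + (n + 2 - m) = n + 2 from by omega] at h8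
        have hre : C ^ m * (PowerSeries.derivative K C * A⁻¹ ^ (n + 2))
            = X ^ m * (PowerSeries.derivative K C * A⁻¹ ^ ((n + 1 - m) + 1)) := by
          calc C ^ m * (PowerSeries.derivative K C * A⁻¹ ^ (n + 2))
              = X ^ m * (A ^ m * A⁻¹ ^ (n + 2)) * PowerSeries.derivative K C := by
                rw [hCdef, mul_pow]; ring
            _ = X ^ m * (PowerSeries.derivative K C * A⁻¹ ^ ((n + 1 - m) + 1)) := by
                rw [h8, show n + 2 - m = (n + 1 - m) + 1 from by omega]; ring
        rw [hre]
        have h9 := PowerSeries.coeff_X_pow_mul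
          (PowerSeries.derivative K C * A⁻¹ ^ ((n + 1 - m) + 1)) m (n + 1 - m)
        rw [show n + 1 - m + m = n + 1 from by omega] at h9
        rw [h9, CL (n + 1 - m), if_neg (by omega), mul_zero]
  rw [hEX, coeff_succ_X_mul] at main1
  have main3 : PowerSeries.coeff n (PowerSeries.derivative K C * A⁻¹ ^ (n + 2))
      = PowerSeries.coeff n (A⁻¹ ^ (n + 1))
        + PowerSeries.coeff (n - 1) (A' * A⁻¹ ^ (n + 2)) := by
    rw [show n + 2 = (n + 1) + 1 from rfl, hdec (n + 1), map_add]
    congr 1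
    have h2 := coeff_succ_X_mul (R := K) (n - 1) (A' * A⁻¹ ^ (n + 1 + 1))
    rw [show n - 1 + 1 = n from by omega] at h2
    exact h2
  rw [main3] at main1
  have h4 := hcoe (n + 1) (n - 1) (by omega)
  rw [show (n - 1) + 1 = n from by omega, show (n + 1) + 1 = n + 2 from rfl] at h4
  have h5 : ((n - 1 : ℕ) : K) + 1 = (n : K) := by
    rw [Nat.cast_sub (by omega : 1 ≤ n), Nat.cast_one]; ring
  rw [h5] at h4
  push_cast at h4
  linear_combination (-(n : K) - 1) * main1 + h4
theorem coeff_inv_pow {A : K⟦X⟧} (hA : constantCoeff A = 1) (n N : ℕ) :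
    PowerSeries.coeff N (A⁻¹ ^ (n + 1))
    = ∑ k ∈ range (N + 1), ((-1 : K) ^ k * (((n + k).choose k : ℕ) : K))
        * PowerSeries.coeff N ((A - 1) ^ k) := by
  set u : K⟦X⟧ := A - 1 with hu
  have hAne : constantCoeff A ≠ 0 := by rw [hA]; exact one_ne_zero
  have hu0 : constantCoeff u = 0 := by rw [hu, map_sub, hA, map_one, sub_self]
  have hmul : ∀ g : ℕ → K,
      A * (PowerSeries.mk fun j => ∑ k ∈ range (j + 1), g k * PowerSeries.coeff j (u ^ k))
      = PowerSeries.mk fun j => ∑ k ∈ range (j + 1),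
          (g k + if k = 0 then 0 else g (k - 1)) * PowerSeries.coeff j (u ^ k) := by
    intro g
    have hA1 : A = 1 + u := by rw [hu]; ring
    ext j
    rw [hA1, add_mul, one_mul, map_add, coeff_mk, coeff_mk]
    have h2 : PowerSeries.coeff j
        (u * PowerSeries.mk fun i => ∑ k ∈ range (i + 1), g k * PowerSeries.coeff i (u ^ k))
        = ∑ k ∈ range (j + 1), g k * PowerSeries.coeff j (u ^ (k + 1)) := by
      rw [PowerSeries.coeff_mul]
      have h3 : ∀ p ∈ antidiagonal j,
          PowerSeries.coeff p.1 u * PowerSeries.coeff p.2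
            (PowerSeries.mk fun i => ∑ k ∈ range (i + 1), g k * PowerSeries.coeff i (u ^ k))
          = ∑ k ∈ range (j + 1),
              g k * (PowerSeries.coeff p.1 u * PowerSeries.coeff p.2 (u ^ k)) := by
        intro p hp
        have hpj : p.1 + p.2 = j := Finset.HasAntidiagonal.mem_antidiagonal.mp hp
        rw [coeff_mk, Finset.mul_sum]
        refine (Finset.sum_subset (Finset.range_subset_range.mpr
          (by omega : p.2 + 1 ≤ j + 1)) ?_).trans ?_
        · intro k _ hk2
          rw [coeff_pow_eq_zero hu0 (by simp only [Finset.mem_range] at hk2 ⊢; omega),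
            mul_zero, mul_zero]
        · exact Finset.sum_congr rfl fun k _ => by ring
      rw [Finset.sum_congr rfl h3, Finset.sum_comm]
      refine Finset.sum_congr rfl fun k _ => ?_
      rw [← Finset.mul_sum, ← PowerSeries.coeff_mul, ← pow_succ']
    rw [h2]
    have h5 : ∑ k ∈ range (j + 1), g k * PowerSeries.coeff j (u ^ (k + 1))
        = ∑ k ∈ range (j + 1),
            (if k = 0 then 0 else g (k - 1)) * PowerSeries.coeff j (u ^ k) := by
      rw [Finset.sum_range_succ'
        (fun k => (if k = 0 then (0 : K) else g (k - 1)) * PowerSeries.coeff j (u ^ k)) j]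
      rw [Finset.sum_range_succ (fun k => g k * PowerSeries.coeff j (u ^ (k + 1))) j]
      rw [coeff_pow_eq_zero hu0 (by omega), mul_zero, add_zero]
      simp only [Nat.succ_ne_zero, if_neg, if_pos, Nat.add_sub_cancel, zero_mul, add_zero]
      rfl
    rw [h5, ← Finset.sum_add_distrib]
    exact Finset.sum_congr rfl fun k _ => by ring
  set T : ℕ → K⟦X⟧ := fun m => PowerSeries.mk fun j => ∑ k ∈ range (j + 1),
      ((-1 : K) ^ k * (((m + k).choose k : ℕ) : K)) * PowerSeries.coeff j (u ^ k) with hT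
  have hbase : A * T 0 = 1 := by
    rw [hT, hmul]
    ext j
    rw [coeff_mk]
    have h6 : ∀ k ∈ range (j + 1),
        ((-1 : K) ^ k * (((0 + k).choose k : ℕ) : K)
          + if k = 0 then 0 else (-1 : K) ^ (k - 1) * (((0 + (k - 1)).choose (k - 1) : ℕ) : K))
          * PowerSeries.coeff j (u ^ k)
        = (if k = 0 then 1 else 0) * PowerSeries.coeff j (u ^ k) := by
      intro k _
      congr 1
      rcases Nat.eq_zero_or_pos k with rfl | hk
      · simp
      · obtain ⟨k', rfl⟩ : ∃ k', k = k' + 1 := ⟨k - 1, by omega⟩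
        rw [if_neg (by omega), if_neg (by omega), Nat.add_sub_cancel, zero_add, zero_add,
          Nat.choose_self, Nat.choose_self]
        push_cast
        ring
    rw [Finset.sum_congr rfl h6, Finset.sum_eq_single_of_mem 0 (Finset.mem_range.mpr (by omega))]
    · rw [if_pos rfl, one_mul, pow_zero, PowerSeries.coeff_one]
    · intro b _ hb
      rw [if_neg hb, zero_mul]
  have hstep : ∀ m : ℕ, A * T (m + 1) = T m := by
    intro m
    rw [hT, hmul]
    ext j
    rw [coeff_mk, coeff_mk]
    refine Finset.sum_congr rfl fun k _ => ?_
    congr 1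
    rcases Nat.eq_zero_or_pos k with rfl | hk
    · simp
    · obtain ⟨k', rfl⟩ : ∃ k', k = k' + 1 := ⟨k - 1, by omega⟩
      rw [if_neg (by omega), Nat.add_sub_cancel]
      rw [show m + 1 + (k' + 1) = (m + k' + 1) + 1 from by omega,
        Nat.choose_succ_succ (m + k' + 1) k',
        show m + 1 + k' = m + k' + 1 from by omega,
        show m + (k' + 1) = m + k' + 1 from by omega]
      push_cast
      ring
  have hTn : ∀ m : ℕ, A ^ (m + 1) * T m = 1 := by
    intro m
    induction m with
    | zero => rw [pow_one, hbase]
    | succ m ih =>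
        calc A ^ (m + 1 + 1) * T (m + 1) = A ^ (m + 1) * (A * T (m + 1)) := by
              rw [pow_succ]; ring
          _ = A ^ (m + 1) * T m := by rw [hstep]
          _ = 1 := ih
  have hinv : A⁻¹ ^ (n + 1) = T n := by
    have h7 : A⁻¹ ^ (n + 1) * A ^ (n + 1) = 1 := by
      rw [← mul_pow, PowerSeries.inv_mul_cancel A hAne, one_pow]
    calc A⁻¹ ^ (n + 1) = A⁻¹ ^ (n + 1) * (A ^ (n + 1) * T n) := by rw [hTn, mul_one]
      _ = (A⁻¹ ^ (n + 1) * A ^ (n + 1)) * T n := by ring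
      _ = T n := by rw [h7, one_mul]
  rw [hinv, hT, coeff_mk]
def M (s : Multiset ℕ) : ℕ := ∏ j ∈ s.toFinset, (s.count j).factorial

lemma M_zero : M 0 = 1 := by simp [M]

lemma M_ne_zero (s : Multiset ℕ) : (M s : K) ≠ 0 := by
  have h : 0 < M s := Finset.prod_pos fun j _ => Nat.factorial_pos _
  exact Nat.cast_ne_zero.mpr (by omega)

lemma M_cons (a : ℕ) (s : Multiset ℕ) : M (a ::ₘ s) = (s.count a + 1) * M s := by
  by_cases h : a ∈ s
  · have ha' : a ∈ s.toFinset := Multiset.mem_toFinset.mpr h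
    have ht : (a ::ₘ s).toFinset = s.toFinset := by
      rw [Multiset.toFinset_cons, Finset.insert_eq_self.mpr ha']
    unfold M
    rw [ht, ← Finset.mul_prod_erase _ _ ha', ← Finset.mul_prod_erase _ _ ha']
    rw [Multiset.count_cons_self, Nat.factorial_succ]
    rw [Finset.prod_congr rfl (fun j hj => by
      rw [Multiset.count_cons_of_ne (Finset.ne_of_mem_erase hj)])]
    ring
  · have hc : s.count a = 0 := Multiset.count_eq_zero.mpr h
    unfold M
    rw [Multiset.toFinset_cons,
      Finset.prod_insert (fun hmem => h (Multiset.mem_toFinset.mp hmem))]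
    rw [Multiset.count_cons_self, hc]
    rw [Finset.prod_congr rfl (fun j hj => by
      rw [Multiset.count_cons_of_ne (by rintro rfl; exact h (Multiset.mem_toFinset.mp hj))])]
    norm_num [Nat.factorial]

def PS (b k : ℕ) : Finset (Multiset ℕ) :=
  ((Finset.univ : Finset (Nat.Partition b)).image Nat.Partition.parts).filter
    fun s => Multiset.card s = k

lemma mem_PS {b k : ℕ} {s : Multiset ℕ} :
    s ∈ PS b k ↔ s.sum = b ∧ (∀ i ∈ s, 0 < i) ∧ Multiset.card s = k := by
  simp only [PS, Finset.mem_filter, Finset.mem_image, Finset.mem_univ, true_and]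
  constructor
  · rintro ⟨⟨p, rfl⟩, hcard⟩
    exact ⟨p.parts_sum, fun i hi => p.parts_pos hi, hcard⟩
  · rintro ⟨h1, h2, h3⟩
    exact ⟨⟨⟨s, fun {i} hi => h2 i hi, h1⟩, rfl⟩, h3⟩

theorem coeff_pow_partition {u : K⟦X⟧} {c : ℕ → K}
    (hu : ∀ j, PowerSeries.coeff j u = if j = 0 then 0 else c j) :
    ∀ k n : ℕ, PowerSeries.coeff n (u ^ k)
      = (k.factorial : K) * ∑ s ∈ PS n k, ((M s : K))⁻¹ * ((s.map c).prod) := by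
  intro k
  induction k with
  | zero =>
    intro n
    rw [pow_zero, PowerSeries.coeff_one, Nat.factorial_zero, Nat.cast_one, one_mul]
    rcases Nat.eq_zero_or_pos n with rfl | hn
    · rw [if_pos rfl]
      have hset : PS 0 0 = {(0 : Multiset ℕ)} := by
        ext s
        rw [mem_PS, Finset.mem_singleton]
        constructor
        · rintro ⟨h1, h2, h3⟩
          exact Multiset.card_eq_zero.mp h3
        · rintro rfl
          exact ⟨rfl, by simp, rfl⟩
      rw [hset, Finset.sum_singleton]
      simp [M_zero]
    · rw [if_neg (by omega)]
      have hset : PS n 0 = ∅ := by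
        ext s
        simp only [mem_PS, Finset.notMem_empty, iff_false]
        rintro ⟨h1, h2, h3⟩
        rw [Multiset.card_eq_zero.mp h3] at h1
        simp at h1
        omega
      rw [hset, Finset.sum_empty]
  | succ k ih =>
    intro n
    rw [pow_succ', PowerSeries.coeff_mul]
    have hterm : ∀ p ∈ antidiagonal n,
        PowerSeries.coeff p.1 u * PowerSeries.coeff p.2 (u ^ k)
        = if p.1 = 0 then 0 else
            (k.factorial : K) * (c p.1 * ∑ s ∈ PS p.2 k, ((M s : K))⁻¹ * ((s.map c).prod)) := by
      intro p _
      rw [hu p.1, ih p.2]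
      rcases eq_or_ne p.1 0 with h0 | h0
      · rw [if_pos h0, if_pos h0, zero_mul]
      · rw [if_neg h0, if_neg h0]
        ring
    rw [Finset.sum_congr rfl hterm, Finset.sum_ite, Finset.sum_const_zero, zero_add,
      ← Finset.mul_sum]
    have S1 : ∑ p ∈ (antidiagonal n).filter (fun p => ¬ p.1 = 0),
        (c p.1 * ∑ s ∈ PS p.2 k, ((M s : K))⁻¹ * ((s.map c).prod))
        = ((k : K) + 1) * ∑ t ∈ PS n (k + 1), ((M t : K))⁻¹ * ((t.map c).prod) := by
      have hL : ∀ p ∈ (antidiagonal n).filter (fun p => ¬ p.1 = 0),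
          c p.1 * ∑ s ∈ PS p.2 k, ((M s : K))⁻¹ * ((s.map c).prod)
          = ∑ s ∈ PS p.2 k, c p.1 * (((M s : K))⁻¹ * ((s.map c).prod)) :=
        fun p _ => Finset.mul_sum _ _ _
      have hR : ∀ t ∈ PS n (k + 1),
          ((k : K) + 1) * (((M t : K))⁻¹ * ((t.map c).prod))
          = ∑ a ∈ t.toFinset, (t.count a : K) * (((M t : K))⁻¹ * ((t.map c).prod)) := by
        intro t ht
        rw [← Finset.sum_mul, ← Nat.cast_sum, Multiset.toFinset_sum_count_eq,
          (mem_PS.mp ht).2.2]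
        push_cast
        ring
      rw [Finset.sum_congr rfl hL, Finset.mul_sum, Finset.sum_congr rfl hR,
        Finset.sum_sigma' ((antidiagonal n).filter (fun p => ¬ p.1 = 0)) _ _,
        Finset.sum_sigma' (PS n (k + 1)) _ _]
      refine Finset.sum_nbij' (fun x => ⟨x.1.1 ::ₘ x.2, x.1.1⟩)
        (fun y => ⟨(y.2, n - y.2), y.1.erase y.2⟩) ?_ ?_ ?_ ?_ ?_
      · rintro ⟨⟨a, b⟩, s⟩ hx
        rw [Finset.mem_sigma] at hx
        obtain ⟨hab, hs⟩ := hx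
        rw [Finset.mem_filter, Finset.HasAntidiagonal.mem_antidiagonal] at hab
        obtain ⟨hsum, hpos, hcard⟩ := mem_PS.mp hs
        have hab1 : a + b = n := hab.1
        have hab2 : ¬ a = 0 := hab.2
        rw [Finset.mem_sigma]
        constructor
        · rw [mem_PS]
          refine ⟨?_, ?_, ?_⟩
          · rw [Multiset.sum_cons, hsum]
            exact hab1
          · intro i hi
            rcases Multiset.mem_cons.mp hi with rfl | hi2
            · exact Nat.pos_of_ne_zero hab2
            · exact hpos i hi2
          · rw [Multiset.card_cons, hcard]
        · exact Multiset.mem_toFinset.mpr (Multiset.mem_cons_self _ _)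
      · rintro ⟨t, a⟩ hy
        rw [Finset.mem_sigma] at hy
        obtain ⟨ht, ha⟩ := hy
        obtain ⟨hsum, hpos, hcard⟩ := mem_PS.mp ht
        have hat : a ∈ t := Multiset.mem_toFinset.mp ha
        have hale : a ≤ n := by
          rw [← hsum]
          exact Multiset.single_le_sum (fun x _ => Nat.zero_le x) a hat
        have hcons : a ::ₘ t.erase a = t := Multiset.cons_erase hat
        rw [Finset.mem_sigma]
        constructor
        · rw [Finset.mem_filter, Finset.HasAntidiagonal.mem_antidiagonal]
          refine ⟨?_, ?_⟩
          · show a + (n - a) = n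
            omega
          · show ¬ a = 0
            have := hpos a hat
            omega
        · rw [mem_PS]
          refine ⟨?_, ?_, ?_⟩
          · have h9 := congrArg Multiset.sum hcons
            rw [Multiset.sum_cons, hsum] at h9
            show (t.erase a).sum = n - a
            omega
          · exact fun i hi => hpos i (Multiset.mem_of_mem_erase hi)
          · have h9 := congrArg (fun z => Multiset.card z) hcons
            simp only [Multiset.card_cons, hcard] at h9
            show Multiset.card (t.erase a) = k
            omega
      · rintro ⟨⟨a, b⟩, s⟩ hx
        rw [Finset.mem_sigma] at hx
        have hab := hx.1
        rw [Finset.mem_filter, Finset.HasAntidiagonal.mem_antidiagonal] at hab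
        have hab1 : a + b = n := hab.1
        have hb : n - a = b := by omega
        simp only [Multiset.erase_cons_head, hb]
      · rintro ⟨t, a⟩ hy
        rw [Finset.mem_sigma] at hy
        have hat : a ∈ t := Multiset.mem_toFinset.mp hy.2
        simp only [Multiset.cons_erase hat]
      · rintro ⟨⟨a, b⟩, s⟩ hx
        simp only []
        rw [show ((a ::ₘ s).count a) = s.count a + 1 from Multiset.count_cons_self a s,
          M_cons, Multiset.map_cons, Multiset.prod_cons]
        have hMne := M_ne_zero (K := K) s
        have hcne : ((s.count a : K) + 1) ≠ 0 := by
          have h9 : ((s.count a + 1 : ℕ) : K) ≠ 0 := Nat.cast_ne_zero.mpr (Nat.succ_ne_zero _)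
          push_cast at h9
          exact h9
        push_cast
        field_simp
    rw [S1, Nat.factorial_succ]
    push_cast
    ring
lemma M_eq_range {n : ℕ} (s : Multiset ℕ) (hsum : s.sum = n) (hpos : ∀ i ∈ s, 0 < i) :
    ∏ j ∈ range (n + 1), (s.count j).factorial = M s := by
  unfold M
  symm
  refine Finset.prod_subset ?_ ?_
  · intro j hj
    rw [Multiset.mem_toFinset] at hj
    have h1 : j ≤ n := hsum ▸ Multiset.single_le_sum (fun x _ => Nat.zero_le x) j hj
    exact Finset.mem_range.mpr (by omega)
  · intro j _ hj
    rw [Multiset.count_eq_zero.mpr (fun hmem => hj (Multiset.mem_toFinset.mpr hmem))]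
    rfl

lemma PS_eq (b k : ℕ) : PS b k
    = ((Finset.univ : Finset (Nat.Partition b)).image Nat.Partition.parts).filter
      (fun s => Multiset.card s = k) := rfl

end Stmt13Aux

/-- Lagrange inversion: if `C(x) = ∑_{n ≥ 1} c_{n−1} x^n` with `c_0 = 1` and
`D(x) = ∑_{n ≥ 1} d_{n−1} x^n` satisfies `C(D(x)) = x` (expressed coefficientwise: since `D`
has zero constant term, the coefficient of `x^m` in `C(D(x)) = ∑_{k ≥ 1} c_{k−1} D^k` is the
finite sum `∑_{k=1}^{m} c_{k−1}·[x^m](D^k)`), then for `n ≥ 1`,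
`d_n = ∑_{λ ⊢ n} (−1)^{k(λ)} (n+k(λ))!/((n+1)!·∏ mⱼ(λ)!) · ∏ c_{λᵢ}`. -/
theorem stmt13 {K : Type*} [Field K] [CharZero K]
    (c d : ℕ → K) (hc : c 0 = 1)
    (hcomp : ∀ m : ℕ,
      (∑ k ∈ Finset.Icc 1 m,
          c (k - 1) *
            PowerSeries.coeff m
              ((PowerSeries.mk fun n => if n = 0 then 0 else d (n - 1)) ^ k)) =
        PowerSeries.coeff m (PowerSeries.X : PowerSeries K))
    (n : ℕ) (hn : 1 ≤ n) :
    d n =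
      ∑ p : Nat.Partition n,
        (-1 : K) ^ p.parts.card *
          ((((n + p.parts.card).factorial : ℕ) : K) /
            (((n + 1).factorial : K) *
              (((∏ j ∈ Finset.range (n + 1), (p.parts.count j).factorial : ℕ) : K)))) *
          (p.parts.map c).prod := by
  classical
  set A : PowerSeries K := PowerSeries.mk c with hAdef
  set D : PowerSeries K := PowerSeries.mk fun n => if n = 0 then 0 else d (n - 1) with hDdef
  have hA : PowerSeries.constantCoeff A = 1 := by
    rw [hAdef, ← PowerSeries.coeff_zero_eq_constantCoeff_apply, PowerSeries.coeff_mk, hc]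
  have hD : PowerSeries.constantCoeff D = 0 := by
    rw [hDdef, ← PowerSeries.coeff_zero_eq_constantCoeff_apply, PowerSeries.coeff_mk]
    simp
  have h : ∀ m : ℕ, ∑ k ∈ range (m + 1),
      PowerSeries.coeff k (PowerSeries.X * A) * PowerSeries.coeff m (D ^ k)
      = PowerSeries.coeff m (PowerSeries.X : PowerSeries K) := by
    intro m
    have hins : range (m + 1) = insert 0 (Finset.Icc 1 m) := by
      ext x
      simp only [Finset.mem_range, Finset.mem_Icc, Finset.mem_insert]
      omega
    rw [hins, Finset.sum_insert (by simp)]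
    have h0 : PowerSeries.coeff 0 (PowerSeries.X * A) = 0 := by
      rw [PowerSeries.coeff_zero_eq_constantCoeff_apply, map_mul, PowerSeries.constantCoeff_X,
        zero_mul]
    rw [h0, zero_mul, zero_add, ← hcomp m]
    refine Finset.sum_congr rfl ?_
    intro k hk
    have hk1 : 1 ≤ k := (Finset.mem_Icc.mp hk).1
    obtain ⟨k', rfl⟩ : ∃ k', k = k' + 1 := ⟨k - 1, by omega⟩
    rw [PowerSeries.coeff_succ_X_mul, hAdef, PowerSeries.coeff_mk, Nat.add_sub_cancel]
  have hlag := Stmt13Aux.lagrange hA hD h hn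
  have hdn : PowerSeries.coeff (n + 1) D = d n := by
    rw [hDdef, PowerSeries.coeff_mk, if_neg (by omega), Nat.add_sub_cancel]
  rw [hdn] at hlag
  have hu : ∀ j, PowerSeries.coeff j (A - 1) = if j = 0 then 0 else c j := by
    intro j
    rw [map_sub, hAdef, PowerSeries.coeff_mk, PowerSeries.coeff_one]
    rcases eq_or_ne j 0 with rfl | hj
    · simp [hc]
    · simp [hj]
  have hexp := Stmt13Aux.coeff_inv_pow hA n n
  have hpp := Stmt13Aux.coeff_pow_partition (u := A - 1) (c := c) hu
  rw [hexp, Finset.sum_congr rfl (fun k _ => by rw [hpp k n])] at hlag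
  -- grouping
  set GG : Multiset ℕ → K := fun s =>
    (-1 : K) ^ (Multiset.card s) * (((n + Multiset.card s).choose (Multiset.card s) : ℕ) : K)
      * ((Multiset.card s).factorial : K)
      * (((Stmt13Aux.M s : K))⁻¹ * ((s.map c).prod)) with hGG
  have hstep1 : ∀ k ∈ range (n + 1),
      (-1 : K) ^ k * (((n + k).choose k : ℕ) : K)
        * ((k.factorial : K) * ∑ s ∈ Stmt13Aux.PS n k, ((Stmt13Aux.M s : K))⁻¹ * ((s.map c).prod))
      = ∑ s ∈ Stmt13Aux.PS n k, GG s := by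
    intro k _
    rw [Finset.mul_sum, Finset.mul_sum]
    refine Finset.sum_congr rfl ?_
    intro s hs
    have hcard : Multiset.card s = k := (Stmt13Aux.mem_PS.mp hs).2.2
    rw [hGG]
    simp only [hcard]
    ring
  rw [Finset.sum_congr rfl hstep1] at hlag
  have hmaps : ∀ s ∈ (Finset.univ : Finset (Nat.Partition n)).image Nat.Partition.parts,
      Multiset.card s ∈ range (n + 1) := by
    intro s hs
    rw [Finset.mem_image] at hs
    obtain ⟨p, _, rfl⟩ := hs
    have h1 : Multiset.card p.parts • 1 ≤ p.parts.sum :=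
      Multiset.card_nsmul_le_sum (fun x hx => p.parts_pos hx)
    rw [smul_eq_mul, mul_one, p.parts_sum] at h1
    exact Finset.mem_range.mpr (by omega)
  have hfib := Finset.sum_fiberwise_of_maps_to hmaps GG
  simp only [← Stmt13Aux.PS_eq] at hfib
  rw [hfib] at hlag
  rw [Finset.sum_image (fun p _ q _ hpq => Nat.Partition.ext hpq)] at hlag
  -- final numeric identification
  have hnK : ((n : K) + 1) ≠ 0 := by
    have h9 : ((n + 1 : ℕ) : K) ≠ 0 := Nat.cast_ne_zero.mpr (by omega)
    push_cast at h9
    exact h9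
  refine mul_left_cancel₀ hnK ?_
  rw [hlag, Finset.mul_sum]
  refine Finset.sum_congr rfl ?_
  intro p _
  rw [hGG]
  set k := Multiset.card p.parts with hk
  have hM : (∏ j ∈ Finset.range (n + 1), (p.parts.count j).factorial : ℕ)
      = Stmt13Aux.M p.parts :=
    Stmt13Aux.M_eq_range p.parts p.parts_sum (fun i hi => p.parts_pos hi)
  rw [hM]
  have hch : ((n + k).choose k) * k.factorial * n.factorial = (n + k).factorial := by
    have := Nat.choose_mul_factorial_mul_factorial (show k ≤ n + k by omega)
    rwa [Nat.add_sub_cancel] at this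
  have hfacts : ((n + 1).factorial : K) = ((n : K) + 1) * (n.factorial : K) := by
    rw [Nat.factorial_succ]
    push_cast
    ring
  have hMne : ((Stmt13Aux.M p.parts : K)) ≠ 0 := Stmt13Aux.M_ne_zero _
  have hnfne : ((n.factorial : K)) ≠ 0 :=
    Nat.cast_ne_zero.mpr (Nat.factorial_ne_zero n)
  have hchK : (((n + k).choose k : ℕ) : K) * (k.factorial : K) * (n.factorial : K)
      = ((n + k).factorial : K) := by
    exact_mod_cast hch
  rw [hfacts]
  field_simp
  rw [← hk]
  linear_combination ((-1 : K) ^ k * (Multiset.map c p.parts).prod) * hchK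
end

section
/- Let I be a finite set with |I| = m, and let π_I ⊆ ℝ^I denote the standard permutahedron, the convex hull of all vectors x : I → ℝ that are bijections from I onto {1, …, m}. Let I = S ⊔ T be a partition of I into two disjoint subsets. Then the set of points of π_I maximizing the functional x ↦ ∑_{s ∈ S} x(s) equals {x : I → ℝ | the function s ↦ x(s) − |T| on S lies in π_S, and the restriction of x to T lies in π_T}, where π_S ⊆ ℝ^S and π_T ⊆ ℝ^T are the standard permutahedra of S and T. -/
open Finset

set_option linter.unusedSectionVars false

/-- The standard permutahedron of a finite type `α`: the convex hull of the vectors whose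
coordinates read a bijection `α → {1, …, |α|}`. -/
def permPoly (α : Type*) [Fintype α] [DecidableEq α] : Set (α → ℝ) :=
  convexHull ℝ
    {x : α → ℝ | ∃ σ : α ≃ Fin (Fintype.card α), ∀ i : α, x i = ((σ i : ℕ) : ℝ) + 1}


private lemma strictMono_fin_le {n : ℕ} {f : Fin n → ℕ} (hf : StrictMono f) :
    ∀ k : Fin n, (k : ℕ) ≤ f k := by
  intro ⟨k, hk⟩
  induction k with
  | zero => exact Nat.zero_le _
  | succ i ih =>
    have h1 : f ⟨i, by omega⟩ < f ⟨i + 1, hk⟩ := hf (by simp [Fin.lt_def])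
    have h2 : i ≤ f ⟨i, by omega⟩ := by simpa using ih (by omega)
    simp only [Fin.val_mk]
    omega

private lemma sum_fin_eq (C : Finset ℕ) :
    ∑ j ∈ C, j = ∑ k : Fin C.card, ((C.orderIsoOfFin rfl k : ℕ)) := by
  rw [← Finset.sum_coe_sort C (fun j => j)]
  exact (Equiv.sum_comp (C.orderIsoOfFin rfl).toEquiv (fun x : {x // x ∈ C} => (x : ℕ))).symm

private lemma iso_strictMono (C : Finset ℕ) :
    StrictMono (fun k : Fin C.card => ((C.orderIsoOfFin rfl k : ℕ))) :=
  fun a b hab => by exact_mod_cast (C.orderIsoOfFin rfl).strictMono hab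

private lemma sum_lower (C : Finset ℕ) : ∑ k ∈ Finset.range C.card, k ≤ ∑ j ∈ C, j := by
  rw [← Fin.sum_univ_eq_sum_range (fun k => k), sum_fin_eq]
  exact Finset.sum_le_sum fun k _ => strictMono_fin_le (iso_strictMono C) k

private lemma sum_lower_eq (C : Finset ℕ) (h : ∑ j ∈ C, j = ∑ k ∈ Finset.range C.card, k) :
    C = Finset.range C.card := by
  have h2 : ∑ k : Fin C.card, (k : ℕ) = ∑ k : Fin C.card, ((C.orderIsoOfFin rfl k : ℕ)) := by
    rw [Fin.sum_univ_eq_sum_range (fun k => k), ← h, sum_fin_eq]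
  have h3 := (Finset.sum_eq_sum_iff_of_le
    (fun k _ => strictMono_fin_le (iso_strictMono C) k)).mp h2
  ext j
  simp only [Finset.mem_range]
  constructor
  · intro hj
    obtain ⟨k, hk⟩ := (C.orderIsoOfFin rfl).surjective ⟨j, hj⟩
    have := h3 k (Finset.mem_univ k)
    have hval : ((C.orderIsoOfFin rfl k : ℕ)) = j := by rw [hk]
    omega
  · intro hj
    have := h3 ⟨j, hj⟩ (Finset.mem_univ _)
    have hmem := (C.orderIsoOfFin rfl ⟨j, hj⟩).2
    simp only at this
    rw [← this] at hmem
    exact hmem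

section PermCore
variable {I : Type*} [Fintype I] [DecidableEq I]

private lemma sum_image_sigma (T : Finset I) (σ : I ≃ Fin (Fintype.card I)) :
    ∑ i ∈ T, (σ i : ℕ) = ∑ j ∈ T.image (fun i => (σ i : ℕ)), j := by
  rw [Finset.sum_image]
  intro x _ y _ h
  exact σ.injective (Fin.val_injective h)

private lemma card_image_sigma (T : Finset I) (σ : I ≃ Fin (Fintype.card I)) :
    (T.image (fun i => (σ i : ℕ))).card = T.card :=
  Finset.card_image_of_injective T (Fin.val_injective.comp σ.injective)

private lemma T_lower (T : Finset I) (σ : I ≃ Fin (Fintype.card I)) :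
    ∑ k ∈ Finset.range T.card, k ≤ ∑ i ∈ T, (σ i : ℕ) := by
  rw [sum_image_sigma]
  have := sum_lower (T.image (fun i => (σ i : ℕ)))
  rwa [card_image_sigma] at this

-- low values from minimal sum
private lemma T_eq (T : Finset I) (σ : I ≃ Fin (Fintype.card I))
    (h : ∑ i ∈ T, (σ i : ℕ) = ∑ k ∈ Finset.range T.card, k) :
    ∀ i ∈ T, (σ i : ℕ) < T.card := by
  have himg : T.image (fun i => (σ i : ℕ)) = Finset.range T.card := by
    have := sum_lower_eq (T.image (fun i => (σ i : ℕ)))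
      (by rw [card_image_sigma, ← sum_image_sigma]; exact h)
    rwa [card_image_sigma] at this
  intro i hi
  have : (σ i : ℕ) ∈ T.image (fun i => (σ i : ℕ)) := Finset.mem_image_of_mem _ hi
  rw [himg, Finset.mem_range] at this
  exact this

-- minimal sum from low values
private lemma T_eq' (T : Finset I) (σ : I ≃ Fin (Fintype.card I))
    (h : ∀ i ∈ T, (σ i : ℕ) < T.card) :
    ∑ i ∈ T, (σ i : ℕ) = ∑ k ∈ Finset.range T.card, k := by
  have himg : T.image (fun i => (σ i : ℕ)) = Finset.range T.card := by
    apply Finset.eq_of_subset_of_card_le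
    · intro j hj
      obtain ⟨i, hi, rfl⟩ := Finset.mem_image.mp hj
      exact Finset.mem_range.mpr (h i hi)
    · rw [Finset.card_range, card_image_sigma]
  rw [sum_image_sigma, himg]

private lemma high_iff {S T : Finset I} (hST : Disjoint S T) (hUnion : S ∪ T = Finset.univ)
    (σ : I ≃ Fin (Fintype.card I)) :
    (∀ i ∈ T, (σ i : ℕ) < T.card) ↔ (∀ i ∈ S, T.card ≤ (σ i : ℕ)) := by
  have hcard : S.card + T.card = Fintype.card I := by
    rw [← Finset.card_union_of_disjoint hST, hUnion, Finset.card_univ]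
  constructor
  · intro h i hi
    by_contra hc
    push_neg at hc
    have himg : T.image (fun i => (σ i : ℕ)) = Finset.range T.card := by
      apply Finset.eq_of_subset_of_card_le
      · intro j hj
        obtain ⟨i, hi, rfl⟩ := Finset.mem_image.mp hj
        exact Finset.mem_range.mpr (h i hi)
      · rw [Finset.card_range, card_image_sigma]
    have : (σ i : ℕ) ∈ T.image (fun i => (σ i : ℕ)) := by
      rw [himg]; exact Finset.mem_range.mpr hc
    obtain ⟨j, hj, hji⟩ := Finset.mem_image.mp this
    have : j = i := σ.injective (Fin.val_injective hji)
    exact Finset.disjoint_left.mp hST hi (this ▸ hj)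
  · intro h i hi
    by_contra hc
    push_neg at hc
    have himg : S.image (fun i => (σ i : ℕ)) = Finset.Ico T.card (Fintype.card I) := by
      apply Finset.eq_of_subset_of_card_le
      · intro j hj
        obtain ⟨i, hiS, rfl⟩ := Finset.mem_image.mp hj
        exact Finset.mem_Ico.mpr ⟨h i hiS, (σ i).isLt⟩
      · rw [Nat.card_Ico, card_image_sigma]; omega
    have : (σ i : ℕ) ∈ S.image (fun i => (σ i : ℕ)) := by
      rw [himg]; exact Finset.mem_Ico.mpr ⟨hc, (σ i).isLt⟩
    obtain ⟨j, hj, hji⟩ := Finset.mem_image.mp this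
    have : j = i := σ.injective (Fin.val_injective hji)
    exact Finset.disjoint_left.mp hST (this ▸ hj) hi

private lemma total_sum {S T : Finset I} (hST : Disjoint S T) (hUnion : S ∪ T = Finset.univ)
    (σ : I ≃ Fin (Fintype.card I)) :
    ∑ i ∈ S, (σ i : ℕ) + ∑ i ∈ T, (σ i : ℕ) = ∑ j ∈ Finset.range (Fintype.card I), j := by
  rw [← Finset.sum_union hST, hUnion]
  rw [← Fin.sum_univ_eq_sum_range (fun k => k)]
  exact Equiv.sum_comp σ (fun j : Fin (Fintype.card I) => (j : ℕ))



private lemma glue_perm {S T : Finset I} (hST : Disjoint S T) (hUnion : S ∪ T = Finset.univ)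
    (α : ↥S ≃ Fin (Fintype.card ↥S)) (β : ↥T ≃ Fin (Fintype.card ↥T)) :
    ∃ σ : I ≃ Fin (Fintype.card I),
      (∀ i (h : i ∈ S), (σ i : ℕ) = T.card + (α ⟨i, h⟩ : ℕ)) ∧
      (∀ i (h : i ∈ T), (σ i : ℕ) = (β ⟨i, h⟩ : ℕ)) := by
  have hcard : S.card + T.card = Fintype.card I := by
    rw [← Finset.card_union_of_disjoint hST, hUnion, Finset.card_univ]
  set α' : ↥S ≃ Fin S.card := α.trans (finCongr (Fintype.card_coe S)) with hα'
  set β' : ↥T ≃ Fin T.card := β.trans (finCongr (Fintype.card_coe T)) with hβ'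
  set g : ↥T ⊕ ↥S → I := Sum.elim Subtype.val Subtype.val with hg
  have hginj : Function.Injective g := by
    rintro (⟨x, hx⟩ | ⟨x, hx⟩) (⟨y, hy⟩ | ⟨y, hy⟩) h <;>
      simp only [hg, Sum.elim_inl, Sum.elim_inr] at h
    · exact congrArg Sum.inl (Subtype.ext h)
    · exact ((Finset.disjoint_left.mp hST hy) (h ▸ hx)).elim
    · exact ((Finset.disjoint_left.mp hST hx) (h ▸ hy)).elim
    · exact congrArg Sum.inr (Subtype.ext h)
  have hgsurj : Function.Surjective g := by
    intro i
    have : i ∈ S ∪ T := hUnion ▸ Finset.mem_univ i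
    rcases Finset.mem_union.mp this with h | h
    · exact ⟨Sum.inr ⟨i, h⟩, rfl⟩
    · exact ⟨Sum.inl ⟨i, h⟩, rfl⟩
  set e0 : ↥T ⊕ ↥S ≃ I := Equiv.ofBijective g ⟨hginj, hgsurj⟩ with he0
  set q : ↥T ⊕ ↥S ≃ Fin (Fintype.card I) :=
    ((β'.sumCongr α').trans finSumFinEquiv).trans
      (finCongr (by omega : T.card + S.card = Fintype.card I)) with hq
  refine ⟨e0.symm.trans q, ?_, ?_⟩
  · intro i h
    have he : e0.symm i = Sum.inr ⟨i, h⟩ := by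
      rw [Equiv.symm_apply_eq]; rfl
    simp [he, hq, hα', Fin.coe_cast]
  · intro i h
    have he : e0.symm i = Sum.inl ⟨i, h⟩ := by
      rw [Equiv.symm_apply_eq]; rfl
    simp [he, hq, hβ', Fin.coe_cast]

private lemma split_perm {S T : Finset I} (hST : Disjoint S T) (hUnion : S ∪ T = Finset.univ)
    (σ : I ≃ Fin (Fintype.card I)) (hhigh : ∀ i ∈ S, T.card ≤ (σ i : ℕ)) :
    ∃ (α : ↥S ≃ Fin (Fintype.card ↥S)) (β : ↥T ≃ Fin (Fintype.card ↥T)),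
      (∀ i (h : i ∈ S), (σ i : ℕ) = T.card + (α ⟨i, h⟩ : ℕ)) ∧
      (∀ i (h : i ∈ T), (σ i : ℕ) = (β ⟨i, h⟩ : ℕ)) := by
  have hcard : S.card + T.card = Fintype.card I := by
    rw [← Finset.card_union_of_disjoint hST, hUnion, Finset.card_univ]
  have hlow : ∀ i ∈ T, (σ i : ℕ) < T.card := (high_iff hST hUnion σ).mpr hhigh
  set fα : ↥S → Fin (Fintype.card ↥S) := fun u =>
    ⟨(σ u : ℕ) - T.card, by
      rw [Fintype.card_coe]
      have h1 := (σ (u : I)).isLt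
      have h2 := hhigh u u.2
      omega⟩ with hfα
  set fβ : ↥T → Fin (Fintype.card ↥T) := fun u =>
    ⟨(σ u : ℕ), by rw [Fintype.card_coe]; exact hlow u u.2⟩ with hfβ
  have hαinj : Function.Injective fα := by
    intro u v h
    have h1 := hhigh u u.2
    have h2 := hhigh v v.2
    have h3 := congrArg Fin.val h
    simp only [hfα] at h3
    have : (σ (u : I) : ℕ) = (σ (v : I) : ℕ) := by omega
    exact Subtype.ext (σ.injective (Fin.val_injective this))
  have hβinj : Function.Injective fβ := by
    intro u v h
    have h3 := congrArg Fin.val h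
    simp only [hfβ] at h3
    exact Subtype.ext (σ.injective (Fin.val_injective h3))
  have hαbij : Function.Bijective fα :=
    (Fintype.bijective_iff_injective_and_card fα).mpr ⟨hαinj, by simp⟩
  have hβbij : Function.Bijective fβ :=
    (Fintype.bijective_iff_injective_and_card fβ).mpr ⟨hβinj, by simp⟩
  refine ⟨Equiv.ofBijective fα hαbij, Equiv.ofBijective fβ hβbij, ?_, ?_⟩
  · intro i h
    have := hhigh i h
    show (σ i : ℕ) = T.card + ((σ i : ℕ) - T.card)
    omega
  · intro i h
    rfl
end PermCore

section Main
variable {I : Type*} [Fintype I] [DecidableEq I]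

/-- The vertex set of the standard permutahedron. -/
private def vset (α : Type*) [Fintype α] : Set (α → ℝ) :=
  {x : α → ℝ | ∃ σ : α ≃ Fin (Fintype.card α), ∀ i : α, x i = ((σ i : ℕ) : ℝ) + 1}

private lemma permPoly_eq (α : Type*) [Fintype α] [DecidableEq α] :
    permPoly α = convexHull ℝ (vset α) := rfl

-- real-valued comparison of vertex values of the functional ∑_{i ∈ S}
private lemma rle {S T : Finset I} (hST : Disjoint S T) (hUnion : S ∪ T = Finset.univ)
    (σ τ : I ≃ Fin (Fintype.card I)) (hτ : ∀ i ∈ S, T.card ≤ (τ i : ℕ)) :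
    ∑ i ∈ S, (((σ i : ℕ) : ℝ) + 1) ≤ ∑ i ∈ S, (((τ i : ℕ) : ℝ) + 1) := by
  have t1 := total_sum hST hUnion σ
  have t2 := total_sum hST hUnion τ
  have l1 := T_lower T σ
  have l2 := T_eq' T τ ((high_iff hST hUnion τ).mpr hτ)
  have key : ∑ i ∈ S, (σ i : ℕ) ≤ ∑ i ∈ S, (τ i : ℕ) := by omega
  rw [Finset.sum_add_distrib, Finset.sum_add_distrib]
  have : ((∑ i ∈ S, (σ i : ℕ) : ℕ) : ℝ) ≤ ((∑ i ∈ S, (τ i : ℕ) : ℕ) : ℝ) := by exact_mod_cast key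
  push_cast at this
  linarith

private lemma req {S T : Finset I} (hST : Disjoint S T) (hUnion : S ∪ T = Finset.univ)
    (σ τ : I ≃ Fin (Fintype.card I)) (hτ : ∀ i ∈ S, T.card ≤ (τ i : ℕ))
    (heq : ∑ i ∈ S, (((σ i : ℕ) : ℝ) + 1) = ∑ i ∈ S, (((τ i : ℕ) : ℝ) + 1)) :
    ∀ i ∈ S, T.card ≤ (σ i : ℕ) := by
  have t1 := total_sum hST hUnion σ
  have t2 := total_sum hST hUnion τ
  have l2 := T_eq' T τ ((high_iff hST hUnion τ).mpr hτ)
  have keyr : (∑ i ∈ S, ((σ i : ℕ) : ℝ)) = ∑ i ∈ S, ((τ i : ℕ) : ℝ) := by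
    rw [Finset.sum_add_distrib, Finset.sum_add_distrib] at heq
    linarith
  have key : ∑ i ∈ S, (σ i : ℕ) = ∑ i ∈ S, (τ i : ℕ) := by exact_mod_cast keyr
  have hTσ : ∑ i ∈ T, (σ i : ℕ) = ∑ k ∈ Finset.range T.card, k := by omega
  exact (high_iff hST hUnion σ).mp (T_eq T σ hTσ)

end Main

/-- The face of the standard permutahedron `π_I` maximizing `x ↦ ∑_{s ∈ S} x s`, for a
partition `I = S ⊔ T`, is described by: `(x s − |T|)_{s ∈ S}` lies in `π_S` and
`(x t)_{t ∈ T}` lies in `π_T`. -/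
theorem stmt17 {I : Type*} [Fintype I] [DecidableEq I]
    (S T : Finset I) (hST : Disjoint S T) (hUnion : S ∪ T = Finset.univ) :
    {x ∈ permPoly I | ∀ w ∈ permPoly I, (∑ s ∈ S, w s) ≤ ∑ s ∈ S, x s} =
      {x : I → ℝ | (fun s : ↥S => x s - (T.card : ℝ)) ∈ permPoly ↥S ∧
        (fun t : ↥T => x t) ∈ permPoly ↥T} := by
  classical
  have hcard : S.card + T.card = Fintype.card I := by
    rw [← Finset.card_union_of_disjoint hST, hUnion, Finset.card_univ]
  have hT : ∀ i : I, i ∉ S → i ∈ T := by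
    intro i hi
    have : i ∈ S ∪ T := hUnion ▸ Finset.mem_univ i
    rcases Finset.mem_union.mp this with h | h
    · exact absurd h hi
    · exact h
  -- the linear functional
  set f : (I → ℝ) →ₗ[ℝ] ℝ := ∑ i ∈ S, LinearMap.proj i with hfdef
  have hf : ∀ x : I → ℝ, f x = ∑ i ∈ S, x i := by
    intro x
    rw [hfdef, LinearMap.sum_apply]
    simp [LinearMap.proj_apply]
  -- the maximal vertex set
  set Vmax : Set (I → ℝ) := {x | ∃ σ : I ≃ Fin (Fintype.card I),
    (∀ i, x i = ((σ i : ℕ) : ℝ) + 1) ∧ ∀ i ∈ S, T.card ≤ (σ i : ℕ)} with hVmaxdef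
  -- the base maximizing vertex
  obtain ⟨σ₀, hσ₀S, hσ₀T⟩ := glue_perm hST hUnion (Fintype.equivFin ↥S) (Fintype.equivFin ↥T)
  have hσ₀high : ∀ i ∈ S, T.card ≤ (σ₀ i : ℕ) := fun i h => by rw [hσ₀S i h]; omega
  set x₀ : I → ℝ := fun i => ((σ₀ i : ℕ) : ℝ) + 1 with hx₀def
  have hx₀v : x₀ ∈ vset I := ⟨σ₀, fun i => rfl⟩
  have hx₀ : x₀ ∈ permPoly I := subset_convexHull ℝ _ hx₀v
  -- every point of the permutahedron has value ≤ f x₀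
  have hbound : ∀ w ∈ permPoly I, f w ≤ f x₀ := by
    intro w hw
    rw [permPoly_eq] at hw
    refine convexHull_min ?_ (convex_halfSpace_le f.isLinear (f x₀)) hw
    rintro y ⟨σ, hσ⟩
    show f y ≤ f x₀
    rw [hf, hf]
    have h1 : ∑ i ∈ S, y i = ∑ i ∈ S, (((σ i : ℕ) : ℝ) + 1) :=
      Finset.sum_congr rfl fun i _ => hσ i
    have h2 : ∑ i ∈ S, x₀ i = ∑ i ∈ S, (((σ₀ i : ℕ) : ℝ) + 1) := rfl
    rw [h1, h2]
    exact rle hST hUnion σ σ₀ hσ₀high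
  -- reformulate the LHS set
  have hL : {x ∈ permPoly I | ∀ w ∈ permPoly I, (∑ s ∈ S, w s) ≤ ∑ s ∈ S, x s} =
      {x | x ∈ permPoly I ∧ f x = f x₀} := by
    ext x
    simp only [Set.mem_setOf_eq]
    constructor
    · rintro ⟨hx, hmax⟩
      refine ⟨hx, le_antisymm (hbound x hx) ?_⟩
      rw [hf, hf]
      exact hmax x₀ hx₀
    · rintro ⟨hx, heq⟩
      refine ⟨hx, fun w hw => ?_⟩
      rw [← hf, ← hf, heq]
      exact hbound w hw
  -- maximizers lie in the convex hull of Vmax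
  have hA3 : ∀ x, x ∈ permPoly I → f x = f x₀ → x ∈ convexHull ℝ Vmax := by
    intro x hx hfx
    set Vfin : Finset (I → ℝ) := Finset.image
      (fun σ : I ≃ Fin (Fintype.card I) => fun i => ((σ i : ℕ) : ℝ) + 1) Finset.univ
      with hVfindef
    have hVfin : vset I = ↑Vfin := by
      ext y
      simp only [vset, Set.mem_setOf_eq, hVfindef, Finset.coe_image, Finset.coe_univ,
        Set.image_univ, Set.mem_range]
      constructor
      · rintro ⟨σ, hσ⟩; exact ⟨σ, funext fun i => (hσ i).symm⟩
      · rintro ⟨σ, rfl⟩; exact ⟨σ, fun i => rfl⟩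
    rw [permPoly_eq, hVfin, Finset.convexHull_eq] at hx
    obtain ⟨w, hw0, hw1, hwx⟩ := hx
    have hwx' : ∑ y ∈ Vfin, w y • y = x := by
      rw [← Finset.centerMass_eq_of_sum_1 _ _ hw1]; exact hwx
    have hfsum : ∑ y ∈ Vfin, w y * f y = f x₀ := by
      rw [← hfx, ← hwx', map_sum]
      exact Finset.sum_congr rfl fun y _ => by rw [map_smul, smul_eq_mul]
    have hsupp : ∀ y ∈ Vfin, w y ≠ 0 → y ∈ Vmax := by
      intro y hy hwy
      by_contra hny
      obtain ⟨σ, hσ⟩ : ∃ σ : I ≃ Fin (Fintype.card I), y = fun i => ((σ i : ℕ) : ℝ) + 1 := by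
        obtain ⟨σ, _, hσ⟩ := Finset.mem_image.mp hy
        exact ⟨σ, hσ.symm⟩
      have hfyle : f y ≤ f x₀ := by
        rw [hf, hf, hσ]
        exact rle hST hUnion σ σ₀ hσ₀high
      have hfyne : f y ≠ f x₀ := by
        intro hc
        apply hny
        refine ⟨σ, fun i => by rw [hσ], ?_⟩
        apply req hST hUnion σ σ₀ hσ₀high
        have := hc
        rw [hf, hf, hσ] at this
        exact this
      have hle : ∀ z ∈ Vfin, w z * f z ≤ w z * f x₀ := by
        intro z hz
        apply mul_le_mul_of_nonneg_left ?_ (hw0 z hz)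
        obtain ⟨τ, _, hτ⟩ := Finset.mem_image.mp hz
        rw [hf, hf, ← hτ]
        calc ∑ i ∈ S, (fun i => ((τ i : ℕ) : ℝ) + 1) i
            = ∑ i ∈ S, (((τ i : ℕ) : ℝ) + 1) := rfl
          _ ≤ ∑ i ∈ S, (((σ₀ i : ℕ) : ℝ) + 1) := rle hST hUnion τ σ₀ hσ₀high
          _ = ∑ i ∈ S, x₀ i := rfl
      have hlt : w y * f y < w y * f x₀ := by
        apply mul_lt_mul_of_pos_left (lt_of_le_of_ne hfyle hfyne)
        exact lt_of_le_of_ne (hw0 y hy) (Ne.symm hwy)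
      have hcontra : ∑ z ∈ Vfin, w z * f z < ∑ z ∈ Vfin, w z * f x₀ :=
        Finset.sum_lt_sum hle ⟨y, hy, hlt⟩
      rw [hfsum, ← Finset.sum_mul, hw1, one_mul] at hcontra
      exact lt_irrefl _ hcontra
    rw [← hwx, ← Finset.centerMass_filter_ne_zero (id : (I → ℝ) → (I → ℝ))]
    apply Finset.centerMass_mem_convexHull
    · intro y hy
      exact hw0 y (Finset.mem_of_mem_filter y hy)
    · rw [Finset.sum_filter_ne_zero, hw1]
      exact one_pos
    · intro y hy
      obtain ⟨hy1, hy2⟩ := Finset.mem_filter.mp hy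
      exact hsupp y hy1 hy2
  -- the convex hull of Vmax consists of maximizers
  have hA4 : convexHull ℝ Vmax ⊆ {x | x ∈ permPoly I ∧ f x = f x₀} := by
    apply convexHull_min
    · rintro v ⟨σ, hv, hσ⟩
      constructor
      · exact subset_convexHull ℝ _ ⟨σ, hv⟩
      · rw [hf, hf]
        have h1 : ∑ i ∈ S, v i = ∑ i ∈ S, (((σ i : ℕ) : ℝ) + 1) :=
          Finset.sum_congr rfl fun i _ => hv i
        rw [h1]
        exact le_antisymm (rle hST hUnion σ σ₀ hσ₀high) (rle hST hUnion σ₀ σ hσ)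
    · exact (convex_convexHull ℝ _).inter (convex_hyperplane f.isLinear (f x₀))
  -- the affine maps
  set LΨ : (I → ℝ) →ₗ[ℝ] ((↥S → ℝ) × (↥T → ℝ)) :=
    (LinearMap.funLeft ℝ ℝ (Subtype.val : ↥S → I)).prod
      (LinearMap.funLeft ℝ ℝ (Subtype.val : ↥T → I)) with hLΨdef
  set Ψ : (I → ℝ) →ᵃ[ℝ] ((↥S → ℝ) × (↥T → ℝ)) :=
    LΨ.toAffineMap + AffineMap.const ℝ (I → ℝ) ((fun _ => -(T.card : ℝ)), 0) with hΨdef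
  have hΨ : ∀ x : I → ℝ,
      Ψ x = ((fun s : ↥S => x s - (T.card : ℝ)), (fun t : ↥T => x t)) := by
    intro x
    rw [hΨdef]
    simp only [AffineMap.coe_add, Pi.add_apply, LinearMap.coe_toAffineMap,
      AffineMap.const_apply, hLΨdef, LinearMap.prod_apply, Pi.prod]
    apply Prod.ext
    · funext u
      simp [LinearMap.funLeft_apply, sub_eq_add_neg]
    · funext u
      simp [LinearMap.funLeft_apply]
  set LΦ : ((↥S → ℝ) × (↥T → ℝ)) →ₗ[ℝ] (I → ℝ) :=
    LinearMap.pi (fun i : I =>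
      if h : i ∈ S then (LinearMap.proj (⟨i, h⟩ : ↥S)).comp (LinearMap.fst ℝ (↥S → ℝ) (↥T → ℝ))
      else (LinearMap.proj (⟨i, hT i h⟩ : ↥T)).comp (LinearMap.snd ℝ (↥S → ℝ) (↥T → ℝ)))
    with hLΦdef
  set Φ : ((↥S → ℝ) × (↥T → ℝ)) →ᵃ[ℝ] (I → ℝ) :=
    LΦ.toAffineMap + AffineMap.const ℝ _ (fun i => if i ∈ S then (T.card : ℝ) else 0)
    with hΦdef
  have hΦS : ∀ (p : (↥S → ℝ) × (↥T → ℝ)) (i : I) (h : i ∈ S),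
      Φ p i = p.1 ⟨i, h⟩ + T.card := by
    intro p i h
    rw [hΦdef]
    simp only [AffineMap.coe_add, Pi.add_apply, LinearMap.coe_toAffineMap,
      AffineMap.const_apply, hLΦdef, LinearMap.pi_apply]
    rw [dif_pos h, if_pos h]
    rfl
  have hΦT : ∀ (p : (↥S → ℝ) × (↥T → ℝ)) (i : I) (h : i ∉ S),
      Φ p i = p.2 ⟨i, hT i h⟩ := by
    intro p i h
    rw [hΦdef]
    simp only [AffineMap.coe_add, Pi.add_apply, LinearMap.coe_toAffineMap,
      AffineMap.const_apply, hLΦdef, LinearMap.pi_apply]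
    rw [dif_neg h, if_neg h, add_zero]
    rfl
  -- the RHS set as a preimage
  have hRHS : {x : I → ℝ | (fun s : ↥S => x s - (T.card : ℝ)) ∈ permPoly ↥S ∧
      (fun t : ↥T => x t) ∈ permPoly ↥T} = Ψ ⁻¹' (permPoly ↥S ×ˢ permPoly ↥T) := by
    ext x
    rw [Set.mem_preimage, hΨ, Set.mem_prod]
    rfl
  -- B1 : convexHull Vmax ⊆ preimage
  have hB1 : convexHull ℝ Vmax ⊆ Ψ ⁻¹' (permPoly ↥S ×ˢ permPoly ↥T) := by
    apply convexHull_min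
    · rintro v ⟨σ, hv, hσ⟩
      obtain ⟨α, β, hαp, hβp⟩ := split_perm hST hUnion σ hσ
      rw [Set.mem_preimage, hΨ, Set.mem_prod]
      constructor
      · apply subset_convexHull ℝ (vset ↥S)
        refine ⟨α, fun u => ?_⟩
        show v u - (T.card : ℝ) = ((α u : ℕ) : ℝ) + 1
        rw [hv u]
        have := hαp u u.2
        have hcast : ((σ (u : I) : ℕ) : ℝ) = (T.card : ℝ) + ((α u : ℕ) : ℝ) := by
          rw [this]; push_cast; ring
        rw [hcast]; ring
      · apply subset_convexHull ℝ (vset ↥T)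
        refine ⟨β, fun u => ?_⟩
        show v u = ((β u : ℕ) : ℝ) + 1
        rw [hv u]
        rw [hβp u u.2]
    · exact Convex.affine_preimage Ψ
        ((convex_convexHull ℝ _).prod (convex_convexHull ℝ _))
  -- B2 : preimage ⊆ convexHull Vmax
  have hB2 : Ψ ⁻¹' (permPoly ↥S ×ˢ permPoly ↥T) ⊆ convexHull ℝ Vmax := by
    intro x hx
    rw [Set.mem_preimage] at hx
    have hx' : Ψ x ∈ convexHull ℝ (vset ↥S ×ˢ vset ↥T) := by
      rw [convexHull_prod]
      exact hx
    have hxΦ : Φ (Ψ x) = x := by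
      funext i
      by_cases h : i ∈ S
      · rw [hΦS _ i h, hΨ]
        show x i - (T.card : ℝ) + T.card = x i
        ring
      · rw [hΦT _ i h, hΨ]
    have himg : x ∈ Φ '' (convexHull ℝ (vset ↥S ×ˢ vset ↥T)) := ⟨Ψ x, hx', hxΦ⟩
    rw [AffineMap.image_convexHull] at himg
    refine convexHull_mono ?_ himg
    rintro y ⟨⟨a, b⟩, ⟨⟨α, ha⟩, ⟨β, hb⟩⟩, rfl⟩
    obtain ⟨σ, hσS, hσT⟩ := glue_perm hST hUnion α β
    refine ⟨σ, ?_, fun i h => by rw [hσS i h]; omega⟩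
    intro i
    by_cases h : i ∈ S
    · rw [hΦS (a, b) i h]
      show a ⟨i, h⟩ + (T.card : ℝ) = ((σ i : ℕ) : ℝ) + 1
      have ha' : a ⟨i, h⟩ = ((α ⟨i, h⟩ : ℕ) : ℝ) + 1 := ha ⟨i, h⟩
      rw [ha', hσS i h]
      push_cast; ring
    · rw [hΦT (a, b) i h]
      show b ⟨i, hT i h⟩ = ((σ i : ℕ) : ℝ) + 1
      have hb' : b ⟨i, hT i h⟩ = ((β ⟨i, hT i h⟩ : ℕ) : ℝ) + 1 := hb ⟨i, hT i h⟩
      rw [hb', hσT i (hT i h)]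
  -- assemble
  rw [hL, hRHS]
  apply Set.Subset.antisymm
  · intro x hx
    exact hB1 (hA3 x hx.1 hx.2)
  · intro x hx
    exact hA4 (hB2 hx)
end
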